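/- arXiv:1411.1936 — 4 statements merged into one kernel-verified Lean document; each statement's English description precedes it below -/
import Mathlib

section
/- For every f ∈ Λ₀ and all r, s ∈ (0,∞), one has |f(r) − f(s)| ≤ 2^{−1/2}·|r² − s²|^{1/2}·‖f‖₀. In particular, f is Lipschitz of order 1/2 on every bounded subinterval of (0,∞). -/
open MeasureTheory Set Filter

noncomputable section

/-- The radial Beppo Levi energy space `Λ₀`: functions `f : (0,∞) → ℂ` of class `C¹`
whose derivative `f′` is locally absolutely continuous on compact subintervals of `(0,∞)`
(encoded by the fundamental theorem of calculus with an integrable density `f″`),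
and whose radial Beppo Levi energy `∫₀^∞ ( r·|f″(r)|² + (1/r)·|f′(r)|² ) dr` is finite. -/
structure Lambda0 where
  f : ℝ → ℂ
  f' : ℝ → ℂ
  f'' : ℝ → ℂ
  hasDeriv : ∀ r ∈ Set.Ioi (0:ℝ), HasDerivAt f (f' r) r
  contDeriv : ContinuousOn f' (Set.Ioi 0)
  locAC : ∀ a b : ℝ, 0 < a → a ≤ b →
    MeasureTheory.IntegrableOn f'' (Set.Icc a b) ∧
      ∀ x ∈ Set.Icc a b, f' x = f' a + ∫ t in a..x, f'' t
  energyFin : MeasureTheory.IntegrableOn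
    (fun r : ℝ => r * ‖f'' r‖ ^ 2 + (1 / r) * ‖f' r‖ ^ 2) (Set.Ioi 0)

/-- The squared radial Beppo Levi energy `‖·‖₀²` of a function with first derivative `g'`
and second derivative `g''`. -/
def energySq (g' g'' : ℝ → ℂ) : ℝ :=
  ∫ r in Set.Ioi (0:ℝ), (r * ‖g'' r‖ ^ 2 + (1 / r) * ‖g' r‖ ^ 2)

/-- The seminorm `‖f‖₀`. -/
def Lambda0.seminorm0 (F : Lambda0) : ℝ :=
  Real.sqrt (energySq F.f' F.f'')

/-- The semi-inner product `⟨f,g⟩₀`. -/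
def innerBL (F G : Lambda0) : ℂ :=
  ∫ r in Set.Ioi (0:ℝ),
    ((r : ℂ) * F.f'' r * (starRingEnd ℂ) (G.f'' r) +
      (1 / (r : ℂ)) * F.f' r * (starRingEnd ℂ) (G.f' r))

/-- A Beppo Levi `L₀`-spline on the positive knots `r 1 < r 2 < … < r n`:
piecewise of the form `a·x² + b·x²·ln x + c + d·ln x` between consecutive knots,
of the form `a·x² + b·x²·ln x + c` on `(0, r 1)`, of the form `c + d·ln x` on `(r n, ∞)`,
`C²` throughout `(0,∞)`, and continuously extended at `0`. -/
structure IsBLSpline (n : ℕ) (r : ℕ → ℝ) (η : ℝ → ℂ) : Prop where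
  pieces : ∀ j : ℕ, 1 ≤ j → j + 1 ≤ n → ∃ a b c d : ℂ,
    ∀ x ∈ Set.Ioo (r j) (r (j + 1)),
      η x = a * (x : ℂ) ^ 2 + b * (x : ℂ) ^ 2 * (Real.log x : ℂ) + c + d * (Real.log x : ℂ)
  left : ∃ a b c : ℂ, ∀ x ∈ Set.Ioo (0 : ℝ) (r 1),
      η x = a * (x : ℂ) ^ 2 + b * (x : ℂ) ^ 2 * (Real.log x : ℂ) + c
  right : ∃ c d : ℂ, ∀ x ∈ Set.Ioi (r n), η x = c + d * (Real.log x : ℂ)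
  smooth : ContDiffOn ℝ 2 η (Set.Ioi 0)
  cont0 : ContinuousWithinAt η (Set.Ici 0) 0

/-- A Beppo Levi `L₀`-spline is non-singular if on `(0, r₁)` it has the form `a·x² + c`. -/
def NonSingularBLS (r1 : ℝ) (η : ℝ → ℂ) : Prop :=
  ∃ a c : ℂ, ∀ x ∈ Set.Ioo (0 : ℝ) r1, η x = a * (x : ℂ) ^ 2 + c

/-- Rabut's kernel `K`. -/
def Kfun (r t : ℝ) : ℝ :=
  if r ≤ t then 0 else (1 / 4) * (t ^ 2 - r ^ 2 + (r ^ 2 + t ^ 2) * Real.log (r / t))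

/-- The limiting kernel `H_{0,∞}` (with left endpoint knot `r1`). -/
def Hfun (r1 r t : ℝ) : ℝ :=
  Kfun r t - Kfun r r1 - Kfun r1 t + (1 / 4) * (r ^ 2 - r1 ^ 2) * Real.log (t / r1)

/-- The basis function `φ₀`. -/
def phi0 (r : ℝ) : ℝ :=
  if r ≤ 1 then r ^ 2 - r ^ 2 * Real.log r else 1 + Real.log r

/-- Johnson's compactly supported profile `η₂`. -/
def eta2 (x : ℝ) : ℂ :=
  (((4 / 3 : ℝ) * (Real.log 2 - phi0 x + phi0 (x / 2)) : ℝ) : ℂ)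

/-- The non-singular compactly supported profile `β`. -/
def betaFn (x : ℝ) : ℂ :=
  (((1 / 5 : ℝ) * (27 * Real.log 3 - 32 * Real.log 2 + 5 * phi0 x
      - 32 * phi0 (x / 2) + 27 * phi0 (x / 3)) : ℝ) : ℂ)

/-- `Ker L₀ = span{r², r² ln r, 1, ln r}`, as functions on `(0,∞)`. -/
def KerL0 : Set (ℝ → ℂ) :=
  {η | ∃ a b c d : ℂ, ∀ x : ℝ, 0 < x →
    η x = a * (x : ℂ) ^ 2 + b * (x : ℂ) ^ 2 * (Real.log x : ℂ) + c + d * (Real.log x : ℂ)}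

/-- `α(h) = inf_{η ∈ Ker L₀} sup_{t ∈ [0,1]} |t^μ − η(1+th)|`. -/
def alphaFn (μ h : ℝ) : ℝ :=
  sInf {v : ℝ | ∃ η ∈ KerL0,
    v = sSup ((fun t : ℝ => ‖((t ^ μ : ℝ) : ℂ) - η (1 + t * h)‖) '' Set.Icc (0 : ℝ) 1)}

lemma energySq_nonneg (F : Lambda0) : 0 ≤ energySq F.f' F.f'' := by
  apply setIntegral_nonneg measurableSet_Ioi
  intro x hx
  have hx0 : (0:ℝ) < x := hx
  have h1 : 0 ≤ x * ‖F.f'' x‖ ^ 2 := mul_nonneg hx0.le (sq_nonneg _)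
  have h2 : 0 ≤ (1/x) * ‖F.f' x‖ ^ 2 := mul_nonneg (by positivity) (sq_nonneg _)
  linarith

lemma key_est (F : Lambda0) {s r : ℝ} (hs : 0 < s) (hsr : s ≤ r) :
    ‖F.f r - F.f s‖ ≤ (2:ℝ) ^ (-(1/2 : ℝ)) * (r ^ 2 - s ^ 2) ^ ((1:ℝ)/2) * F.seminorm0 := by
  have hr : 0 < r := lt_of_lt_of_le hs hsr
  have hSm : MeasurableSet (Set.Ioc s r) := measurableSet_Ioc
  have hSsub : Set.Ioc s r ⊆ Set.Ioi (0:ℝ) := fun x hx => lt_trans hs hx.1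
  have hIsub : Set.uIcc s r ⊆ Set.Ioi (0:ℝ) := by
    rw [Set.uIcc_of_le hsr]; intro x hx; exact lt_of_lt_of_le hs hx.1
  -- FTC
  have hcont' : ContinuousOn F.f' (Set.uIcc s r) := F.contDeriv.mono hIsub
  have hint : IntervalIntegrable F.f' volume s r := hcont'.intervalIntegrable
  have hftc : ∫ t in s..r, F.f' t = F.f r - F.f s :=
    intervalIntegral.integral_eq_sub_of_hasDerivAt
      (fun t ht => F.hasDeriv t (hIsub ht)) hint
  -- finite measure instance
  haveI hfin : IsFiniteMeasure (volume.restrict (Set.Ioc s r)) := by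
    constructor
    rw [Measure.restrict_apply_univ, Real.volume_Ioc]
    exact ENNReal.ofReal_lt_top
  -- Memℒp facts
  have hm1 : MemLp Real.sqrt (ENNReal.ofReal 2) (volume.restrict (Set.Ioc s r)) := by
    apply MemLp.of_bound Real.continuous_sqrt.aestronglyMeasurable (Real.sqrt r)
    refine (ae_restrict_iff' hSm).mpr (Filter.Eventually.of_forall fun x hx => ?_)
    rw [Real.norm_eq_abs, abs_of_nonneg (Real.sqrt_nonneg _)]
    exact Real.sqrt_le_sqrt hx.2
  have hcg : ContinuousOn (fun t => ‖F.f' t‖ / Real.sqrt t) (Set.Ioc s r) := by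
    apply ContinuousOn.div
    · exact (F.contDeriv.mono hSsub).norm
    · exact Real.continuous_sqrt.continuousOn
    · intro x hx; exact (Real.sqrt_pos.mpr (hSsub hx)).ne'
  obtain ⟨M, hM⟩ := isCompact_Icc.exists_bound_of_continuousOn
    (F.contDeriv.mono (fun x (hx : x ∈ Set.Icc s r) => lt_of_lt_of_le hs hx.1))
  have hm2 : MemLp (fun t => ‖F.f' t‖ / Real.sqrt t) (ENNReal.ofReal 2)
      (volume.restrict (Set.Ioc s r)) := by
    apply MemLp.of_bound (hcg.aestronglyMeasurable hSm) (M / Real.sqrt s)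
    refine (ae_restrict_iff' hSm).mpr (Filter.Eventually.of_forall fun x hx => ?_)
    rw [Real.norm_eq_abs, abs_of_nonneg (div_nonneg (norm_nonneg _) (Real.sqrt_nonneg _))]
    exact div_le_div₀ (le_trans (norm_nonneg _) (hM s ⟨le_refl s, hsr⟩))
      (hM x ⟨hx.1.le, hx.2⟩) (Real.sqrt_pos.mpr hs) (Real.sqrt_le_sqrt hx.1.le)
  -- Hölder
  have hpq : Real.HolderConjugate 2 2 := ⟨by norm_num, by norm_num, by norm_num⟩
  have hholder := integral_mul_le_Lp_mul_Lq_of_nonneg hpq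
    (Filter.Eventually.of_forall fun x => Real.sqrt_nonneg x)
    (Filter.Eventually.of_forall fun x => div_nonneg (norm_nonneg _) (Real.sqrt_nonneg _))
    hm1 hm2
  -- identify product with ‖f'‖
  have hprod : ∫ x in Set.Ioc s r, ‖F.f' x‖
      = ∫ x in Set.Ioc s r, Real.sqrt x * (‖F.f' x‖ / Real.sqrt x) := by
    refine setIntegral_congr_fun hSm fun x hx => ?_
    have hx0 : Real.sqrt x ≠ 0 := (Real.sqrt_pos.mpr (hSsub hx)).ne'
    rw [mul_comm, div_mul_cancel₀ _ hx0]
  -- first factor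
  have hdiff : (0:ℝ) ≤ r ^ 2 - s ^ 2 := by nlinarith
  have h1 : ∫ x in Set.Ioc s r, (Real.sqrt x) ^ (2:ℝ) = (r ^ 2 - s ^ 2) / 2 := by
    have heq : ∀ x ∈ Set.Ioc s r, (Real.sqrt x) ^ (2:ℝ) = x := fun x hx => by
      rw [show (2:ℝ) = ((2:ℕ):ℝ) by norm_num, Real.rpow_natCast, Real.sq_sqrt (hSsub hx).le]
    rw [setIntegral_congr_fun hSm heq, ← intervalIntegral.integral_of_le hsr,
      integral_id]
  -- second factor bound
  have hg2nonneg : (0:ℝ) ≤ ∫ x in Set.Ioc s r, (‖F.f' x‖ / Real.sqrt x) ^ (2:ℝ) :=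
    setIntegral_nonneg hSm fun x hx => Real.rpow_nonneg (by positivity) _
  have hg2int : IntegrableOn (fun x => x * ‖F.f'' x‖ ^ 2 + (1/x) * ‖F.f' x‖ ^ 2)
      (Set.Ioc s r) := F.energyFin.mono_set hSsub
  have hsmallc : ContinuousOn (fun x : ℝ => (1/x) * ‖F.f' x‖ ^ 2) (Set.Ioc s r) := by
    apply ContinuousOn.mul
    · exact continuousOn_const.div continuousOn_id (fun x hx => (hSsub hx).ne')
    · exact (F.contDeriv.mono hSsub).norm.pow 2
  have hsmall_int : IntegrableOn (fun x => (1/x) * ‖F.f' x‖ ^ 2) (Set.Ioc s r) := by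
    apply hg2int.mono' (hsmallc.aestronglyMeasurable hSm)
    refine (ae_restrict_iff' hSm).mpr (Filter.Eventually.of_forall fun x hx => ?_)
    have hx0 : (0:ℝ) < x := hSsub hx
    rw [Real.norm_eq_abs, abs_of_nonneg (by positivity)]
    nlinarith [sq_nonneg ‖F.f'' x‖, sq_nonneg ‖F.f' x‖]
  have h2 : ∫ x in Set.Ioc s r, (‖F.f' x‖ / Real.sqrt x) ^ (2:ℝ) ≤ energySq F.f' F.f'' := by
    have heq : ∀ x ∈ Set.Ioc s r, (‖F.f' x‖ / Real.sqrt x) ^ (2:ℝ) = (1/x) * ‖F.f' x‖ ^ 2 := by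
      intro x hx
      have hx0 : (0:ℝ) < x := hSsub hx
      rw [show (2:ℝ) = ((2:ℕ):ℝ) by norm_num, Real.rpow_natCast, div_pow,
        Real.sq_sqrt hx0.le, div_eq_mul_inv, mul_comm, one_div]
    rw [setIntegral_congr_fun hSm heq]
    calc ∫ x in Set.Ioc s r, (1/x) * ‖F.f' x‖ ^ 2
        ≤ ∫ x in Set.Ioc s r, (x * ‖F.f'' x‖ ^ 2 + (1/x) * ‖F.f' x‖ ^ 2) := by
          refine setIntegral_mono_on hsmall_int hg2int hSm fun x hx => ?_
          have hx0 : (0:ℝ) < x := hSsub hx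
          nlinarith [sq_nonneg ‖F.f'' x‖]
      _ ≤ energySq F.f' F.f'' := by
          refine setIntegral_mono_set F.energyFin ?_ (HasSubset.Subset.eventuallyLE hSsub)
          refine (ae_restrict_iff' measurableSet_Ioi).mpr
            (Filter.Eventually.of_forall fun x hx => ?_)
          have hx0 : (0:ℝ) < x := hx
          have h1' : 0 ≤ x * ‖F.f'' x‖ ^ 2 := mul_nonneg hx0.le (sq_nonneg _)
          have h2' : 0 ≤ (1/x) * ‖F.f' x‖ ^ 2 := mul_nonneg (by positivity) (sq_nonneg _)
          simpa using add_nonneg h1' h2'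
  -- assemble
  have hchain : ‖F.f r - F.f s‖
      ≤ ((r ^ 2 - s ^ 2) / 2) ^ ((1:ℝ)/2) * (energySq F.f' F.f'') ^ ((1:ℝ)/2) := by
    calc ‖F.f r - F.f s‖ = ‖∫ t in s..r, F.f' t‖ := by rw [hftc]
      _ ≤ ∫ t in s..r, ‖F.f' t‖ := intervalIntegral.norm_integral_le_integral_norm hsr
      _ = ∫ x in Set.Ioc s r, ‖F.f' x‖ := intervalIntegral.integral_of_le hsr
      _ = ∫ x in Set.Ioc s r, Real.sqrt x * (‖F.f' x‖ / Real.sqrt x) := hprod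
      _ ≤ (∫ x in Set.Ioc s r, (Real.sqrt x) ^ (2:ℝ)) ^ ((1:ℝ)/2)
            * (∫ x in Set.Ioc s r, (‖F.f' x‖ / Real.sqrt x) ^ (2:ℝ)) ^ ((1:ℝ)/2) := by
          simpa using hholder
      _ ≤ ((r ^ 2 - s ^ 2) / 2) ^ ((1:ℝ)/2) * (energySq F.f' F.f'') ^ ((1:ℝ)/2) := by
          rw [h1]
          exact mul_le_mul_of_nonneg_left
            (Real.rpow_le_rpow hg2nonneg h2 (by norm_num))
            (Real.rpow_nonneg (by linarith) _)
  have hfactor : ((r ^ 2 - s ^ 2) / 2) ^ ((1:ℝ)/2)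
      = (2:ℝ) ^ (-(1/2 : ℝ)) * (r ^ 2 - s ^ 2) ^ ((1:ℝ)/2) := by
    rw [div_eq_mul_inv, Real.mul_rpow hdiff (by norm_num),
      ← Real.rpow_neg_one (2:ℝ), ← Real.rpow_natCast, ← Real.rpow_mul (by norm_num)]
    ring_nf
  calc ‖F.f r - F.f s‖
      ≤ ((r ^ 2 - s ^ 2) / 2) ^ ((1:ℝ)/2) * (energySq F.f' F.f'') ^ ((1:ℝ)/2) := hchain
    _ = (2:ℝ) ^ (-(1/2 : ℝ)) * (r ^ 2 - s ^ 2) ^ ((1:ℝ)/2) * F.seminorm0 := by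
        rw [hfactor, Lambda0.seminorm0, Real.sqrt_eq_rpow]

/-- for every `f ∈ Λ₀` and all `r, s ∈ (0,∞)`,
`|f(r) − f(s)| ≤ 2^{−1/2}·|r² − s²|^{1/2}·‖f‖₀`; in particular `f` is Lipschitz of
order `1/2` on every bounded subinterval of `(0,∞)`. -/
theorem stmt0 (F : Lambda0) :
    (∀ r ∈ Set.Ioi (0:ℝ), ∀ s ∈ Set.Ioi (0:ℝ),
      ‖F.f r - F.f s‖ ≤ (2:ℝ) ^ (-(1/2 : ℝ)) * |r ^ 2 - s ^ 2| ^ ((1:ℝ)/2) * F.seminorm0) ∧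
    (∀ a b : ℝ, 0 < a → a ≤ b → ∃ C : ℝ, ∀ r ∈ Set.Icc a b, ∀ s ∈ Set.Icc a b,
      ‖F.f r - F.f s‖ ≤ C * |r - s| ^ ((1:ℝ)/2)) := by
  have hN : 0 ≤ F.seminorm0 := Real.sqrt_nonneg _
  have main : ∀ r ∈ Set.Ioi (0:ℝ), ∀ s ∈ Set.Ioi (0:ℝ),
      ‖F.f r - F.f s‖ ≤ (2:ℝ) ^ (-(1/2 : ℝ)) * |r ^ 2 - s ^ 2| ^ ((1:ℝ)/2) * F.seminorm0 := by
    intro r hr s hs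
    have hr0 : (0:ℝ) < r := hr
    have hs0 : (0:ℝ) < s := hs
    rcases le_total s r with h | h
    · rw [abs_of_nonneg (by nlinarith : (0:ℝ) ≤ r ^ 2 - s ^ 2)]
      exact key_est F hs0 h
    · rw [norm_sub_rev, abs_sub_comm, abs_of_nonneg (by nlinarith : (0:ℝ) ≤ s ^ 2 - r ^ 2)]
      exact key_est F hr0 h
  refine ⟨main, fun a b ha hab => ?_⟩
  have hb : (0:ℝ) < b := lt_of_lt_of_le ha hab
  refine ⟨(2:ℝ) ^ (-(1/2 : ℝ)) * (2*b) ^ ((1:ℝ)/2) * F.seminorm0, fun r hr s hs => ?_⟩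
  have h1 := main r (lt_of_lt_of_le ha hr.1) s (lt_of_lt_of_le ha hs.1)
  have h2 : |r ^ 2 - s ^ 2| ^ ((1:ℝ)/2) ≤ (2*b) ^ ((1:ℝ)/2) * |r - s| ^ ((1:ℝ)/2) := by
    rw [← Real.mul_rpow (by positivity) (abs_nonneg _)]
    apply Real.rpow_le_rpow (abs_nonneg _) ?_ (by norm_num)
    have hrs : r ^ 2 - s ^ 2 = (r + s) * (r - s) := by ring
    rw [hrs, abs_mul]
    apply mul_le_mul_of_nonneg_right ?_ (abs_nonneg _)
    rw [abs_of_nonneg (by nlinarith [lt_of_lt_of_le ha hr.1, lt_of_lt_of_le ha hs.1] : (0:ℝ) ≤ r + s)]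
    nlinarith [hr.2, hs.2]
  calc ‖F.f r - F.f s‖
      ≤ (2:ℝ) ^ (-(1/2 : ℝ)) * |r ^ 2 - s ^ 2| ^ ((1:ℝ)/2) * F.seminorm0 := h1
    _ ≤ (2:ℝ) ^ (-(1/2 : ℝ)) * ((2*b) ^ ((1:ℝ)/2) * |r - s| ^ ((1:ℝ)/2)) * F.seminorm0 := by
        apply mul_le_mul_of_nonneg_right
          (mul_le_mul_of_nonneg_left h2 (by positivity)) hN
    _ = (2:ℝ) ^ (-(1/2 : ℝ)) * (2*b) ^ ((1:ℝ)/2) * F.seminorm0 * |r - s| ^ ((1:ℝ)/2) := by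
        ring
end
end

section
/- For every f ∈ Λ₀: (a) the limit lim_{r→0⁺} f(r) exists, so f can be extended by continuity at 0; and (b) f′(r) = O(1) both as r → 0⁺ and as r → ∞, i.e. f′ is bounded on a neighborhood of 0 and on a neighborhood of ∞ in (0,∞). -/
open MeasureTheory Set Filter

noncomputable section

lemma Ioi_sub_iUnion : Set.Ioi (0:ℝ) ⊆ ⋃ n : ℕ, Set.Icc (1/(n+1) : ℝ) (n+1) := by
  intro x hx
  simp only [Set.mem_Ioi] at hx
  obtain ⟨n, hn⟩ := exists_nat_ge (max x (1/x))
  refine Set.mem_iUnion.2 ⟨n, ?_, ?_⟩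
  · have h1 : 1/x ≤ (n:ℝ)+1 :=
      le_trans (le_max_right _ _) (hn.trans (le_add_of_nonneg_right zero_le_one))
    calc (1:ℝ)/((n:ℝ)+1) ≤ 1/(1/x) := one_div_le_one_div_of_le (by positivity) h1
      _ = x := one_div_one_div x
  · exact le_trans (le_trans (le_max_left _ _) hn) (le_add_of_nonneg_right zero_le_one)

lemma f''_aesm (F : Lambda0) :
    AEStronglyMeasurable F.f'' (volume.restrict (Set.Ioi 0)) := by
  have h1 : AEStronglyMeasurable F.f''
      (volume.restrict (⋃ n : ℕ, Set.Icc (1/(n+1) : ℝ) (n+1))) := by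
    rw [aestronglyMeasurable_iUnion_iff]
    intro n
    have hpos : (0:ℝ) < 1/((n:ℝ)+1) := by positivity
    have h1n : (1:ℝ) ≤ (n:ℝ)+1 := by
      have := Nat.cast_nonneg (α := ℝ) n; linarith
    have hle : (1:ℝ)/((n:ℝ)+1) ≤ (n:ℝ)+1 := by
      calc (1:ℝ)/((n:ℝ)+1) ≤ 1 := by
            rw [div_le_one (by positivity)]; exact h1n
        _ ≤ (n:ℝ)+1 := h1n
    exact ((F.locAC _ _ hpos hle).1).aestronglyMeasurable
  exact h1.mono_measure (Measure.restrict_mono Ioi_sub_iUnion le_rfl)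

/-- every `f ∈ Λ₀` extends by continuity at `0`, and `f′(r) = O(1)`
as `r → 0⁺` and as `r → ∞`. -/
theorem stmt1 (F : Lambda0) :
    (∃ L : ℂ, Filter.Tendsto F.f (nhdsWithin 0 (Set.Ioi 0)) (nhds L)) ∧
    (∃ C ε : ℝ, 0 < ε ∧ ∀ r ∈ Set.Ioo (0:ℝ) ε, ‖F.f' r‖ ≤ C) ∧
    (∃ C R : ℝ, ∀ r ∈ Set.Ioi R, ‖F.f' r‖ ≤ C) := by
  have hsum := F.energyFin
  have hT1m : AEStronglyMeasurable (fun r : ℝ => r * ‖F.f'' r‖ ^ 2)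
      (volume.restrict (Set.Ioi 0)) :=
    aestronglyMeasurable_id.mul (((f''_aesm F).norm).pow 2)
  have hT2m : AEStronglyMeasurable (fun r : ℝ => (1/r) * ‖F.f' r‖ ^ 2)
      (volume.restrict (Set.Ioi 0)) :=
    ((measurable_const.div measurable_id).aestronglyMeasurable).mul
      (((F.contDeriv.aestronglyMeasurable measurableSet_Ioi).norm).pow 2)
  have hT1 : IntegrableOn (fun r : ℝ => r * ‖F.f'' r‖ ^ 2) (Set.Ioi 0) := by
    apply MeasureTheory.Integrable.mono hsum hT1m
    filter_upwards [ae_restrict_mem measurableSet_Ioi] with r hr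
    have hr' : (0:ℝ) < r := hr
    have h2 : (0:ℝ) ≤ (1/r) * ‖F.f' r‖ ^ 2 := by positivity
    rw [Real.norm_eq_abs, Real.norm_eq_abs, abs_of_nonneg (by positivity),
      abs_of_nonneg (by positivity)]
    linarith
  have hT2 : IntegrableOn (fun r : ℝ => (1/r) * ‖F.f' r‖ ^ 2) (Set.Ioi 0) := by
    apply MeasureTheory.Integrable.mono hsum hT2m
    filter_upwards [ae_restrict_mem measurableSet_Ioi] with r hr
    have hr' : (0:ℝ) < r := hr
    have h2 : (0:ℝ) ≤ r * ‖F.f'' r‖ ^ 2 := by positivity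
    rw [Real.norm_eq_abs, Real.norm_eq_abs, abs_of_nonneg (by positivity),
      abs_of_nonneg (by positivity)]
    linarith
  set E : ℝ := ∫ r in Set.Ioi (0:ℝ), r * ‖F.f'' r‖ ^ 2 with hE
  set I : ℝ := ∫ r in Set.Ioi (0:ℝ), (1/r) * ‖F.f' r‖ ^ 2 with hI
  have hE0 : 0 ≤ E := setIntegral_nonneg measurableSet_Ioi
    (fun r hr => by have : (0:ℝ) < r := hr; positivity)
  have hI0 : 0 ≤ I := setIntegral_nonneg measurableSet_Ioi
    (fun r hr => by have : (0:ℝ) < r := hr; positivity)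
  have hlog2 : (0:ℝ) < Real.log 2 := Real.log_pos (by norm_num)
  -- increment bound on dyadic intervals
  have key1 : ∀ a x : ℝ, 0 < a → a ≤ x → x ≤ 2*a →
      ‖F.f' x - F.f' a‖ ≤ (1/2) * (E + Real.log 2) := by
    intro a x ha hax hx2
    have hab : a ≤ 2*a := by linarith
    have hx : x ∈ Set.Icc a (2*a) := ⟨hax, hx2⟩
    have hFTC := (F.locAC a (2*a) ha hab).2 x hx
    have hint : IntegrableOn F.f'' (Set.Icc a (2*a)) := (F.locAC a (2*a) ha hab).1
    have heq : F.f' x - F.f' a = ∫ t in a..x, F.f'' t := by rw [hFTC]; ring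
    rw [heq]
    have hsub : Set.Icc a (2*a) ⊆ Set.Ioi (0:ℝ) := fun t ht => lt_of_lt_of_le ha ht.1
    have hii : IntervalIntegrable (fun t => ‖F.f'' t‖) volume a (2*a) := by
      apply IntegrableOn.intervalIntegrable
      rw [Set.uIcc_of_le hab]
      exact hint.norm
    have hbound : ∫ t in a..x, ‖F.f'' t‖ ≤ ∫ t in a..(2*a), ‖F.f'' t‖ := by
      apply intervalIntegral.integral_mono_interval le_rfl hax hx2 _ hii
      filter_upwards [ae_restrict_mem measurableSet_Ioc] with t ht
      exact norm_nonneg _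
    have hinv : IntegrableOn (fun t : ℝ => 1/t) (Set.Icc a (2*a)) := by
      apply ContinuousOn.integrableOn_Icc
      apply continuousOn_const.div continuousOn_id
      intro t ht; exact ne_of_gt (lt_of_lt_of_le ha ht.1)
    have hii2 : IntervalIntegrable (fun t => (1/2) * (t * ‖F.f'' t‖ ^ 2 + 1/t))
        volume a (2*a) := by
      apply IntegrableOn.intervalIntegrable
      rw [Set.uIcc_of_le hab]
      exact ((hT1.mono_set hsub).add hinv).const_mul _
    have hAMGM : ∫ t in a..(2*a), ‖F.f'' t‖
        ≤ ∫ t in a..(2*a), (1/2) * (t * ‖F.f'' t‖ ^ 2 + 1/t) := by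
      apply intervalIntegral.integral_mono_on hab hii hii2
      intro t ht
      have ht0 : 0 < t := lt_of_lt_of_le ha ht.1
      have hexp : 1/2 * (t * ‖F.f'' t‖ ^ 2 + 1/t) - ‖F.f'' t‖
          = (1/(2*t)) * (t * ‖F.f'' t‖ - 1)^2 := by
        field_simp; ring
      have hpos : (0:ℝ) ≤ (1/(2*t)) * (t * ‖F.f'' t‖ - 1)^2 := by positivity
      linarith
    have hsplit : ∫ t in a..(2*a), (1/2) * (t * ‖F.f'' t‖ ^ 2 + 1/t)
        = (1/2) * ((∫ t in a..(2*a), t * ‖F.f'' t‖ ^ 2) + ∫ t in a..(2*a), 1/t) := by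
      rw [intervalIntegral.integral_const_mul, intervalIntegral.integral_add]
      · apply IntegrableOn.intervalIntegrable
        rw [Set.uIcc_of_le hab]; exact hT1.mono_set hsub
      · apply IntegrableOn.intervalIntegrable
        rw [Set.uIcc_of_le hab]; exact hinv
    have hEbd : ∫ t in a..(2*a), t * ‖F.f'' t‖ ^ 2 ≤ E := by
      rw [intervalIntegral.integral_of_le hab]
      apply setIntegral_mono_set hT1
      · filter_upwards [ae_restrict_mem measurableSet_Ioi] with t ht
        have : (0:ℝ) < t := ht; positivity
      · exact HasSubset.Subset.eventuallyLE (fun t ht => lt_of_lt_of_le ha (le_of_lt ht.1))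
    have hlogbd : ∫ t in a..(2*a), (1:ℝ)/t = Real.log 2 := by
      rw [integral_one_div]
      · congr 1; field_simp
      · rw [Set.uIcc_of_le hab]
        intro h; exact absurd h.1 (by linarith)
    calc ‖∫ t in a..x, F.f'' t‖ ≤ ∫ t in a..x, ‖F.f'' t‖ :=
          intervalIntegral.norm_integral_le_integral_norm hax
      _ ≤ ∫ t in a..(2*a), ‖F.f'' t‖ := hbound
      _ ≤ ∫ t in a..(2*a), (1/2) * (t * ‖F.f'' t‖ ^ 2 + 1/t) := hAMGM
      _ = (1/2) * ((∫ t in a..(2*a), t * ‖F.f'' t‖ ^ 2) + ∫ t in a..(2*a), 1/t) := hsplit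
      _ ≤ (1/2) * (E + Real.log 2) := by rw [hlogbd]; linarith
  -- mean value point on dyadic intervals
  have key2 : ∀ r : ℝ, 0 < r → ∃ t ∈ Set.Icc r (2*r), ‖F.f' t‖ ^ 2 ≤ I / Real.log 2 := by
    intro r hr
    have hab : r ≤ 2*r := by linarith
    have hsub : Set.Icc r (2*r) ⊆ Set.Ioi (0:ℝ) := fun t ht => lt_of_lt_of_le hr ht.1
    obtain ⟨t₀, ht₀, hmin⟩ := (isCompact_Icc (a := r) (b := 2*r)).exists_isMinOn
      (Set.nonempty_Icc.2 hab)
      (f := fun t => ‖F.f' t‖ ^ 2) (((F.contDeriv.mono hsub).norm).pow 2)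
    refine ⟨t₀, ht₀, ?_⟩
    set m : ℝ := ‖F.f' t₀‖ ^ 2 with hm
    have hint2 : IntegrableOn (fun t : ℝ => (1/t) * ‖F.f' t‖ ^ 2) (Set.Icc r (2*r)) :=
      hT2.mono_set hsub
    have h1t : IntegrableOn (fun t : ℝ => (1/t) * m) (Set.Icc r (2*r)) := by
      apply ContinuousOn.integrableOn_Icc
      apply (continuousOn_const.div continuousOn_id ?_).mul continuousOn_const
      intro t ht; exact ne_of_gt (lt_of_lt_of_le hr ht.1)
    have hmono : ∫ t in r..(2*r), (1/t) * m ≤ ∫ t in r..(2*r), (1/t) * ‖F.f' t‖ ^ 2 := by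
      apply intervalIntegral.integral_mono_on hab
      · apply IntegrableOn.intervalIntegrable; rwa [Set.uIcc_of_le hab]
      · apply IntegrableOn.intervalIntegrable; rwa [Set.uIcc_of_le hab]
      · intro t ht
        have ht0 : 0 < t := lt_of_lt_of_le hr ht.1
        exact mul_le_mul_of_nonneg_left (hmin ht) (by positivity)
    have hlhs : ∫ t in r..(2*r), (1/t) * m = m * Real.log 2 := by
      have heq : (fun t : ℝ => (1/t) * m) = (fun t : ℝ => m * (1/t)) := by
        funext t; ring
      rw [heq, intervalIntegral.integral_const_mul, integral_one_div]
      · congr 1; field_simp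
      · rw [Set.uIcc_of_le hab]
        intro h; exact absurd h.1 (by linarith)
    have hrhs : ∫ t in r..(2*r), (1/t) * ‖F.f' t‖ ^ 2 ≤ I := by
      rw [intervalIntegral.integral_of_le hab]
      apply setIntegral_mono_set hT2
      · filter_upwards [ae_restrict_mem measurableSet_Ioi] with t ht
        have : (0:ℝ) < t := ht; positivity
      · exact HasSubset.Subset.eventuallyLE (fun t ht => lt_of_lt_of_le hr (le_of_lt ht.1))
    have hfin : m * Real.log 2 ≤ I := by rw [← hlhs]; exact le_trans hmono hrhs
    rw [le_div_iff₀ hlog2]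
    exact hfin
  -- uniform bound on f'
  set C : ℝ := Real.sqrt (I / Real.log 2) + (1/2) * (E + Real.log 2) with hC
  have hC0 : 0 ≤ C := by positivity
  have keyC : ∀ r : ℝ, 0 < r → ‖F.f' r‖ ≤ C := by
    intro r hr
    obtain ⟨t₀, ht₀, hbd⟩ := key2 r hr
    have h1 : ‖F.f' t₀‖ ≤ Real.sqrt (I / Real.log 2) := by
      have := Real.sqrt_le_sqrt hbd
      rwa [Real.sqrt_sq (norm_nonneg _)] at this
    have h2 : ‖F.f' t₀ - F.f' r‖ ≤ (1/2) * (E + Real.log 2) :=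
      key1 r t₀ hr ht₀.1 ht₀.2
    calc ‖F.f' r‖ = ‖F.f' t₀ - (F.f' t₀ - F.f' r)‖ := by congr 1; ring
      _ ≤ ‖F.f' t₀‖ + ‖F.f' t₀ - F.f' r‖ := norm_sub_le _ _
      _ ≤ C := add_le_add h1 h2
  clear_value E I C
  refine ⟨?_, ⟨C, 1, one_pos, fun r hr => keyC r hr.1⟩,
    ⟨C, 1, fun r hr => keyC r (lt_trans one_pos hr)⟩⟩
  -- Lipschitz on (0,∞)
  have hlip : ∀ x ∈ Set.Ioi (0:ℝ), ∀ y ∈ Set.Ioi (0:ℝ),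
      ‖F.f y - F.f x‖ ≤ C * ‖y - x‖ := by
    intro x hx y hy
    exact Convex.norm_image_sub_le_of_norm_hasDerivWithin_le
      (fun z hz => (F.hasDeriv z hz).hasDerivWithinAt)
      (fun z hz => keyC z hz) (convex_Ioi 0) hx hy
  set u : ℕ → ℝ := fun n => 1/((n:ℝ)+1) with hu
  have hu0 : ∀ n, 0 < u n := fun n => by positivity
  have hutend : Tendsto u atTop (nhds 0) := tendsto_one_div_add_atTop_nhds_zero_nat
  have huanti : ∀ {n m : ℕ}, n ≤ m → u m ≤ u n := by
    intro n m hnm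
    apply one_div_le_one_div_of_le (by positivity)
    have : (n:ℝ) ≤ m := Nat.cast_le.2 hnm
    linarith
  clear_value u
  have hCu : Tendsto (fun n => C * u n) atTop (nhds 0) := by
    have h := hutend.const_mul C
    rwa [mul_zero] at h
  have hdistf : ∀ x y : ℝ, 0 < x → 0 < y → dist (F.f x) (F.f y) ≤ C * ‖x - y‖ := by
    intro x y hx hy
    rw [dist_eq_norm]
    exact hlip y hy x hx
  have hcauchy : CauchySeq (fun n => F.f (u n)) := by
    rw [Metric.cauchySeq_iff]
    intro ε hε
    obtain ⟨N, hN⟩ := (Metric.tendsto_atTop.1 hCu) ε hε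
    refine ⟨N, fun n hn m hm => ?_⟩
    have h1 := hdistf (u n) (u m) (hu0 n) (hu0 m)
    have h2 : ‖u n - u m‖ ≤ u N := by
      rw [Real.norm_eq_abs]
      have han := huanti hn
      have ham := huanti hm
      rcases abs_cases (u n - u m) with ⟨h, _⟩ | ⟨h, _⟩ <;> rw [h] <;>
        [linarith [(hu0 m).le]; linarith [(hu0 n).le]]
    have hNN := hN N le_rfl
    rw [Real.dist_eq, sub_zero, abs_of_nonneg (mul_nonneg hC0 (hu0 N).le)] at hNN
    calc dist (F.f (u n)) (F.f (u m)) ≤ C * ‖u n - u m‖ := h1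
      _ ≤ C * u N := mul_le_mul_of_nonneg_left h2 hC0
      _ < ε := hNN
  obtain ⟨L, hL⟩ := cauchySeq_tendsto_of_complete hcauchy
  refine ⟨L, ?_⟩
  rw [Metric.tendsto_nhdsWithin_nhds]
  intro ε hε
  have h2 : ∀ᶠ n in atTop, C * u n < ε/4 :=
    hCu.eventually (eventually_lt_nhds (by linarith : (0:ℝ) < ε/4))
  have h3 : ∀ᶠ n in atTop, dist (F.f (u n)) L < ε/4 :=
    Metric.tendsto_nhds.mp hL (ε/4) (by linarith)
  obtain ⟨n, hn2, hn3⟩ := (h2.and h3).exists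
  refine ⟨u n, hu0 n, fun x hx hxd => ?_⟩
  have hx0 : (0:ℝ) < x := hx
  rw [Real.dist_eq, sub_zero, abs_of_pos hx0] at hxd
  have hnx : ‖x - u n‖ ≤ u n := by
    rw [Real.norm_eq_abs]
    rcases abs_cases (x - u n) with ⟨h, _⟩ | ⟨h, _⟩ <;> rw [h] <;> linarith [hu0 n]
  calc dist (F.f x) L ≤ dist (F.f x) (F.f (u n)) + dist (F.f (u n)) L := dist_triangle _ _ _
    _ ≤ C * ‖x - u n‖ + ε/4 := add_le_add (hdistf x (u n) hx0 (hu0 n)) hn3.le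
    _ ≤ C * u n + ε/4 := by
        have hmm := mul_le_mul_of_nonneg_left hnx hC0
        linarith
    _ < ε := by linarith
end
end

section
/- Let ρ = {r₁ < … < r_n} be positive knots and let α, ν₁, …, ν_n be arbitrary real values. Then there exists a unique Beppo Levi L₀-spline σ^A ∈ S₀(ρ) such that σ^A(r_j) = ν_j for all j ∈ {1,…,n} and σ^A(0) = α. -/
open MeasureTheory Set Filter

noncomputable section

namespace BLS


def Lc (x : ℝ) : ℂ := ((Real.log x : ℝ) : ℂ)

def Pk (a b c d : ℂ) (x : ℝ) : ℂ :=
  a * (x : ℂ) ^ 2 + b * (x : ℂ) ^ 2 * Lc x + c + d * Lc x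

def Pk1 (a b d : ℂ) (x : ℝ) : ℂ :=
  2*a*(x:ℂ) + 2*b*(x:ℂ)*Lc x + b*(x:ℂ) + d * ((x:ℂ))⁻¹

def Pk2 (a b d : ℂ) (x : ℝ) : ℂ :=
  2*a + 3*b + 2*b*Lc x - d * (((x:ℂ))^2)⁻¹

def uf (a b : ℂ) (x : ℝ) : ℂ := 4*(a+b) + 4*b*Lc x

lemma hasDerivAt_coe (x : ℝ) : HasDerivAt (fun y : ℝ => (y : ℂ)) 1 x := by
  simpa using (hasDerivAt_id x).ofReal_comp

lemma hasDerivAt_Lc {x : ℝ} (hx : x ≠ 0) : HasDerivAt Lc ((x:ℂ))⁻¹ x := by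
  have h := (Real.hasDerivAt_log hx).ofReal_comp
  have he : (((x⁻¹ : ℝ)) : ℂ) = ((x:ℂ))⁻¹ := by push_cast; ring
  rw [← he]
  exact h

lemma hasDerivAt_coe_sq (x : ℝ) : HasDerivAt (fun y : ℝ => ((y:ℂ))^2) (2*(x:ℂ)) x := by
  have h := (hasDerivAt_coe x).mul (hasDerivAt_coe x)
  have h2 : HasDerivAt (fun y : ℝ => (y:ℂ) * (y:ℂ)) (2*(x:ℂ)) x := by
    rw [show (2*(x:ℂ)) = 1 * (x:ℂ) + (x:ℂ) * 1 by ring]; exact h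
  have : (fun y : ℝ => ((y:ℂ))^2) = fun y : ℝ => (y:ℂ) * (y:ℂ) := by
    funext y; ring
  rw [this]; exact h2

lemma hasDerivAt_Pk {x : ℝ} (hx : 0 < x) (a b c d : ℂ) :
    HasDerivAt (Pk a b c d) (Pk1 a b d x) x := by
  have hxc : (x:ℂ) ≠ 0 := by exact_mod_cast hx.ne'
  have h1 : HasDerivAt (fun y : ℝ => a * (y:ℂ)^2) (a * (2*(x:ℂ))) x :=
    (hasDerivAt_coe_sq x).const_mul a
  have h2 : HasDerivAt (fun y : ℝ => b * (y:ℂ)^2 * Lc y)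
      (b * (2*(x:ℂ)) * Lc x + b * (x:ℂ)^2 * ((x:ℂ))⁻¹) x :=
    ((hasDerivAt_coe_sq x).const_mul b).mul (hasDerivAt_Lc hx.ne')
  have h3 : HasDerivAt (fun y : ℝ => d * Lc y) (d * ((x:ℂ))⁻¹) x :=
    (hasDerivAt_Lc hx.ne').const_mul d
  have h := ((h1.add h2).add (hasDerivAt_const x c)).add h3
  have he : Pk1 a b d x
      = a * (2*(x:ℂ)) + (b * (2*(x:ℂ)) * Lc x + b * (x:ℂ)^2 * ((x:ℂ))⁻¹) + 0 + d * ((x:ℂ))⁻¹ := by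
    unfold Pk1; field_simp; ring
  rw [he]; exact h

lemma hasDerivAt_Pk1 {x : ℝ} (hx : 0 < x) (a b d : ℂ) :
    HasDerivAt (Pk1 a b d) (Pk2 a b d x) x := by
  have hxc : (x:ℂ) ≠ 0 := by exact_mod_cast hx.ne'
  have h1 : HasDerivAt (fun y : ℝ => 2*a*(y:ℂ)) (2*a*1) x :=
    (hasDerivAt_coe x).const_mul (2*a)
  have h2 : HasDerivAt (fun y : ℝ => 2*b*(y:ℂ)*Lc y)
      (2*b*1*Lc x + 2*b*(x:ℂ) * ((x:ℂ))⁻¹) x :=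
    ((hasDerivAt_coe x).const_mul (2*b)).mul (hasDerivAt_Lc hx.ne')
  have h3 : HasDerivAt (fun y : ℝ => b*(y:ℂ)) (b*1) x :=
    (hasDerivAt_coe x).const_mul b
  have hinv : HasDerivAt (fun y : ℝ => ((y:ℂ))⁻¹) (-1/((x:ℂ))^2) x := by
    have := (hasDerivAt_inv hxc).comp_ofReal
    convert this using 1
    field_simp
  have h4 : HasDerivAt (fun y : ℝ => d * ((y:ℂ))⁻¹) (d * (-1/(x:ℂ)^2)) x :=
    hinv.const_mul d
  have h := ((h1.add h2).add h3).add h4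
  have he : Pk2 a b d x
      = 2*a*1 + (2*b*1*Lc x + 2*b*(x:ℂ) * ((x:ℂ))⁻¹) + b*1 + d * (-1/(x:ℂ)^2) := by
    unfold Pk2; field_simp; ring
  rw [he]; exact h

lemma hasDerivAt_uf {x : ℝ} (hx : 0 < x) (a b : ℂ) :
    HasDerivAt (uf a b) (4*b*((x:ℂ))⁻¹) x :=
  ((hasDerivAt_Lc hx.ne').const_mul (4*b)).const_add (4*(a+b))

lemma uf_eq {x : ℝ} (hx : 0 < x) (a b d : ℂ) :
    uf a b x = Pk2 a b d x + Pk1 a b d x / (x:ℂ) := by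
  have hxc : (x:ℂ) ≠ 0 := by exact_mod_cast hx.ne'
  unfold uf Pk1 Pk2
  field_simp
  ring

lemma xuf_eq {x : ℝ} (hx : 0 < x) (a b d : ℂ) :
    (x:ℂ) * uf a b x = (x:ℂ) * Pk2 a b d x + Pk1 a b d x := by
  have hxc : (x:ℂ) ≠ 0 := by exact_mod_cast hx.ne'
  unfold uf Pk1 Pk2
  field_simp
  ring

lemma continuousAt_Lc {x : ℝ} (hx : x ≠ 0) : ContinuousAt Lc x :=
  Complex.continuous_ofReal.continuousAt.comp (Real.continuousAt_log hx)

lemma continuousAt_Pk {x : ℝ} (hx : 0 < x) (a b c d : ℂ) :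
    ContinuousAt (Pk a b c d) x := (hasDerivAt_Pk hx a b c d).continuousAt

lemma continuousAt_Pk1 {x : ℝ} (hx : 0 < x) (a b d : ℂ) :
    ContinuousAt (Pk1 a b d) x := (hasDerivAt_Pk1 hx a b d).continuousAt

lemma continuousAt_Pk2 {x : ℝ} (hx : 0 < x) (a b d : ℂ) :
    ContinuousAt (Pk2 a b d) x := by
  have hxc : (x:ℂ) ≠ 0 := by exact_mod_cast hx.ne'
  have : ContinuousAt (fun y : ℝ => (((y:ℂ))^2)⁻¹) x :=
    ((Complex.continuous_ofReal.pow 2).continuousAt).inv₀ (by simpa using hxc)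
  exact (((continuousAt_const.add continuousAt_const).add
    (continuousAt_const.mul (continuousAt_Lc hx.ne'))).sub (continuousAt_const.mul this))

lemma continuousAt_uf {x : ℝ} (hx : 0 < x) (a b : ℂ) :
    ContinuousAt (uf a b) x :=
  continuousAt_const.add (continuousAt_const.mul (continuousAt_Lc hx.ne'))





def uconj (a b : ℂ) (x : ℝ) : ℂ :=
  (starRingEnd ℂ) (4*(a+b)) + 4 * (starRingEnd ℂ) b * Lc x

lemma uconj_eq (a b : ℂ) (x : ℝ) : uconj a b x = (starRingEnd ℂ) (uf a b x) := by
  simp only [uconj, uf, map_add, map_mul, map_ofNat]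
  simp [Lc, Complex.conj_ofReal]

def Fc (a b c d : ℂ) (x : ℝ) : ℂ :=
  (x:ℂ) * Pk1 a b d x * uconj a b x - 4 * (starRingEnd ℂ) b * Pk a b c d x

def Fr (a b c d : ℂ) (x : ℝ) : ℝ := (Fc a b c d x).re

lemma hasDerivAt_uconj {x : ℝ} (hx : 0 < x) (a b : ℂ) :
    HasDerivAt (uconj a b) (4 * (starRingEnd ℂ) b * ((x:ℂ))⁻¹) x :=
  ((hasDerivAt_Lc hx.ne').const_mul (4 * (starRingEnd ℂ) b)).const_add _

lemma hasDerivAt_Fc {x : ℝ} (hx : 0 < x) (a b c d : ℂ) :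
    HasDerivAt (Fc a b c d) ((x:ℂ) * uf a b x * uconj a b x) x := by
  have hxc : (x:ℂ) ≠ 0 := by exact_mod_cast hx.ne'
  have h1 : HasDerivAt (fun y : ℝ => (y:ℂ) * Pk1 a b d y * uconj a b y)
      ((1 * Pk1 a b d x + (x:ℂ) * Pk2 a b d x) * uconj a b x
        + (x:ℂ) * Pk1 a b d x * (4 * (starRingEnd ℂ) b * ((x:ℂ))⁻¹)) x :=
    (((hasDerivAt_coe x).mul (hasDerivAt_Pk1 hx a b d)).mul (hasDerivAt_uconj hx a b))
  have h2 : HasDerivAt (fun y : ℝ => 4 * (starRingEnd ℂ) b * Pk a b c d y)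
      (4 * (starRingEnd ℂ) b * Pk1 a b d x) x :=
    (hasDerivAt_Pk hx a b c d).const_mul _
  have h := h1.sub h2
  have he : (x:ℂ) * uf a b x * uconj a b x
      = (1 * Pk1 a b d x + (x:ℂ) * Pk2 a b d x) * uconj a b x
        + (x:ℂ) * Pk1 a b d x * (4 * (starRingEnd ℂ) b * ((x:ℂ))⁻¹)
        - 4 * (starRingEnd ℂ) b * Pk1 a b d x := by
    rw [xuf_eq hx a b d]
    field_simp
    ring
  rw [he]; exact h

lemma hasDerivAt_Fr {x : ℝ} (hx : 0 < x) (a b c d : ℂ) :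
    HasDerivAt (Fr a b c d) (x * Complex.normSq (uf a b x)) x := by
  have h := hasDerivAt_Fc hx a b c d
  have hD : (x:ℂ) * uf a b x * uconj a b x
      = ((x * Complex.normSq (uf a b x) : ℝ) : ℂ) := by
    rw [uconj_eq, mul_assoc, Complex.mul_conj]
    push_cast; ring
  rw [hD] at h
  have := Complex.reCLM.hasFDerivAt.comp_hasDerivAt x h
  exact this

lemma Fr_zero_right (c d : ℂ) (x : ℝ) : Fr 0 0 c d x = 0 := by
  simp [Fr, Fc, uconj]

lemma Fc_at_zero (a b c d : ℂ) : Fc a b c d 0 = -(4 * (starRingEnd ℂ) b * c) := by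
  simp [Fc, Pk, Pk1, Lc, Real.log_zero]

-- continuity at 0 for left piece (d = 0)
lemma tendsto_mul_log_zero :
    Tendsto (fun x : ℝ => x * Real.log x) (nhdsWithin 0 (Ioi 0)) (nhds 0) := by
  have h := tendsto_log_mul_rpow_nhdsGT_zero zero_lt_one
  refine h.congr' ?_
  filter_upwards [self_mem_nhdsWithin] with x hx
  rw [Real.rpow_one]; ring

lemma cwa_M : ContinuousWithinAt (fun x : ℝ => (x:ℂ) * Lc x) (Ici 0) 0 := by
  rw [← Set.Ioi_insert, continuousWithinAt_insert_self]
  have : Tendsto (fun x : ℝ => (x:ℂ) * Lc x) (nhdsWithin 0 (Ioi 0)) (nhds 0) := by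
    have := (Complex.continuous_ofReal.tendsto 0).comp tendsto_mul_log_zero
    refine Tendsto.congr ?_ (by simpa using this)
    intro x; simp [Lc]
  have h0 : (fun x : ℝ => (x:ℂ) * Lc x) 0 = 0 := by simp
  unfold ContinuousWithinAt
  rw [h0]
  exact this

lemma cwa_X : ContinuousWithinAt (fun x : ℝ => (x:ℂ)) (Ici 0) 0 :=
  Complex.continuous_ofReal.continuousWithinAt

lemma Fc_poly (a b c : ℂ) (x : ℝ) :
    Fc a b c 0 x
      = ((2*a+b) * (starRingEnd ℂ) (4*(a+b)) - 4*(starRingEnd ℂ) b * a) * (x:ℂ)^2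
        + (2*b*(starRingEnd ℂ) (4*(a+b)) + (2*a+b)*(4*(starRingEnd ℂ) b)
            - 4*(starRingEnd ℂ) b * b) * ((x:ℂ) * ((x:ℂ) * Lc x))
        + (2*b*(4*(starRingEnd ℂ) b)) * ((x:ℂ) * Lc x)^2
        - 4*(starRingEnd ℂ) b * c := by
  simp only [Fc, Pk, Pk1, uconj]
  ring

lemma cwa_Fr0 (a b c : ℂ) : ContinuousWithinAt (Fr a b c 0) (Ici 0) 0 := by
  apply Complex.continuous_re.continuousAt.comp_continuousWithinAt
  have : ContinuousWithinAt (fun x => Fc a b c 0 x) (Ici 0) 0 := by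
    simp only [Fc_poly]
    exact ((((continuousWithinAt_const.mul (cwa_X.pow 2)).add
      (continuousWithinAt_const.mul (cwa_X.mul cwa_M))).add
      (continuousWithinAt_const.mul (cwa_M.pow 2))).sub continuousWithinAt_const)
  exact this

lemma tendsto_Pk_zero (a b c : ℂ) :
    ContinuousWithinAt (Pk a b c 0) (Ici 0) 0 := by
  have hpoly : Pk a b c 0 = fun x : ℝ => a * (x:ℂ)^2 + b * ((x:ℂ) * ((x:ℂ) * Lc x)) + c := by
    funext x; simp only [Pk]; ring
  rw [hpoly]
  exact ((continuousWithinAt_const.mul (cwa_X.pow 2)).add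
      (continuousWithinAt_const.mul (cwa_X.mul cwa_M))).add continuousWithinAt_const

lemma Pk_at_zero (a b c d : ℂ) : Pk a b c d 0 = c := by
  simp [Pk, Lc, Real.log_zero]



lemma Fr_monoOn {a b c d : ℂ} {A B : ℝ} (hA : 0 ≤ A)
    (hcont : ContinuousOn (Fr a b c d) (Icc A B)) :
    MonotoneOn (Fr a b c d) (Icc A B) := by
  apply monotoneOn_of_deriv_nonneg (convex_Icc A B) hcont
  · intro x hx
    rw [interior_Icc] at hx
    exact ((hasDerivAt_Fr (lt_of_le_of_lt hA hx.1) a b c d).differentiableAt).differentiableWithinAt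
  · intro x hx
    rw [interior_Icc] at hx
    have hx0 : 0 < x := lt_of_le_of_lt hA hx.1
    rw [(hasDerivAt_Fr hx0 a b c d).deriv]
    exact mul_nonneg hx0.le (Complex.normSq_nonneg _)

lemma cont_Fr_Icc {a b c d : ℂ} {A B : ℝ} (hA : 0 < A) :
    ContinuousOn (Fr a b c d) (Icc A B) := fun x hx =>
  ((hasDerivAt_Fr (lt_of_lt_of_le hA hx.1) a b c d).continuousAt).continuousWithinAt

lemma cont_Fr0_Icc (a b c : ℂ) (B : ℝ) : ContinuousOn (Fr a b c 0) (Icc 0 B) := by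
  intro x hx
  rcases eq_or_lt_of_le hx.1 with h | h
  · subst h
    exact (cwa_Fr0 a b c).mono Icc_subset_Ici_self
  · exact ((hasDerivAt_Fr h a b c 0).continuousAt).continuousWithinAt

lemma uf_vanish {a b c d : ℂ} {A B : ℝ} (hA : 0 ≤ A) (hAB : A < B)
    (hmono : MonotoneOn (Fr a b c d) (Icc A B))
    (hends : Fr a b c d B = Fr a b c d A) :
    ∀ x ∈ Ioo A B, uf a b x = 0 := by
  intro x hx
  have hmem : ∀ y ∈ Icc A B, Fr a b c d y = Fr a b c d A := by
    intro y hy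
    refine le_antisymm ?_ (hmono (left_mem_Icc.mpr hAB.le) hy hy.1)
    rw [← hends]
    exact hmono hy (right_mem_Icc.mpr hAB.le) hy.2
  have hx0 : 0 < x := lt_of_le_of_lt hA hx.1
  have hEv : Fr a b c d =ᶠ[nhds x] fun _ => Fr a b c d A :=
    eventually_of_mem (Ioo_mem_nhds hx.1 hx.2)
      (fun y hy => hmem y (Ioo_subset_Icc_self hy))
  have h1 : HasDerivAt (Fr a b c d) 0 x :=
    (hasDerivAt_const x (Fr a b c d A)).congr_of_eventuallyEq hEv
  have h2 := (hasDerivAt_Fr hx0 a b c d).unique h1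
  have h3 : Complex.normSq (uf a b x) = 0 := by
    rcases mul_eq_zero.mp h2 with h | h
    · exact absurd h hx0.ne'
    · exact h
  exact Complex.normSq_eq_zero.mp h3

lemma uf_ab_zero {a b : ℂ} {A B : ℝ} (hA : 0 ≤ A) (hAB : A < B)
    (h : ∀ x ∈ Ioo A B, uf a b x = 0) : a = 0 ∧ b = 0 := by
  set p := A + (B - A) / 3 with hp'
  set q := A + 2 * (B - A) / 3 with hq'
  have hp : p ∈ Ioo A B := ⟨by simp [hp']; linarith, by simp [hp']; linarith⟩
  have hq : q ∈ Ioo A B := ⟨by simp [hq']; linarith, by simp [hq']; linarith⟩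
  have hp0 : 0 < p := lt_of_le_of_lt hA hp.1
  have hq0 : p < q := by simp [hp', hq']; linarith
  have hlog : Real.log p < Real.log q := Real.log_lt_log hp0 hq0
  have e1 := h p hp
  have e2 := h q hq
  rw [uf] at e1 e2
  have hLne : Lc p ≠ Lc q := by
    simp only [Lc, ne_eq, Complex.ofReal_inj]
    exact hlog.ne
  have hb : b = 0 := by
    have h0 : 4 * b * (Lc p - Lc q) = 0 := by linear_combination e1 - e2
    rcases mul_eq_zero.mp h0 with h' | h'
    · rcases mul_eq_zero.mp h' with h'' | h''
      · norm_num at h''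
      · exact h''
    · exact absurd (sub_eq_zero.mp h') hLne
  refine ⟨?_, hb⟩
  rw [hb] at e1
  have : (4:ℂ) * a = 0 := by linear_combination e1
  have h4 : (4:ℂ) ≠ 0 := by norm_num
  exact (mul_eq_zero.mp this).resolve_left h4

lemma core (n : ℕ) (hn : 1 ≤ n) (t : ℕ → ℝ) (hpos : 0 < t 1)
    (hmono : ∀ j, 1 ≤ j → j < n → t j < t (j + 1))
    (a b c d : ℕ → ℂ)
    (hd0 : d 0 = 0) (han : a n = 0) (hbn : b n = 0) (hc0 : c 0 = 0)
    (hval : ∀ j, 1 ≤ j → j ≤ n → Pk (a j) (b j) (c j) (d j) (t j) = 0)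
    (hvalL : ∀ j, 1 ≤ j → j ≤ n →
      Pk (a (j-1)) (b (j-1)) (c (j-1)) (d (j-1)) (t j) = 0)
    (hm1 : ∀ j, 1 ≤ j → j ≤ n →
      Pk1 (a (j-1)) (b (j-1)) (d (j-1)) (t j) = Pk1 (a j) (b j) (d j) (t j))
    (hm2 : ∀ j, 1 ≤ j → j ≤ n →
      Pk2 (a (j-1)) (b (j-1)) (d (j-1)) (t j) = Pk2 (a j) (b j) (d j) (t j)) :
    ∀ j, j ≤ n → a j = 0 ∧ b j = 0 ∧ c j = 0 ∧ d j = 0 := by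
  -- positivity of knots
  have tpos : ∀ j, 1 ≤ j → j ≤ n → 0 < t j := by
    intro j h1 h2
    induction j with
    | zero => omega
    | succ k ih =>
      rcases Nat.eq_or_lt_of_le h1 with h | h
      · rw [← h]; exact hpos
      · have hk1 : 1 ≤ k := by omega
        exact lt_trans (ih hk1 (by omega)) (hmono k hk1 (by omega))
  -- u matching at knots
  have umatch : ∀ j, 1 ≤ j → j ≤ n →
      uf (a (j-1)) (b (j-1)) (t j) = uf (a j) (b j) (t j) := by
    intro j h1 h2
    rw [uf_eq (tpos j h1 h2) _ _ (d (j-1)), uf_eq (tpos j h1 h2) (a j) (b j) (d j),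
      hm1 j h1 h2, hm2 j h1 h2]
  -- F jump continuity at knots
  have Fjump : ∀ j, 1 ≤ j → j ≤ n →
      Fr (a (j-1)) (b (j-1)) (c (j-1)) (d (j-1)) (t j) = Fr (a j) (b j) (c j) (d j) (t j) := by
    intro j h1 h2
    unfold Fr Fc
    rw [hval j h1 h2, hvalL j h1 h2, hm1 j h1 h2, uconj_eq, uconj_eq, umatch j h1 h2]
    simp
  -- the left endpoint of piece j
  have F00 : Fr (a 0) (b 0) (c 0) (d 0) 0 = 0 := by
    rw [hd0, Fr, Fc_at_zero, hc0]
    simp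
  -- monotone on pieces
  have Fmono : ∀ j, j < n → MonotoneOn (Fr (a j) (b j) (c j) (d j))
      (Icc (if j = 0 then 0 else t j) (t (j + 1))) := by
    intro j hj
    rcases Nat.eq_zero_or_pos j with h0 | h0
    · subst h0
      rw [if_pos rfl, hd0]
      exact Fr_monoOn le_rfl (cont_Fr0_Icc _ _ _ _)
    · have hj1 : 1 ≤ j := h0
      simp only [if_neg (by omega : ¬ j = 0)]
      exact Fr_monoOn (tpos j hj1 (by omega)).le (cont_Fr_Icc (tpos j hj1 (by omega)))
  have hKlt : ∀ j, j < n → (if j = 0 then 0 else t j) < t (j + 1) := by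
    intro j hj
    rcases Nat.eq_zero_or_pos j with h0 | h0
    · subst h0; simpa using hpos
    · simp only [if_neg (by omega : ¬ j = 0)]; exact hmono j h0 hj
  have hK0 : ∀ j, j < n → (0:ℝ) ≤ (if j = 0 then 0 else t j) := by
    intro j hj
    rcases Nat.eq_zero_or_pos j with h0 | h0
    · subst h0; simp
    · simp only [if_neg (by omega : ¬ j = 0)]; exact (tpos j h0 (by omega)).le
  have memL : ∀ j, j < n → (if j = 0 then 0 else t j) ∈
      Icc (if j = 0 then 0 else t j) (t (j + 1)) := fun j hj => left_mem_Icc.mpr (hKlt j hj).le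
  have memR : ∀ j, j < n → t (j + 1) ∈
      Icc (if j = 0 then 0 else t j) (t (j + 1)) := fun j hj => right_mem_Icc.mpr (hKlt j hj).le
  -- F_j at left end of piece j equals Fr_j (t j) for j ≥ 1; define values chain
  have FrN : ∀ x : ℝ, Fr (a n) (b n) (c n) (d n) x = 0 := by
    intro x; rw [han, hbn]; exact Fr_zero_right _ _ _
  -- upward chain: 0 ≤ Fr_j (t j)
  have up : ∀ j, 1 ≤ j → j ≤ n → 0 ≤ Fr (a j) (b j) (c j) (d j) (t j) := by
    intro j h1 h2
    induction j with
    | zero => omega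
    | succ k ih =>
      have hkn : k < n := by omega
      have hstep : Fr (a k) (b k) (c k) (d k) (if k = 0 then 0 else t k)
          ≤ Fr (a k) (b k) (c k) (d k) (t (k + 1)) :=
        Fmono k hkn (memL k hkn) (memR k hkn) (by
          rcases Nat.eq_zero_or_pos k with h0 | h0
          · subst h0; simpa using hpos.le
          · simp only [if_neg (by omega : ¬ k = 0)]; exact (hmono k h0 hkn).le)
      have hjump : Fr (a k) (b k) (c k) (d k) (t (k + 1))
          = Fr (a (k+1)) (b (k+1)) (c (k+1)) (d (k+1)) (t (k + 1)) := by
        have := Fjump (k+1) (by omega) h2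
        simpa using this
      rcases Nat.eq_zero_or_pos k with h0 | h0
      · subst h0
        rw [← hjump]
        calc (0:ℝ) = Fr (a 0) (b 0) (c 0) (d 0) 0 := F00.symm
        _ ≤ _ := by simpa using hstep
      · have h0' := ih h0 (by omega)
        rw [← hjump]
        refine le_trans h0' ?_
        simpa [if_neg (by omega : ¬ k = 0)] using hstep
  -- downward chain
  have down : ∀ m j, 1 ≤ j → j ≤ n → n - j ≤ m →
      Fr (a j) (b j) (c j) (d j) (t j) ≤ 0 := by
    intro m
    induction m with
    | zero =>
      intro j h1 h2 h3
      have : j = n := by omega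
      subst this
      exact le_of_eq (FrN (t j))
    | succ m ih =>
      intro j h1 h2 h3
      rcases Nat.eq_or_lt_of_le h2 with he | hlt
      · subst he; exact le_of_eq (FrN (t j))
      · have hstep : Fr (a j) (b j) (c j) (d j) (t j)
            ≤ Fr (a j) (b j) (c j) (d j) (t (j + 1)) := by
          have := Fmono j hlt (by
            simpa [if_neg (by omega : ¬ j = 0)] using memL j hlt)
            (memR j hlt) (hmono j h1 hlt).le
          simpa [if_neg (by omega : ¬ j = 0)] using this
        have hjump : Fr (a j) (b j) (c j) (d j) (t (j + 1))
            = Fr (a (j+1)) (b (j+1)) (c (j+1)) (d (j+1)) (t (j + 1)) := by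
          have := Fjump (j+1) (by omega) (by omega)
          simpa using this
        exact le_trans hstep (hjump ▸ ih (j+1) (by omega) (by omega) (by omega))
  have Fzero : ∀ j, 1 ≤ j → j ≤ n → Fr (a j) (b j) (c j) (d j) (t j) = 0 :=
    fun j h1 h2 => le_antisymm (down (n - j) j h1 h2 le_rfl) (up j h1 h2)
  -- each piece: uf vanishes on the open interval, hence a j = b j = 0
  have abz : ∀ j, j ≤ n → a j = 0 ∧ b j = 0 := by
    intro j hj
    rcases Nat.eq_or_lt_of_le hj with he | hlt
    · subst he; exact ⟨han, hbn⟩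
    · have hends : Fr (a j) (b j) (c j) (d j) (t (j + 1))
          = Fr (a j) (b j) (c j) (d j) (if j = 0 then 0 else t j) := by
        have hR : Fr (a j) (b j) (c j) (d j) (t (j + 1)) = 0 := by
          have := Fjump (j+1) (by omega) (by omega)
          simp only [Nat.add_sub_cancel] at this
          rw [this]
          rcases Nat.eq_or_lt_of_le (by omega : j + 1 ≤ n) with he | hlt'
          · rw [he]; exact FrN _
          · exact Fzero (j+1) (by omega) (by omega)
        have hL : Fr (a j) (b j) (c j) (d j) (if j = 0 then 0 else t j) = 0 := by
          rcases Nat.eq_zero_or_pos j with h0 | h0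
          · subst h0; simpa using F00
          · simp only [if_neg (by omega : ¬ j = 0)]
            exact Fzero j h0 hj
        rw [hR, hL]
      have hvan := uf_vanish (hK0 j hlt) (hKlt j hlt) (Fmono j hlt) hends
      exact uf_ab_zero (hK0 j hlt) (hKlt j hlt) hvan
  -- d and c
  have dz : ∀ j, j ≤ n → d j = 0 := by
    intro j hj
    induction j with
    | zero => exact hd0
    | succ k ih =>
      have hk : k ≤ n := by omega
      have h1 := hm1 (k+1) (by omega) hj
      simp only [Nat.add_sub_cancel] at h1
      rw [(abz k hk).1, (abz k hk).2, (abz (k+1) hj).1, (abz (k+1) hj).2, ih hk] at h1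
      simp only [Pk1] at h1
      have htpos := tpos (k+1) (by omega) hj
      have htc : ((t (k+1) : ℝ) : ℂ) ≠ 0 := by exact_mod_cast htpos.ne'
      have : d (k+1) * ((t (k+1) : ℝ) : ℂ)⁻¹ = 0 := by
        field_simp at h1 ⊢
        linear_combination -h1
      rcases mul_eq_zero.mp this with h | h
      · exact h
      · exact absurd (inv_eq_zero.mp h) htc
  have cz : ∀ j, j ≤ n → c j = 0 := by
    intro j hj
    rcases Nat.eq_zero_or_pos j with h0 | h0
    · subst h0; exact hc0
    · have hv := hval j h0 hj
      rw [(abz j hj).1, (abz j hj).2, dz j hj] at hv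
      simpa [Pk] using hv
  exact fun j hj => ⟨(abz j hj).1, (abz j hj).2, cz j hj, dz j hj⟩




abbrev Mspace (n : ℕ) := Fin (n+1) → Fin 4 → ℂ

def cvar (n : ℕ) (j : Fin (n+1)) (i : Fin 4) : Mspace n →ₗ[ℂ] ℂ :=
  (LinearMap.proj (R := ℂ) (φ := fun _ : Fin 4 => ℂ) i).comp
    (LinearMap.proj (R := ℂ) (φ := fun _ : Fin (n+1) => (Fin 4 → ℂ)) j)

def evalP (n : ℕ) (j : Fin (n+1)) (x : ℝ) : Mspace n →ₗ[ℂ] ℂ :=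
  ((x:ℂ)^2) • cvar n j 0 + ((x:ℂ)^2 * Lc x) • cvar n j 1 + cvar n j 2 + (Lc x) • cvar n j 3

def evalP1 (n : ℕ) (j : Fin (n+1)) (x : ℝ) : Mspace n →ₗ[ℂ] ℂ :=
  (2*(x:ℂ)) • cvar n j 0 + (2*(x:ℂ)*Lc x + (x:ℂ)) • cvar n j 1 + ((x:ℂ))⁻¹ • cvar n j 3

def evalP2 (n : ℕ) (j : Fin (n+1)) (x : ℝ) : Mspace n →ₗ[ℂ] ℂ :=
  (2:ℂ) • cvar n j 0 + (3 + 2*Lc x) • cvar n j 1 + (-(((x:ℂ))^2)⁻¹) • cvar n j 3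

lemma cvar_apply (n : ℕ) (j : Fin (n+1)) (i : Fin 4) (v : Mspace n) :
    cvar n j i v = v j i := rfl

lemma cvar_apply' (n : ℕ) (j : Fin (n+1)) (i : Fin 4) :
    ⇑(cvar n j i) = fun v => v j i := rfl

lemma evalP_apply (n : ℕ) (j : Fin (n+1)) (x : ℝ) (v : Mspace n) :
    evalP n j x v = Pk (v j 0) (v j 1) (v j 2) (v j 3) x := by
  simp [evalP, cvar_apply, Pk, smul_eq_mul]; ring

lemma evalP1_apply (n : ℕ) (j : Fin (n+1)) (x : ℝ) (v : Mspace n) :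
    evalP1 n j x v = Pk1 (v j 0) (v j 1) (v j 3) x := by
  simp [evalP1, cvar_apply, Pk1, smul_eq_mul]; ring

lemma evalP2_apply (n : ℕ) (j : Fin (n+1)) (x : ℝ) (v : Mspace n) :
    evalP2 n j x v = Pk2 (v j 0) (v j 1) (v j 3) x := by
  simp [evalP2, cvar_apply, Pk2, smul_eq_mul]; ring

def conMap (n : ℕ) (r : ℕ → ℝ) :
    Mspace n →ₗ[ℂ] (Fin n → ℂ × ℂ × ℂ) × (ℂ × ℂ × ℂ) :=
  (LinearMap.pi fun k : Fin n =>
    ((evalP n k.castSucc (r (k.val+1)) - evalP n k.succ (r (k.val+1))).prod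
      (((evalP1 n k.castSucc (r (k.val+1)) - evalP1 n k.succ (r (k.val+1)))).prod
        (evalP2 n k.castSucc (r (k.val+1)) - evalP2 n k.succ (r (k.val+1)))))).prod
  ((cvar n 0 3).prod ((cvar n (Fin.last n) 0).prod (cvar n (Fin.last n) 1)))

def valMap (n : ℕ) (r : ℕ → ℝ) : Mspace n →ₗ[ℂ] (Fin (n+1) → ℂ) :=
  LinearMap.pi fun i : Fin (n+1) =>
    if i.val = 0 then cvar n 0 2 else evalP n i (r i.val)

def coef (n : ℕ) (v : Mspace n) (i : Fin 4) (j : ℕ) : ℂ :=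
  if h : j < n + 1 then v ⟨j, h⟩ i else 0

lemma coef_eq (n : ℕ) (v : Mspace n) (i : Fin 4) (j : Fin (n+1)) :
    coef n v i j.val = v j i := by
  simp [coef, j.isLt]

lemma con_facts (n : ℕ) (hn : 1 ≤ n) (r : ℕ → ℝ) (v : Mspace n)
    (hcon : conMap n r v = 0) :
    coef n v 3 0 = 0 ∧ coef n v 0 n = 0 ∧ coef n v 1 n = 0 ∧
      (∀ j, 1 ≤ j → j ≤ n →
        (Pk (coef n v 0 (j-1)) (coef n v 1 (j-1)) (coef n v 2 (j-1)) (coef n v 3 (j-1)) (r j)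
          = Pk (coef n v 0 j) (coef n v 1 j) (coef n v 2 j) (coef n v 3 j) (r j)) ∧
        (Pk1 (coef n v 0 (j-1)) (coef n v 1 (j-1)) (coef n v 3 (j-1)) (r j)
          = Pk1 (coef n v 0 j) (coef n v 1 j) (coef n v 3 j) (r j)) ∧
        (Pk2 (coef n v 0 (j-1)) (coef n v 1 (j-1)) (coef n v 3 (j-1)) (r j)
          = Pk2 (coef n v 0 j) (coef n v 1 j) (coef n v 3 j) (r j))) := by
  have hd0 : v 0 3 = 0 := by
    have := congrArg (fun p => p.2.1) hcon
    simpa [conMap, cvar_apply] using this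
  have han : v (Fin.last n) 0 = 0 := by
    have := congrArg (fun p => p.2.2.1) hcon
    simpa [conMap, cvar_apply] using this
  have hbn : v (Fin.last n) 1 = 0 := by
    have := congrArg (fun p => p.2.2.2) hcon
    simpa [conMap, cvar_apply] using this
  refine ⟨?_, ?_, ?_, ?_⟩
  · have : coef n v 3 0 = v 0 3 := coef_eq n v 3 0
    rw [this, hd0]
  · have : coef n v 0 n = v (Fin.last n) 0 := by
      have := coef_eq n v 0 (Fin.last n); rwa [Fin.val_last] at this
    rw [this, han]
  · have : coef n v 1 n = v (Fin.last n) 1 := by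
      have := coef_eq n v 1 (Fin.last n); rwa [Fin.val_last] at this
    rw [this, hbn]
  · intro j hj1 hjn
    set k : Fin n := ⟨j - 1, by omega⟩ with hk
    have hkv : (k : ℕ) = j - 1 := rfl
    have hkc : (k.castSucc : Fin (n+1)).val = j - 1 := rfl
    have hks : (k.succ : Fin (n+1)).val = j := by rw [Fin.val_succ, hkv]; omega
    have hrk : r (k.val + 1) = r j := by rw [hkv, Nat.sub_add_cancel hj1]
    have e1 : evalP n k.castSucc (r (k.val+1)) v - evalP n k.succ (r (k.val+1)) v = 0 := by
      have := congrArg (fun p => (p.1 k).1) hcon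
      simpa [conMap] using this
    have e2 : evalP1 n k.castSucc (r (k.val+1)) v - evalP1 n k.succ (r (k.val+1)) v = 0 := by
      have := congrArg (fun p => (p.1 k).2.1) hcon
      simpa [conMap] using this
    have e3 : evalP2 n k.castSucc (r (k.val+1)) v - evalP2 n k.succ (r (k.val+1)) v = 0 := by
      have := congrArg (fun p => (p.1 k).2.2) hcon
      simpa [conMap] using this
    have hcL : ∀ i : Fin 4, coef n v i (j-1) = v k.castSucc i := by
      intro i; have := coef_eq n v i k.castSucc; rwa [hkc] at this
    have hcR : ∀ i : Fin 4, coef n v i j = v k.succ i := by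
      intro i; have := coef_eq n v i k.succ; rwa [hks] at this
    refine ⟨?_, ?_, ?_⟩
    · rw [hcL, hcL, hcL, hcL, hcR, hcR, hcR, hcR, ← evalP_apply, ← evalP_apply, ← hrk]
      exact sub_eq_zero.mp e1
    · rw [hcL, hcL, hcL, hcR, hcR, hcR, ← evalP1_apply, ← evalP1_apply, ← hrk]
      exact sub_eq_zero.mp e2
    · rw [hcL, hcL, hcL, hcR, hcR, hcR, ← evalP2_apply, ← evalP2_apply, ← hrk]
      exact sub_eq_zero.mp e3

lemma val_facts (n : ℕ) (hn : 1 ≤ n) (r : ℕ → ℝ) (v : Mspace n) (w : Fin (n+1) → ℂ)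
    (hval : valMap n r v = w) :
    coef n v 2 0 = w 0 ∧
      ∀ j (hj1 : 1 ≤ j) (hjn : j ≤ n),
        Pk (coef n v 0 j) (coef n v 1 j) (coef n v 2 j) (coef n v 3 j) (r j)
          = w ⟨j, by omega⟩ := by
  constructor
  · have h0 := congrFun hval 0
    simp only [valMap, LinearMap.pi_apply, Fin.val_zero, if_pos, cvar_apply] at h0
    have : coef n v 2 0 = v 0 2 := coef_eq n v 2 0
    rw [this]
    exact h0
  · intro j hj1 hjn
    have hj : j < n + 1 := by omega
    have h0 := congrFun hval ⟨j, hj⟩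
    simp only [valMap, LinearMap.pi_apply] at h0
    have hv : (⟨j, hj⟩ : Fin (n+1)).val = j := rfl
    rw [if_neg (by omega : ¬ j = 0)] at h0
    rw [evalP_apply] at h0
    have hc : ∀ i : Fin 4, coef n v i j = v ⟨j, hj⟩ i := fun i => coef_eq n v i ⟨j, hj⟩
    rw [hc, hc, hc, hc]
    exact h0

lemma exists_coeffs (n : ℕ) (hn : 1 ≤ n) (r : ℕ → ℝ) (hpos : 0 < r 1)
    (hmono : ∀ j, 1 ≤ j → j < n → r j < r (j + 1)) (w : Fin (n+1) → ℂ) :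
    ∃ v : Mspace n, conMap n r v = 0 ∧ valMap n r v = w := by
  classical
  set S := LinearMap.ker (conMap n r) with hS
  -- injectivity of the evaluation on S
  have hker : ∀ v : Mspace n, conMap n r v = 0 → valMap n r v = 0 → v = 0 := by
    intro v hcon hval
    obtain ⟨hd0, han, hbn, hmatch⟩ := con_facts n hn r v hcon
    obtain ⟨hc0, hvals⟩ := val_facts n hn r v 0 hval
    have hvv : ∀ j, 1 ≤ j → j ≤ n →
        Pk (coef n v 0 j) (coef n v 1 j) (coef n v 2 j) (coef n v 3 j) (r j) = 0 := by
      intro j h1 h2; rw [hvals j h1 h2]; rfl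
    have hz := core n hn r hpos hmono (coef n v 0) (coef n v 1) (coef n v 2) (coef n v 3)
      hd0 han hbn (by simpa using hc0) hvv
      (fun j h1 h2 => by rw [(hmatch j h1 h2).1]; exact hvv j h1 h2)
      (fun j h1 h2 => (hmatch j h1 h2).2.1)
      (fun j h1 h2 => (hmatch j h1 h2).2.2)
    funext j i
    have hj := hz j.val (by omega)
    have e : ∀ i : Fin 4, coef n v i j.val = v j i := fun i => coef_eq n v i j
    simp only [Pi.zero_apply]
    rcases i with ⟨iv, hi⟩
    interval_cases iv
    · exact (e 0).symm.trans hj.1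
    · exact (e 1).symm.trans hj.2.1
    · exact (e 2).symm.trans hj.2.2.1
    · exact (e 3).symm.trans hj.2.2.2
  have hinj : Function.Injective ((valMap n r).domRestrict S) := by
    rw [← LinearMap.ker_eq_bot]
    rw [eq_bot_iff]
    intro s hs
    have h1 : valMap n r s.1 = 0 := hs
    have h2 : conMap n r s.1 = 0 := LinearMap.mem_ker.mp s.2
    have := hker s.1 h2 h1
    simpa [Submodule.mem_bot] using Subtype.ext this
  have hM : Module.finrank ℂ (Mspace n) = (n+1) * 4 := by
    simp [Module.finrank_pi_fintype, Module.finrank_pi, Finset.sum_const, Fintype.card_fin]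
  have hN : Module.finrank ℂ ((Fin n → ℂ × ℂ × ℂ) × (ℂ × ℂ × ℂ)) = 3*n+3 := by
    simp [Module.finrank_prod, Module.finrank_pi_fintype, Module.finrank_self,
      Finset.sum_const, Fintype.card_fin]
    ring
  have hrn := LinearMap.finrank_range_add_finrank_ker (conMap n r)
  have hrle : Module.finrank ℂ (LinearMap.range (conMap n r)) ≤ 3*n+3 :=
    hN ▸ Submodule.finrank_le _
  have hSrank : n + 1 ≤ Module.finrank ℂ S := by
    rw [hM] at hrn
    rw [hS]
    omega
  have hfinP : Module.finrank ℂ (Fin (n+1) → ℂ) = n+1 := by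
    simp [Module.finrank_pi, Fintype.card_fin]
  have hle : Module.finrank ℂ S ≤ n + 1 := by
    have := LinearMap.finrank_le_finrank_of_injective hinj
    rwa [hfinP] at this
  have heq : Module.finrank ℂ S = Module.finrank ℂ (Fin (n+1) → ℂ) := by
    rw [hfinP]; omega
  have hsurj := (LinearMap.injective_iff_surjective_of_finrank_eq_finrank heq).mp hinj
  obtain ⟨s, hs⟩ := hsurj w
  exact ⟨s.1, LinearMap.mem_ker.mp s.2, hs⟩



lemma Pk_d0 (a b c : ℂ) (x : ℝ) :
    Pk a b c 0 x = a * (x:ℂ)^2 + b*(x:ℂ)^2 * Lc x + c := by simp [Pk]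

lemma Pk_ab0 (c d : ℂ) (x : ℝ) : Pk 0 0 c d x = c + d * Lc x := by
  simp [Pk]

lemma Pk_sub (a b c d a' b' c' d' : ℂ) (x : ℝ) :
    Pk (a - a') (b - b') (c - c') (d - d') x = Pk a b c d x - Pk a' b' c' d' x := by
  simp [Pk]; ring

lemma Pk1_sub (a b d a' b' d' : ℂ) (x : ℝ) :
    Pk1 (a - a') (b - b') (d - d') x = Pk1 a b d x - Pk1 a' b' d' x := by
  simp [Pk1]; ring

lemma Pk2_sub (a b d a' b' d' : ℂ) (x : ℝ) :
    Pk2 (a - a') (b - b') (d - d') x = Pk2 a b d x - Pk2 a' b' d' x := by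
  simp [Pk2]; ring


lemma knot_le (n : ℕ) (r : ℕ → ℝ)
    (hmono : ∀ j, 1 ≤ j → j < n → r j < r (j + 1)) :
    ∀ i j, 1 ≤ i → i ≤ j → j ≤ n → r i ≤ r j := by
  intro i j h1 hij hn
  induction j with
  | zero => omega
  | succ k ih =>
    rcases Nat.eq_or_lt_of_le hij with he | hl
    · rw [he]
    · exact le_trans (ih (by omega) (by omega)) (hmono k (by omega) (by omega)).le

def idx (n : ℕ) (r : ℕ → ℝ) (x : ℝ) : ℕ :=
  ((Finset.range n).filter (fun k => r (k + 1) ≤ x)).card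

lemma idx_eq (n : ℕ) (r : ℕ → ℝ) (hn : 1 ≤ n)
    (hmono : ∀ j, 1 ≤ j → j < n → r j < r (j + 1))
    {x : ℝ} {j : ℕ} (hj : j ≤ n)
    (hL : 1 ≤ j → r j ≤ x) (hR : j < n → x < r (j + 1)) : idx n r x = j := by
  have hfil : (Finset.range n).filter (fun k => r (k + 1) ≤ x) = Finset.range j := by
    ext k
    simp only [Finset.mem_filter, Finset.mem_range]
    constructor
    · rintro ⟨hkn, hrk⟩
      by_contra hcon
      have hjk : j ≤ k := by omega
      have hjn : j < n := by omega
      have h1 : r (j + 1) ≤ r (k + 1) :=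
        knot_le n r hmono (j+1) (k+1) (by omega) (by omega) (by omega)
      have h2 := hR hjn
      linarith
    · intro hkj
      refine ⟨by omega, ?_⟩
      have h1 : r (k + 1) ≤ r j := knot_le n r hmono (k+1) j (by omega) (by omega) hj
      have h2 := hL (by omega)
      linarith
  rw [idx, hfil, Finset.card_range]

lemma eq_of_left {f g : ℝ → ℂ} {p x : ℝ} (hpx : p < x)
    (hf : ContinuousAt f x) (hg : ContinuousAt g x)
    (heq : ∀ y ∈ Ioo p x, f y = g y) : f x = g x := by
  have h1 : Tendsto f (nhdsWithin x (Iio x)) (nhds (f x)) :=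
    (hf.continuousWithinAt).tendsto
  have h2 : Tendsto f (nhdsWithin x (Iio x)) (nhds (g x)) := by
    refine Tendsto.congr' ?_ (hg.continuousWithinAt (s := Iio x)).tendsto
    filter_upwards [Ioo_mem_nhdsLT_of_mem (Set.mem_Ioc.mpr ⟨hpx, le_rfl⟩)] with y hy
    exact (heq y hy).symm
  exact tendsto_nhds_unique h1 h2

lemma eq_of_right {f g : ℝ → ℂ} {x q : ℝ} (hxq : x < q)
    (hf : ContinuousAt f x) (hg : ContinuousAt g x)
    (heq : ∀ y ∈ Ioo x q, f y = g y) : f x = g x := by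
  have h1 : Tendsto f (nhdsWithin x (Ioi x)) (nhds (f x)) :=
    (hf.continuousWithinAt).tendsto
  have h2 : Tendsto f (nhdsWithin x (Ioi x)) (nhds (g x)) := by
    refine Tendsto.congr' ?_ (hg.continuousWithinAt (s := Ioi x)).tendsto
    filter_upwards [Ioo_mem_nhdsGT_of_mem (Set.mem_Ico.mpr ⟨le_rfl, hxq⟩)] with y hy
    exact (heq y hy).symm
  exact tendsto_nhds_unique h1 h2

lemma glue_hasDerivAt {f g h : ℝ → ℂ} {x : ℝ} {D : ℂ}
    (hgd : HasDerivAt g D x) (hhd : HasDerivAt h D x)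
    (hfg : f =ᶠ[nhdsWithin x (Iio x)] g) (hgx : f x = g x)
    (hfh : f =ᶠ[nhdsWithin x (Ici x)] h) (hhx : f x = h x) : HasDerivAt f D x := by
  have h1 : HasDerivWithinAt f D (Iio x) x :=
    (hgd.hasDerivWithinAt).congr_of_eventuallyEq hfg hgx
  have h2 : HasDerivWithinAt f D (Ici x) x :=
    (hhd.hasDerivWithinAt).congr_of_eventuallyEq hfh hhx
  have h3 := h1.union h2
  rw [Set.Iio_union_Ici] at h3
  exact hasDerivWithinAt_univ.mp h3

lemma glue_continuousAt {f g h : ℝ → ℂ} {x : ℝ}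
    (hg : ContinuousAt g x) (hh : ContinuousAt h x)
    (hfg : f =ᶠ[nhdsWithin x (Iio x)] g) (hgx : f x = g x)
    (hfh : f =ᶠ[nhdsWithin x (Ici x)] h) (hhx : f x = h x) : ContinuousAt f x := by
  have h1 : ContinuousWithinAt f (Iio x) x :=
    (hg.continuousWithinAt).congr_of_eventuallyEq hfg hgx
  have h2 : ContinuousWithinAt f (Ici x) x :=
    (hh.continuousWithinAt).congr_of_eventuallyEq hfh hhx
  have h3 := h1.union h2
  rw [Set.Iio_union_Ici] at h3
  exact (continuousWithinAt_univ f x).mp h3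

lemma locate (n : ℕ) (hn : 1 ≤ n) (r : ℕ → ℝ)
    (hmono : ∀ j, 1 ≤ j → j < n → r j < r (j + 1)) {x : ℝ} :
    x < r 1 ∨ (∃ j, 1 ≤ j ∧ j ≤ n ∧ x = r j) ∨
      (∃ j, 1 ≤ j ∧ j < n ∧ r j < x ∧ x < r (j + 1)) ∨ r n < x := by
  classical
  by_cases h1 : x < r 1
  · exact Or.inl h1
  right
  set S := (Finset.range (n + 1)).filter (fun j => 1 ≤ j ∧ r j ≤ x) with hS
  have h1' : (1 : ℕ) ∈ S := by
    simp only [hS, Finset.mem_filter, Finset.mem_range]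
    exact ⟨by omega, le_rfl, le_of_not_gt h1⟩
  have hne : S.Nonempty := ⟨1, h1'⟩
  set k := S.max' hne with hkdef
  have hk : k ∈ S := S.max'_mem hne
  simp only [hS, Finset.mem_filter, Finset.mem_range] at hk
  obtain ⟨hkn, hk1, hkx⟩ := hk
  rcases eq_or_lt_of_le hkx with he | hl
  · exact Or.inl ⟨k, hk1, by omega, he.symm⟩
  by_cases hknn : k = n
  · right; right; rw [← hknn]; exact hl
  · right; left
    refine ⟨k, hk1, by omega, hl, ?_⟩
    by_contra hcon
    push_neg at hcon
    have hmem : k + 1 ∈ S := by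
      simp only [hS, Finset.mem_filter, Finset.mem_range]
      exact ⟨by omega, by omega, hcon⟩
    have := S.le_max' (k + 1) hmem
    omega

-- the piecewise spline
def spl (n : ℕ) (r : ℕ → ℝ) (A B C D : ℕ → ℂ) (x : ℝ) : ℂ :=
  Pk (A (idx n r x)) (B (idx n r x)) (C (idx n r x)) (D (idx n r x)) x

def spl1 (n : ℕ) (r : ℕ → ℝ) (A B D : ℕ → ℂ) (x : ℝ) : ℂ :=
  Pk1 (A (idx n r x)) (B (idx n r x)) (D (idx n r x)) x

def spl2 (n : ℕ) (r : ℕ → ℝ) (A B D : ℕ → ℂ) (x : ℝ) : ℂ :=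
  Pk2 (A (idx n r x)) (B (idx n r x)) (D (idx n r x)) x

section Spline

variable (n : ℕ) (r : ℕ → ℝ) (A B C D : ℕ → ℂ)
variable (hn : 1 ≤ n) (hpos : 0 < r 1)
  (hmono : ∀ j, 1 ≤ j → j < n → r j < r (j + 1))

include hn hmono in
lemma idx_zero {y : ℝ} (hy : y < r 1) : idx n r y = 0 :=
  idx_eq n r hn hmono (by omega) (by omega) (fun _ => hy)

include hn hmono in
lemma idx_mid {j : ℕ} (hj1 : 1 ≤ j) (hjn : j ≤ n) {y : ℝ} (hy : r j ≤ y)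
    (hy2 : j < n → y < r (j + 1)) : idx n r y = j :=
  idx_eq n r hn hmono hjn (fun _ => hy) hy2

include hn hpos hmono in
lemma rpos : ∀ j, 1 ≤ j → j ≤ n → 0 < r j := by
  intro j h1 h2
  exact lt_of_lt_of_le hpos (knot_le n r hmono 1 j le_rfl h1 h2)

-- eventual equality facts
include hn hmono in
lemma spl_eq_left : ∀ y ∈ Iio (r 1), spl n r A B C D y = Pk (A 0) (B 0) (C 0) (D 0) y :=
  fun y hy => by rw [spl, idx_zero n r hn hmono hy]

include hn hmono in
lemma spl_eq_mid {j : ℕ} (hj1 : 1 ≤ j) (hjn : j < n) :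
    ∀ y ∈ Ico (r j) (r (j+1)), spl n r A B C D y = Pk (A j) (B j) (C j) (D j) y :=
  fun y hy => by rw [spl, idx_mid n r hn hmono hj1 (by omega) hy.1 (fun _ => hy.2)]

include hn hmono in
lemma spl_eq_right : ∀ y ∈ Ici (r n), spl n r A B C D y = Pk (A n) (B n) (C n) (D n) y :=
  fun y hy => by rw [spl, idx_mid n r hn hmono hn le_rfl hy (by omega)]

include hn hmono in
lemma spl1_eq_left : ∀ y ∈ Iio (r 1), spl1 n r A B D y = Pk1 (A 0) (B 0) (D 0) y :=
  fun y hy => by rw [spl1, idx_zero n r hn hmono hy]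

include hn hmono in
lemma spl1_eq_mid {j : ℕ} (hj1 : 1 ≤ j) (hjn : j < n) :
    ∀ y ∈ Ico (r j) (r (j+1)), spl1 n r A B D y = Pk1 (A j) (B j) (D j) y :=
  fun y hy => by rw [spl1, idx_mid n r hn hmono hj1 (by omega) hy.1 (fun _ => hy.2)]

include hn hmono in
lemma spl1_eq_right : ∀ y ∈ Ici (r n), spl1 n r A B D y = Pk1 (A n) (B n) (D n) y :=
  fun y hy => by rw [spl1, idx_mid n r hn hmono hn le_rfl hy (by omega)]

include hn hmono in
lemma spl2_eq_left : ∀ y ∈ Iio (r 1), spl2 n r A B D y = Pk2 (A 0) (B 0) (D 0) y :=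
  fun y hy => by rw [spl2, idx_zero n r hn hmono hy]

include hn hmono in
lemma spl2_eq_mid {j : ℕ} (hj1 : 1 ≤ j) (hjn : j < n) :
    ∀ y ∈ Ico (r j) (r (j+1)), spl2 n r A B D y = Pk2 (A j) (B j) (D j) y :=
  fun y hy => by rw [spl2, idx_mid n r hn hmono hj1 (by omega) hy.1 (fun _ => hy.2)]

include hn hmono in
lemma spl2_eq_right : ∀ y ∈ Ici (r n), spl2 n r A B D y = Pk2 (A n) (B n) (D n) y :=
  fun y hy => by rw [spl2, idx_mid n r hn hmono hn le_rfl hy (by omega)]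

-- membership facts for one-sided filters at a knot r j, 1 ≤ j ≤ n
include hn hpos hmono in
lemma left_nhds_mem {j : ℕ} (hj1 : 1 ≤ j) (hjn : j ≤ n) :
    ∃ s ∈ nhdsWithin (r j) (Iio (r j)), s ⊆ {y | idx n r y = j - 1} ∧ s ⊆ Ioi (0:ℝ) := by
  rcases Nat.eq_or_lt_of_le hj1 with he | hl
  · subst he
    refine ⟨Ioo 0 (r 1), ?_, ?_, ?_⟩
    · exact Ioo_mem_nhdsLT_of_mem (Set.mem_Ioc.mpr ⟨hpos, le_rfl⟩)
    · intro y hy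
      have : idx n r y = 0 := idx_zero n r hn hmono hy.2
      simpa using this
    · exact fun y hy => hy.1
  · have hj2 : 2 ≤ j := hl
    have hlt : r (j-1) < r j := by
      have := hmono (j-1) (by omega) (by omega)
      rwa [Nat.sub_add_cancel hj1] at this
    refine ⟨Ioo (r (j-1)) (r j), Ioo_mem_nhdsLT_of_mem (Set.mem_Ioc.mpr ⟨hlt, le_rfl⟩), ?_, ?_⟩
    · intro y hy
      have : idx n r y = j - 1 := by
        apply idx_mid n r hn hmono (by omega) (by omega) hy.1.le
        intro _
        rw [Nat.sub_add_cancel hj1]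
        exact hy.2
      exact this
    · intro y hy
      exact lt_trans (rpos n r hn hpos hmono (j-1) (by omega) (by omega)) hy.1

include hn hpos hmono in
lemma right_nhds_mem {j : ℕ} (hj1 : 1 ≤ j) (hjn : j ≤ n) :
    ∃ s ∈ nhdsWithin (r j) (Ici (r j)), s ⊆ {y | idx n r y = j} := by
  rcases Nat.eq_or_lt_of_le hjn with he | hl
  · refine ⟨Ici (r n), by rw [he]; exact self_mem_nhdsWithin, ?_⟩
    intro y hy
    rw [← he] at hy
    exact idx_mid n r hn hmono hj1 hjn hy (by omega)
  · refine ⟨Ico (r j) (r (j+1)), Ico_mem_nhdsGE_of_mem (Set.mem_Ico.mpr ⟨le_rfl, hmono j hj1 hl⟩), ?_⟩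
    intro y hy
    exact idx_mid n r hn hmono hj1 hjn hy.1 (fun _ => hy.2)

-- HasDerivAt of the spline
include hn hpos hmono in
lemma spl_hasDerivAt
    (hm0 : ∀ j, 1 ≤ j → j ≤ n → Pk (A (j-1)) (B (j-1)) (C (j-1)) (D (j-1)) (r j)
        = Pk (A j) (B j) (C j) (D j) (r j))
    (hm1 : ∀ j, 1 ≤ j → j ≤ n → Pk1 (A (j-1)) (B (j-1)) (D (j-1)) (r j)
        = Pk1 (A j) (B j) (D j) (r j)) :
    ∀ x, 0 < x → HasDerivAt (spl n r A B C D) (spl1 n r A B D x) x := by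
  intro x hx
  rcases locate n hn r hmono (x := x) with h | ⟨j, hj1, hjn, hxe⟩ | ⟨j, hj1, hjn, hxl, hxr⟩ | h
  · have hEv : spl n r A B C D =ᶠ[nhds x] Pk (A 0) (B 0) (C 0) (D 0) :=
      eventually_of_mem (Iio_mem_nhds h) (spl_eq_left n r A B C D hn hmono)
    rw [hEv.hasDerivAt_iff, spl1, idx_zero n r hn hmono h]
    exact hasDerivAt_Pk hx _ _ _ _
  · subst hxe
    obtain ⟨sL, hsLmem, hsLidx, hsLpos⟩ := left_nhds_mem n r hn hpos hmono hj1 hjn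
    obtain ⟨sR, hsRmem, hsRidx⟩ := right_nhds_mem n r hn hpos hmono hj1 hjn
    have hidxj : idx n r (r j) = j :=
      idx_mid n r hn hmono hj1 hjn le_rfl (fun hlt => hmono j hj1 hlt)
    have hrjpos : 0 < r j := rpos n r hn hpos hmono j hj1 hjn
    apply glue_hasDerivAt (g := Pk (A (j-1)) (B (j-1)) (C (j-1)) (D (j-1)))
      (h := Pk (A j) (B j) (C j) (D j))
    · have h' := hasDerivAt_Pk hrjpos (A (j-1)) (B (j-1)) (C (j-1)) (D (j-1))
      rw [spl1, hidxj, ← hm1 j hj1 hjn]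
      exact h'
    · rw [spl1, hidxj]; exact hasDerivAt_Pk hrjpos _ _ _ _
    · exact eventually_of_mem hsLmem (fun y hy => by have h'' : idx n r y = j - 1 := hsLidx hy; simp only [spl, h''])
    · simp only [spl, hidxj]
      exact (hm0 j hj1 hjn).symm
    · exact eventually_of_mem hsRmem (fun y hy => by have h'' : idx n r y = j := hsRidx hy; simp only [spl, h''])
    · simp only [spl, hidxj]
  · have hIoo : Ioo (r j) (r (j+1)) ∈ nhds x := Ioo_mem_nhds hxl hxr
    have hEv : spl n r A B C D =ᶠ[nhds x] Pk (A j) (B j) (C j) (D j) :=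
      eventually_of_mem hIoo (fun y hy =>
        spl_eq_mid n r A B C D hn hmono hj1 hjn y ⟨hy.1.le, hy.2⟩)
    rw [hEv.hasDerivAt_iff, spl1,
      idx_mid n r hn hmono hj1 (by omega) hxl.le (fun _ => hxr)]
    exact hasDerivAt_Pk hx _ _ _ _
  · have hEv : spl n r A B C D =ᶠ[nhds x] Pk (A n) (B n) (C n) (D n) :=
      eventually_of_mem (Ioi_mem_nhds h) (fun y hy =>
        spl_eq_right n r A B C D hn hmono y (Set.mem_Ici.mpr (le_of_lt hy)))
    rw [hEv.hasDerivAt_iff, spl1, idx_mid n r hn hmono hn le_rfl h.le (by omega)]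
    exact hasDerivAt_Pk hx _ _ _ _

include hn hpos hmono in
lemma spl1_hasDerivAt
    (hm1 : ∀ j, 1 ≤ j → j ≤ n → Pk1 (A (j-1)) (B (j-1)) (D (j-1)) (r j)
        = Pk1 (A j) (B j) (D j) (r j))
    (hm2 : ∀ j, 1 ≤ j → j ≤ n → Pk2 (A (j-1)) (B (j-1)) (D (j-1)) (r j)
        = Pk2 (A j) (B j) (D j) (r j)) :
    ∀ x, 0 < x → HasDerivAt (spl1 n r A B D) (spl2 n r A B D x) x := by
  intro x hx
  rcases locate n hn r hmono (x := x) with h | ⟨j, hj1, hjn, hxe⟩ | ⟨j, hj1, hjn, hxl, hxr⟩ | h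
  · have hEv : spl1 n r A B D =ᶠ[nhds x] Pk1 (A 0) (B 0) (D 0) :=
      eventually_of_mem (Iio_mem_nhds h) (spl1_eq_left n r A B D hn hmono)
    rw [hEv.hasDerivAt_iff, spl2, idx_zero n r hn hmono h]
    exact hasDerivAt_Pk1 hx _ _ _
  · subst hxe
    obtain ⟨sL, hsLmem, hsLidx, hsLpos⟩ := left_nhds_mem n r hn hpos hmono hj1 hjn
    obtain ⟨sR, hsRmem, hsRidx⟩ := right_nhds_mem n r hn hpos hmono hj1 hjn
    have hidxj : idx n r (r j) = j :=
      idx_mid n r hn hmono hj1 hjn le_rfl (fun hlt => hmono j hj1 hlt)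
    have hrjpos : 0 < r j := rpos n r hn hpos hmono j hj1 hjn
    apply glue_hasDerivAt (g := Pk1 (A (j-1)) (B (j-1)) (D (j-1)))
      (h := Pk1 (A j) (B j) (D j))
    · have h' := hasDerivAt_Pk1 hrjpos (A (j-1)) (B (j-1)) (D (j-1))
      rw [spl2, hidxj, ← hm2 j hj1 hjn]
      exact h'
    · rw [spl2, hidxj]; exact hasDerivAt_Pk1 hrjpos _ _ _
    · exact eventually_of_mem hsLmem (fun y hy => by have h'' : idx n r y = j - 1 := hsLidx hy; simp only [spl1, h''])
    · simp only [spl1, hidxj]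
      exact (hm1 j hj1 hjn).symm
    · exact eventually_of_mem hsRmem (fun y hy => by have h'' : idx n r y = j := hsRidx hy; simp only [spl1, h''])
    · simp only [spl1, hidxj]
  · have hIoo : Ioo (r j) (r (j+1)) ∈ nhds x := Ioo_mem_nhds hxl hxr
    have hEv : spl1 n r A B D =ᶠ[nhds x] Pk1 (A j) (B j) (D j) :=
      eventually_of_mem hIoo (fun y hy =>
        spl1_eq_mid n r A B D hn hmono hj1 hjn y ⟨hy.1.le, hy.2⟩)
    rw [hEv.hasDerivAt_iff, spl2,
      idx_mid n r hn hmono hj1 (by omega) hxl.le (fun _ => hxr)]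
    exact hasDerivAt_Pk1 hx _ _ _
  · have hEv : spl1 n r A B D =ᶠ[nhds x] Pk1 (A n) (B n) (D n) :=
      eventually_of_mem (Ioi_mem_nhds h) (fun y hy =>
        spl1_eq_right n r A B D hn hmono y (Set.mem_Ici.mpr (le_of_lt hy)))
    rw [hEv.hasDerivAt_iff, spl2, idx_mid n r hn hmono hn le_rfl h.le (by omega)]
    exact hasDerivAt_Pk1 hx _ _ _

include hn hpos hmono in
lemma spl2_continuousOn
    (hm2 : ∀ j, 1 ≤ j → j ≤ n → Pk2 (A (j-1)) (B (j-1)) (D (j-1)) (r j)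
        = Pk2 (A j) (B j) (D j) (r j)) :
    ContinuousOn (spl2 n r A B D) (Ioi 0) := by
  intro x hxmem
  have hx : (0:ℝ) < x := hxmem
  apply ContinuousAt.continuousWithinAt
  rcases locate n hn r hmono (x := x) with h | ⟨j, hj1, hjn, hxe⟩ | ⟨j, hj1, hjn, hxl, hxr⟩ | h
  · have hEv : spl2 n r A B D =ᶠ[nhds x] Pk2 (A 0) (B 0) (D 0) :=
      eventually_of_mem (Iio_mem_nhds h) (spl2_eq_left n r A B D hn hmono)
    exact (continuousAt_Pk2 hx _ _ _).congr_of_eventuallyEq hEv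
  · subst hxe
    obtain ⟨sL, hsLmem, hsLidx, hsLpos⟩ := left_nhds_mem n r hn hpos hmono hj1 hjn
    obtain ⟨sR, hsRmem, hsRidx⟩ := right_nhds_mem n r hn hpos hmono hj1 hjn
    have hidxj : idx n r (r j) = j :=
      idx_mid n r hn hmono hj1 hjn le_rfl (fun hlt => hmono j hj1 hlt)
    have hrjpos : 0 < r j := rpos n r hn hpos hmono j hj1 hjn
    apply glue_continuousAt (g := Pk2 (A (j-1)) (B (j-1)) (D (j-1)))
      (h := Pk2 (A j) (B j) (D j))
    · exact continuousAt_Pk2 hrjpos _ _ _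
    · exact continuousAt_Pk2 hrjpos _ _ _
    · exact eventually_of_mem hsLmem (fun y hy => by have h'' : idx n r y = j - 1 := hsLidx hy; simp only [spl2, h''])
    · simp only [spl2, hidxj]
      exact (hm2 j hj1 hjn).symm
    · exact eventually_of_mem hsRmem (fun y hy => by have h'' : idx n r y = j := hsRidx hy; simp only [spl2, h''])
    · simp only [spl2, hidxj]
  · have hIoo : Ioo (r j) (r (j+1)) ∈ nhds x := Ioo_mem_nhds hxl hxr
    have hEv : spl2 n r A B D =ᶠ[nhds x] Pk2 (A j) (B j) (D j) :=
      eventually_of_mem hIoo (fun y hy =>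
        spl2_eq_mid n r A B D hn hmono hj1 hjn y ⟨hy.1.le, hy.2⟩)
    exact (continuousAt_Pk2 hx _ _ _).congr_of_eventuallyEq hEv
  · have hEv : spl2 n r A B D =ᶠ[nhds x] Pk2 (A n) (B n) (D n) :=
      eventually_of_mem (Ioi_mem_nhds h) (fun y hy =>
        spl2_eq_right n r A B D hn hmono y (Set.mem_Ici.mpr (le_of_lt hy)))
    exact (continuousAt_Pk2 hx _ _ _).congr_of_eventuallyEq hEv

include hn hpos hmono in
lemma spl_contDiffOn
    (hm0 : ∀ j, 1 ≤ j → j ≤ n → Pk (A (j-1)) (B (j-1)) (C (j-1)) (D (j-1)) (r j)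
        = Pk (A j) (B j) (C j) (D j) (r j))
    (hm1 : ∀ j, 1 ≤ j → j ≤ n → Pk1 (A (j-1)) (B (j-1)) (D (j-1)) (r j)
        = Pk1 (A j) (B j) (D j) (r j))
    (hm2 : ∀ j, 1 ≤ j → j ≤ n → Pk2 (A (j-1)) (B (j-1)) (D (j-1)) (r j)
        = Pk2 (A j) (B j) (D j) (r j)) :
    ContDiffOn ℝ 2 (spl n r A B C D) (Ioi 0) := by
  have h1 := spl_hasDerivAt n r A B C D hn hpos hmono hm0 hm1
  have h2 := spl1_hasDerivAt n r A B D hn hpos hmono hm1 hm2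
  have h3 := spl2_continuousOn n r A B D hn hpos hmono hm2
  have hd1 : ∀ x ∈ Ioi (0:ℝ), deriv (spl n r A B C D) x = spl1 n r A B D x :=
    fun x hx => (h1 x hx).deriv
  have hd2 : ∀ x ∈ Ioi (0:ℝ), deriv (spl1 n r A B D) x = spl2 n r A B D x :=
    fun x hx => (h2 x hx).deriv
  rw [show (2 : WithTop ℕ∞) = 1 + 1 from by norm_num,
    contDiffOn_succ_iff_deriv_of_isOpen isOpen_Ioi]
  refine ⟨fun x hx => ((h1 x hx).differentiableAt).differentiableWithinAt,
    fun h => by simp at h, ?_⟩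
  apply ContDiffOn.congr (f := spl1 n r A B D) ?_ hd1
  rw [show (1 : WithTop ℕ∞) = 0 + 1 from by norm_num,
    contDiffOn_succ_iff_deriv_of_isOpen isOpen_Ioi]
  refine ⟨fun x hx => ((h2 x hx).differentiableAt).differentiableWithinAt,
    fun h => by simp at h, ?_⟩
  apply ContDiffOn.congr (f := spl2 n r A B D) ?_ hd2
  exact contDiffOn_zero.mpr h3

end Spline

-- extraction lemmas for a C² function
lemma extract_derivs {f : ℝ → ℂ} (hf : ContDiffOn ℝ 2 f (Ioi (0:ℝ))) :
    (∀ x ∈ Ioi (0:ℝ), ContinuousAt f x) ∧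
      (∀ x ∈ Ioi (0:ℝ), ContinuousAt (deriv f) x) ∧
      (∀ x ∈ Ioi (0:ℝ), ContinuousAt (deriv (deriv f)) x) := by
  have hf1 : ContDiffOn ℝ 1 (deriv f) (Ioi (0:ℝ)) :=
    hf.deriv_of_isOpen isOpen_Ioi (by norm_num)
  refine ⟨?_, ?_, ?_⟩
  · exact fun x hx => hf.continuousOn.continuousAt (isOpen_Ioi.mem_nhds hx)
  · exact fun x hx => hf1.continuousOn.continuousAt (isOpen_Ioi.mem_nhds hx)
  · have hc := hf1.continuousOn_deriv_of_isOpen isOpen_Ioi le_rfl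
    exact fun x hx => hc.continuousAt (isOpen_Ioi.mem_nhds hx)

lemma match_at {f : ℝ → ℂ} {p x q : ℝ} (hp : 0 ≤ p) (hpx : p < x) (hxq : x < q)
    (hf : ContDiffOn ℝ 2 f (Ioi (0:ℝ)))
    {aL bL cL dL aR bR cR dR : ℂ}
    (hL : ∀ y ∈ Ioo p x, f y = Pk aL bL cL dL y)
    (hR : ∀ y ∈ Ioo x q, f y = Pk aR bR cR dR y) :
    Pk aL bL cL dL x = f x ∧ Pk aR bR cR dR x = f x ∧
      Pk1 aL bL dL x = Pk1 aR bR dR x ∧ Pk2 aL bL dL x = Pk2 aR bR dR x := by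
  have hx0 : 0 < x := lt_of_le_of_lt hp hpx
  obtain ⟨hc0, hc1, hc2⟩ := extract_derivs hf
  have hdL : ∀ y ∈ Ioo p x, deriv f y = Pk1 aL bL dL y := by
    intro y hy
    have hy0 : 0 < y := lt_of_le_of_lt hp hy.1
    have hEv : f =ᶠ[nhds y] Pk aL bL cL dL := eventually_of_mem (Ioo_mem_nhds hy.1 hy.2) hL
    rw [hEv.deriv_eq, (hasDerivAt_Pk hy0 _ _ _ _).deriv]
  have hdR : ∀ y ∈ Ioo x q, deriv f y = Pk1 aR bR dR y := by
    intro y hy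
    have hy0 : 0 < y := lt_trans hx0 hy.1
    have hEv : f =ᶠ[nhds y] Pk aR bR cR dR := eventually_of_mem (Ioo_mem_nhds hy.1 hy.2) hR
    rw [hEv.deriv_eq, (hasDerivAt_Pk hy0 _ _ _ _).deriv]
  have hd2L : ∀ y ∈ Ioo p x, deriv (deriv f) y = Pk2 aL bL dL y := by
    intro y hy
    have hy0 : 0 < y := lt_of_le_of_lt hp hy.1
    have hEv : deriv f =ᶠ[nhds y] Pk1 aL bL dL :=
      eventually_of_mem (Ioo_mem_nhds hy.1 hy.2) hdL
    rw [hEv.deriv_eq, (hasDerivAt_Pk1 hy0 _ _ _).deriv]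
  have hd2R : ∀ y ∈ Ioo x q, deriv (deriv f) y = Pk2 aR bR dR y := by
    intro y hy
    have hy0 : 0 < y := lt_trans hx0 hy.1
    have hEv : deriv f =ᶠ[nhds y] Pk1 aR bR dR :=
      eventually_of_mem (Ioo_mem_nhds hy.1 hy.2) hdR
    rw [hEv.deriv_eq, (hasDerivAt_Pk1 hy0 _ _ _).deriv]
  have v1 : f x = Pk aL bL cL dL x :=
    eq_of_left hpx (hc0 x hx0) (continuousAt_Pk hx0 _ _ _ _) hL
  have v2 : f x = Pk aR bR cR dR x :=
    eq_of_right hxq (hc0 x hx0) (continuousAt_Pk hx0 _ _ _ _) hR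
  have d1 : deriv f x = Pk1 aL bL dL x :=
    eq_of_left hpx (hc1 x hx0) (continuousAt_Pk1 hx0 _ _ _) hdL
  have d2 : deriv f x = Pk1 aR bR dR x :=
    eq_of_right hxq (hc1 x hx0) (continuousAt_Pk1 hx0 _ _ _) hdR
  have e1 : deriv (deriv f) x = Pk2 aL bL dL x :=
    eq_of_left hpx (hc2 x hx0) (continuousAt_Pk2 hx0 _ _ _) hd2L
  have e2 : deriv (deriv f) x = Pk2 aR bR dR x :=
    eq_of_right hxq (hc2 x hx0) (continuousAt_Pk2 hx0 _ _ _) hd2R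
  exact ⟨v1.symm, v2.symm, d1.symm.trans d2, e1.symm.trans e2⟩

lemma left_coeff_at_zero {f : ℝ → ℂ} {q : ℝ} (hq : 0 < q) {a b c α : ℂ}
    (hL : ∀ y ∈ Ioo (0:ℝ) q, f y = Pk a b c 0 y)
    (hcont : ContinuousWithinAt f (Ici 0) 0) (h0 : f 0 = α) : c = α := by
  have T1 : Tendsto f (nhdsWithin 0 (Ioi 0)) (nhds α) := by
    have h := hcont.tendsto
    rw [h0] at h
    exact h.mono_left (nhdsWithin_mono 0 Ioi_subset_Ici_self)
  have T2 : Tendsto f (nhdsWithin 0 (Ioi 0)) (nhds c) := by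
    have hPk : Tendsto (Pk a b c 0) (nhdsWithin 0 (Ioi 0)) (nhds c) := by
      have h := (tendsto_Pk_zero a b c).tendsto
      rw [Pk_at_zero] at h
      exact h.mono_left (nhdsWithin_mono 0 Ioi_subset_Ici_self)
    refine hPk.congr' ?_
    filter_upwards [Ioo_mem_nhdsGT_of_mem (Set.mem_Ico.mpr ⟨le_rfl, hq⟩)] with y hy
    exact (hL y hy).symm
  exact tendsto_nhds_unique T2 T1



end BLS

/-- existence and uniqueness of the Beppo Levi `L₀`-spline `σ^A`
interpolating `ν j` at the knots and `α` at `0`. -/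
theorem stmt3 (n : ℕ) (r : ℕ → ℝ) (hn : 1 ≤ n) (hpos : 0 < r 1)
    (hmono : ∀ j, 1 ≤ j → j < n → r j < r (j + 1))
    (α : ℝ) (ν : ℕ → ℝ) :
    ∃ σ : ℝ → ℂ,
      (IsBLSpline n r σ ∧ (∀ j, 1 ≤ j → j ≤ n → σ (r j) = (ν j : ℂ)) ∧ σ 0 = (α : ℂ)) ∧
      ∀ τ : ℝ → ℂ,
        (IsBLSpline n r τ ∧ (∀ j, 1 ≤ j → j ≤ n → τ (r j) = (ν j : ℂ)) ∧ τ 0 = (α : ℂ)) →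
        Set.EqOn τ σ (Set.Ici 0) := by
  classical
  set w : Fin (n+1) → ℂ := fun i => if (i : ℕ) = 0 then (α:ℂ) else (ν (i:ℕ) : ℂ) with hw
  obtain ⟨v, hcon, hval⟩ := BLS.exists_coeffs n hn r hpos hmono w
  obtain ⟨hd0, han, hbn, hmatch⟩ := BLS.con_facts n hn r v hcon
  obtain ⟨hc0, hvals⟩ := BLS.val_facts n hn r v w hval
  have hw0 : w 0 = (α:ℂ) := by simp [hw]
  have hc0' : BLS.coef n v 2 0 = (α:ℂ) := by rw [hc0, hw0]
  have hPkval : ∀ j, 1 ≤ j → j ≤ n →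
      BLS.Pk (BLS.coef n v 0 j) (BLS.coef n v 1 j) (BLS.coef n v 2 j) (BLS.coef n v 3 j) (r j)
        = (ν j : ℂ) := by
    intro j h1 h2
    rw [hvals j h1 h2]
    simp only [hw]
    split
    · next hcond =>
      exfalso
      have hj0 : j = 0 := hcond
      omega
    · rfl
  have hidxknot : ∀ j, 1 ≤ j → j ≤ n → BLS.idx n r (r j) = j :=
    fun j h1 h2 => BLS.idx_mid n r hn hmono h1 h2 le_rfl (fun hlt => hmono j h1 hlt)
  have hσknot : ∀ j, 1 ≤ j → j ≤ n →
      BLS.spl n r (BLS.coef n v 0) (BLS.coef n v 1) (BLS.coef n v 2) (BLS.coef n v 3) (r j)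
        = (ν j : ℂ) := by
    intro j h1 h2
    simp only [BLS.spl, hidxknot j h1 h2]
    exact hPkval j h1 h2
  have hidx0 : BLS.idx n r 0 = 0 := BLS.idx_zero n r hn hmono hpos
  have hσ0 : BLS.spl n r (BLS.coef n v 0) (BLS.coef n v 1) (BLS.coef n v 2) (BLS.coef n v 3) 0
      = (α:ℂ) := by
    simp only [BLS.spl, hidx0]
    rw [BLS.Pk_at_zero]
    exact hc0'
  refine ⟨BLS.spl n r (BLS.coef n v 0) (BLS.coef n v 1) (BLS.coef n v 2) (BLS.coef n v 3),
    ⟨⟨?_, ?_, ?_, ?_, ?_⟩, ?_, ?_⟩, ?_⟩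
  · -- pieces
    intro j hj1 hjn
    refine ⟨BLS.coef n v 0 j, BLS.coef n v 1 j, BLS.coef n v 2 j, BLS.coef n v 3 j,
      fun x hx => ?_⟩
    rw [BLS.spl_eq_mid n r _ _ _ _ hn hmono hj1 (by omega) x ⟨hx.1.le, hx.2⟩]
    rfl
  · -- left
    refine ⟨BLS.coef n v 0 0, BLS.coef n v 1 0, BLS.coef n v 2 0, fun x hx => ?_⟩
    rw [BLS.spl_eq_left n r _ _ _ _ hn hmono x hx.2, hd0, BLS.Pk_d0]
    rfl
  · -- right
    refine ⟨BLS.coef n v 2 n, BLS.coef n v 3 n, fun x hx => ?_⟩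
    rw [BLS.spl_eq_right n r _ _ _ _ hn hmono x (Set.mem_Ici.mpr (le_of_lt hx)), han, hbn, BLS.Pk_ab0]
    rfl
  · -- smooth
    exact BLS.spl_contDiffOn n r _ _ _ _ hn hpos hmono
      (fun j h1 h2 => (hmatch j h1 h2).1) (fun j h1 h2 => (hmatch j h1 h2).2.1)
      (fun j h1 h2 => (hmatch j h1 h2).2.2)
  · -- cont0
    have hEv : BLS.spl n r (BLS.coef n v 0) (BLS.coef n v 1) (BLS.coef n v 2) (BLS.coef n v 3)
        =ᶠ[nhdsWithin (0:ℝ) (Set.Ici 0)]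
          BLS.Pk (BLS.coef n v 0 0) (BLS.coef n v 1 0) (BLS.coef n v 2 0) 0 := by
      filter_upwards [Ico_mem_nhdsGE_of_mem (Set.mem_Ico.mpr ⟨le_rfl, hpos⟩)] with y hy
      rw [BLS.spl_eq_left n r _ _ _ _ hn hmono y hy.2, hd0]
    refine (BLS.tendsto_Pk_zero _ _ _).congr_of_eventuallyEq hEv ?_
    simp only [BLS.spl, hidx0]
    rw [BLS.Pk_at_zero, BLS.Pk_at_zero]
  · -- interpolation values
    exact fun j h1 h2 => hσknot j h1 h2
  · -- value at 0
    exact hσ0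
  · -- uniqueness
    rintro τ ⟨hsp, hτval, hτ0⟩
    obtain ⟨a0, b0, c0, hL⟩ := hsp.left
    obtain ⟨cn, dn, hR⟩ := hsp.right
    choose! aP bP cP dP hP using hsp.pieces
    set At : ℕ → ℂ := fun j => if j = 0 then a0 else if j = n then 0 else aP j with hAt
    set Bt : ℕ → ℂ := fun j => if j = 0 then b0 else if j = n then 0 else bP j with hBt
    set Ct : ℕ → ℂ := fun j => if j = 0 then c0 else if j = n then cn else cP j with hCt
    set Dt : ℕ → ℂ := fun j => if j = 0 then 0 else if j = n then dn else dP j with hDt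
    have hne0 : ¬ (n = 0) := by omega
    have eA0 : At 0 = a0 := by simp [hAt]
    have eB0 : Bt 0 = b0 := by simp [hBt]
    have eC0 : Ct 0 = c0 := by simp [hCt]
    have eD0 : Dt 0 = 0 := by simp [hDt]
    have eAn : At n = 0 := by simp [hAt, hne0]
    have eBn : Bt n = 0 := by simp [hBt, hne0]
    have eCn : Ct n = cn := by simp [hCt, hne0]
    have eDn : Dt n = dn := by simp [hDt, hne0]
    have eAm : ∀ j, 1 ≤ j → j < n → At j = aP j := by
      intro j h1 h2; simp only [hAt]; rw [if_neg (by omega), if_neg (by omega)]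
    have eBm : ∀ j, 1 ≤ j → j < n → Bt j = bP j := by
      intro j h1 h2; simp only [hBt]; rw [if_neg (by omega), if_neg (by omega)]
    have eCm : ∀ j, 1 ≤ j → j < n → Ct j = cP j := by
      intro j h1 h2; simp only [hCt]; rw [if_neg (by omega), if_neg (by omega)]
    have eDm : ∀ j, 1 ≤ j → j < n → Dt j = dP j := by
      intro j h1 h2; simp only [hDt]; rw [if_neg (by omega), if_neg (by omega)]
    have hEqL : ∀ y ∈ Set.Ioo (0:ℝ) (r 1), τ y = BLS.Pk (At 0) (Bt 0) (Ct 0) (Dt 0) y := by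
      intro y hy
      rw [hL y hy, eA0, eB0, eC0, eD0, BLS.Pk_d0]
      rfl
    have hEqR : ∀ y ∈ Set.Ioi (r n), τ y = BLS.Pk (At n) (Bt n) (Ct n) (Dt n) y := by
      intro y hy
      rw [hR y hy, eAn, eBn, eCn, eDn, BLS.Pk_ab0]
      rfl
    have hEqM : ∀ j, 1 ≤ j → j < n → ∀ y ∈ Set.Ioo (r j) (r (j+1)),
        τ y = BLS.Pk (At j) (Bt j) (Ct j) (Dt j) y := by
      intro j h1 h2 y hy
      rw [hP j h1 (by omega) y hy, eAm j h1 h2, eBm j h1 h2, eCm j h1 h2, eDm j h1 h2]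
      rfl
    have hτmatch : ∀ j, 1 ≤ j → j ≤ n →
        (BLS.Pk (At (j-1)) (Bt (j-1)) (Ct (j-1)) (Dt (j-1)) (r j) = τ (r j)) ∧
        (BLS.Pk (At j) (Bt j) (Ct j) (Dt j) (r j) = τ (r j)) ∧
        (BLS.Pk1 (At (j-1)) (Bt (j-1)) (Dt (j-1)) (r j)
          = BLS.Pk1 (At j) (Bt j) (Dt j) (r j)) ∧
        (BLS.Pk2 (At (j-1)) (Bt (j-1)) (Dt (j-1)) (r j)
          = BLS.Pk2 (At j) (Bt j) (Dt j) (r j)) := by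
      intro j h1 h2
      have hLdata : ∃ p, 0 ≤ p ∧ p < r j ∧ ∀ y ∈ Set.Ioo p (r j),
          τ y = BLS.Pk (At (j-1)) (Bt (j-1)) (Ct (j-1)) (Dt (j-1)) y := by
        rcases Nat.eq_or_lt_of_le h1 with he | hl
        · refine ⟨0, le_rfl, ?_, ?_⟩
          · rw [← he]; exact hpos
          · intro y hy
            rw [← he] at hy
            have := hEqL y hy
            rw [← he]
            exact this
        · refine ⟨r (j-1), (BLS.rpos n r hn hpos hmono (j-1) (by omega) (by omega)).le, ?_, ?_⟩
          · have := hmono (j-1) (by omega) (by omega)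
            rwa [Nat.sub_add_cancel h1] at this
          · intro y hy
            have hyy : y ∈ Set.Ioo (r (j-1)) (r (j-1+1)) := by
              rwa [Nat.sub_add_cancel h1]
            exact hEqM (j-1) (by omega) (by omega) y hyy
      have hRdata : ∃ q, r j < q ∧ ∀ y ∈ Set.Ioo (r j) q,
          τ y = BLS.Pk (At j) (Bt j) (Ct j) (Dt j) y := by
        rcases Nat.eq_or_lt_of_le h2 with he | hl
        · subst he
          exact ⟨r j + 1, by linarith, fun y hy => hEqR y hy.1⟩
        · exact ⟨r (j+1), hmono j h1 hl, fun y hy => hEqM j h1 hl y hy⟩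
      obtain ⟨p, hp0, hpj, hLd⟩ := hLdata
      obtain ⟨q, hqj, hRd⟩ := hRdata
      exact BLS.match_at hp0 hpj hqj hsp.smooth hLd hRd
    have hLz : ∀ y ∈ Set.Ioo (0:ℝ) (r 1), τ y = BLS.Pk (At 0) (Bt 0) (Ct 0) 0 y := by
      intro y hy
      have h' := hEqL y hy
      rwa [eD0] at h'
    have hCt0 : Ct 0 = (α:ℂ) := BLS.left_coeff_at_zero hpos hLz hsp.cont0 hτ0
    -- differences
    set Ad : ℕ → ℂ := fun j => At j - BLS.coef n v 0 j with hAd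
    set Bd : ℕ → ℂ := fun j => Bt j - BLS.coef n v 1 j with hBd
    set Cd : ℕ → ℂ := fun j => Ct j - BLS.coef n v 2 j with hCd
    set Dd : ℕ → ℂ := fun j => Dt j - BLS.coef n v 3 j with hDd
    have hz := BLS.core n hn r hpos hmono Ad Bd Cd Dd
      (by simp only [hDd]; rw [eD0, hd0]; ring)
      (by simp only [hAd]; rw [eAn, han]; ring)
      (by simp only [hBd]; rw [eBn, hbn]; ring)
      (by simp only [hCd]; rw [hCt0, hc0']; ring)
      (fun j h1 h2 => by
        simp only [hAd, hBd, hCd, hDd]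
        rw [BLS.Pk_sub, (hτmatch j h1 h2).2.1, hτval j h1 h2, hPkval j h1 h2]
        ring)
      (fun j h1 h2 => by
        simp only [hAd, hBd, hCd, hDd]
        rw [BLS.Pk_sub, (hτmatch j h1 h2).1, hτval j h1 h2, (hmatch j h1 h2).1,
          hPkval j h1 h2]
        ring)
      (fun j h1 h2 => by
        simp only [hAd, hBd, hDd]
        rw [BLS.Pk1_sub, BLS.Pk1_sub, (hτmatch j h1 h2).2.2.1, (hmatch j h1 h2).2.1])
      (fun j h1 h2 => by
        simp only [hAd, hBd, hDd]
        rw [BLS.Pk2_sub, BLS.Pk2_sub, (hτmatch j h1 h2).2.2.2, (hmatch j h1 h2).2.2])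
    have hAe : ∀ j, j ≤ n → At j = BLS.coef n v 0 j := by
      intro j hj
      have := (hz j hj).1
      simp only [hAd] at this
      exact sub_eq_zero.mp this
    have hBe : ∀ j, j ≤ n → Bt j = BLS.coef n v 1 j := by
      intro j hj
      have := (hz j hj).2.1
      simp only [hBd] at this
      exact sub_eq_zero.mp this
    have hCe : ∀ j, j ≤ n → Ct j = BLS.coef n v 2 j := by
      intro j hj
      have := (hz j hj).2.2.1
      simp only [hCd] at this
      exact sub_eq_zero.mp this
    have hDe : ∀ j, j ≤ n → Dt j = BLS.coef n v 3 j := by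
      intro j hj
      have := (hz j hj).2.2.2
      simp only [hDd] at this
      exact sub_eq_zero.mp this
    intro x hx
    have hx' : (0:ℝ) ≤ x := hx
    rcases eq_or_lt_of_le hx' with he | hxpos
    · rw [← he, hτ0, hσ0]
    · rcases BLS.locate n hn r hmono (x := x) with h | ⟨j, hj1, hjn, hxe⟩ |
        ⟨j, hj1, hjn, hxl, hxr⟩ | h
      · rw [hEqL x ⟨hxpos, h⟩, BLS.spl_eq_left n r _ _ _ _ hn hmono x h,
          hAe 0 (by omega), hBe 0 (by omega), hCe 0 (by omega), hDe 0 (by omega)]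
      · subst hxe
        rw [hτval j hj1 hjn, hσknot j hj1 hjn]
      · rw [hEqM j hj1 hjn x ⟨hxl, hxr⟩,
          BLS.spl_eq_mid n r _ _ _ _ hn hmono hj1 hjn x ⟨hxl.le, hxr⟩,
          hAe j (by omega), hBe j (by omega), hCe j (by omega), hDe j (by omega)]
      · rw [hEqR x h, BLS.spl_eq_right n r _ _ _ _ hn hmono x h.le,
          hAe n le_rfl, hBe n le_rfl, hCe n le_rfl, hDe n le_rfl]
end
end

section
/- Let ρ = {r₁ < … < r_n} be positive knots and let ν₁, …, ν_n be arbitrary real values. Then there exists a unique non-singular Beppo Levi L₀-spline σ^B ∈ S₀(ρ) such that σ^B(r_j) = ν_j for all j ∈ {1,…,n}. -/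
open MeasureTheory Set Filter

noncomputable section

namespace BLaux
open Complex Topology

def Pf (a b c d : ℂ) (x : ℝ) : ℂ :=
  a * (x : ℂ) ^ 2 + b * (x : ℂ) ^ 2 * (Real.log x : ℂ) + c + d * (Real.log x : ℂ)
def P1f (a b c d : ℂ) (x : ℝ) : ℂ :=
  2 * a * (x : ℂ) + b * (2 * (x : ℂ) * (Real.log x : ℂ) + (x : ℂ)) + d * ((x : ℂ))⁻¹
def P2f (a b c d : ℂ) (x : ℝ) : ℂ :=
  2 * a + b * (2 * (Real.log x : ℂ) + 3) - d * (((x : ℂ)) ^ 2)⁻¹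
def gf (a b : ℂ) (x : ℝ) : ℂ := (4 * a + 4 * b) + 4 * b * (Real.log x : ℂ)
def Ff (a b c d : ℂ) (x : ℝ) : ℂ :=
  (x : ℂ) * P1f a b c d x * (starRingEnd ℂ) (gf a b x) - (starRingEnd ℂ) (4 * b) * Pf a b c d x
def wfn (a b : ℂ) (x : ℝ) : ℝ := x * ‖gf a b x‖ ^ 2

lemma hasDerivAt_X (x : ℝ) : HasDerivAt (fun y : ℝ => (y : ℂ)) 1 x := by
  simpa using (hasDerivAt_id x).ofReal_comp

lemma hasDerivAt_Xsq (x : ℝ) : HasDerivAt (fun y : ℝ => ((y:ℂ))^2) (2*(x:ℂ)) x := by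
  have h := (hasDerivAt_X x).mul (hasDerivAt_X x)
  have e : (1:ℂ) * x + x * 1 = 2 * x := by ring
  rw [e] at h
  exact ((hasDerivAt_X x).pow 2).congr_deriv (by norm_num)

lemma hasDerivAt_L {x : ℝ} (hx : x ≠ 0) :
    HasDerivAt (fun y : ℝ => ((Real.log y : ℝ) : ℂ)) (((x : ℂ))⁻¹) x := by
  simpa [Complex.ofReal_inv] using (Real.hasDerivAt_log hx).ofReal_comp

lemma hasDerivAt_Xinv {x : ℝ} (hx : x ≠ 0) :
    HasDerivAt (fun y : ℝ => ((y:ℂ))⁻¹) (-(((x : ℂ))^2)⁻¹) x := by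
  have h := (hasDerivAt_inv hx).ofReal_comp
  simp only [Complex.ofReal_inv, Complex.ofReal_neg, Complex.ofReal_pow] at h
  exact h

lemma hasDerivAt_Pf (a b c d : ℂ) {x : ℝ} (hx : 0 < x) :
    HasDerivAt (Pf a b c d) (P1f a b c d x) x := by
  have hL := hasDerivAt_L hx.ne'
  have hx0 : (x : ℂ) ≠ 0 := Complex.ofReal_ne_zero.mpr hx.ne'
  have h1 : HasDerivAt (fun y : ℝ => a * (y:ℂ)^2) (a * (2*(x:ℂ))) x :=
    (hasDerivAt_Xsq x).const_mul a
  have h2 : HasDerivAt (fun y : ℝ => b * (y:ℂ)^2 * (Real.log y : ℂ))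
      ((b * (2*(x:ℂ))) * (Real.log x : ℂ) + (b * (x:ℂ)^2) * ((x:ℂ))⁻¹) x :=
    ((hasDerivAt_Xsq x).const_mul b).mul hL
  have h3 : HasDerivAt (fun y : ℝ => d * (Real.log y : ℂ)) (d * ((x:ℂ))⁻¹) x := hL.const_mul d
  have heq : a * (2*(x:ℂ)) + ((b * (2*(x:ℂ))) * (Real.log x : ℂ)
      + (b * (x:ℂ)^2) * ((x:ℂ))⁻¹) + d * ((x:ℂ))⁻¹ = P1f a b c d x := by
    simp only [P1f]
    field_simp
  rw [← heq]
  exact ((h1.add h2).add_const c).add h3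

lemma hasDerivAt_P1f (a b c d : ℂ) {x : ℝ} (hx : 0 < x) :
    HasDerivAt (P1f a b c d) (P2f a b c d x) x := by
  have hX := hasDerivAt_X x
  have hL := hasDerivAt_L hx.ne'
  have hx0 : (x : ℂ) ≠ 0 := Complex.ofReal_ne_zero.mpr hx.ne'
  have h1 : HasDerivAt (fun y : ℝ => 2 * a * (y:ℂ)) (2 * a * 1) x := hX.const_mul (2*a)
  have h2 : HasDerivAt (fun y : ℝ => b * (2 * (y:ℂ) * (Real.log y : ℂ) + (y:ℂ)))
      (b * (((2 * 1) * (Real.log x : ℂ) + (2 * (x:ℂ)) * ((x:ℂ))⁻¹) + 1)) x :=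
    (((hX.const_mul 2).mul hL).add hX).const_mul b
  have h3 : HasDerivAt (fun y : ℝ => d * ((y:ℂ))⁻¹) (d * (-(((x : ℂ))^2)⁻¹)) x :=
    (hasDerivAt_Xinv hx.ne').const_mul d
  have heq : 2 * a * 1 + (b * (((2 * 1) * (Real.log x : ℂ) + (2 * (x:ℂ)) * ((x:ℂ))⁻¹) + 1))
      + d * (-(((x : ℂ))^2)⁻¹) = P2f a b c d x := by
    simp only [P2f]
    field_simp
    ring
  rw [← heq]
  exact (h1.add h2).add h3

lemma hasDerivAt_gbar (a b : ℂ) {x : ℝ} (hx : 0 < x) :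
    HasDerivAt (fun y => (starRingEnd ℂ) (gf a b y)) ((starRingEnd ℂ) (4 * b) * ((x : ℂ))⁻¹) x := by
  have hL := hasDerivAt_L hx.ne'
  have h := (hL.const_mul ((starRingEnd ℂ) (4 * b))).const_add ((starRingEnd ℂ) (4 * a + 4 * b))
  have e : (fun y : ℝ => (starRingEnd ℂ) (4 * a + 4 * b) + (starRingEnd ℂ) (4 * b) * ((Real.log y : ℝ) : ℂ))
      = fun y => (starRingEnd ℂ) (gf a b y) := by
    funext y
    simp [gf, map_add, map_mul, Complex.conj_ofReal]
  rw [e] at h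
  exact h

lemma P1_plus_XP2 (a b c d : ℂ) {x : ℝ} (hx : 0 < x) :
    P1f a b c d x + (x : ℂ) * P2f a b c d x = (x : ℂ) * gf a b x := by
  have hx0 : (x : ℂ) ≠ 0 := Complex.ofReal_ne_zero.mpr hx.ne'
  simp only [P1f, P2f, gf]
  field_simp
  ring

lemma ofReal_wfn (a b : ℂ) (x : ℝ) :
    ((wfn a b x : ℝ) : ℂ) = (x : ℂ) * gf a b x * (starRingEnd ℂ) (gf a b x) := by
  rw [mul_assoc, Complex.mul_conj]
  simp only [wfn, Complex.normSq_eq_norm_sq]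
  push_cast
  ring

lemma hasDerivAt_Ff (a b c d : ℂ) {x : ℝ} (hx : 0 < x) :
    HasDerivAt (Ff a b c d) (((wfn a b x : ℝ) : ℂ)) x := by
  have hX := hasDerivAt_X x
  have hx0 : (x : ℂ) ≠ 0 := Complex.ofReal_ne_zero.mpr hx.ne'
  have h := (((hX.mul (hasDerivAt_P1f a b c d hx)).mul (hasDerivAt_gbar a b hx)).sub
    ((hasDerivAt_Pf a b c d hx).const_mul ((starRingEnd ℂ) (4 * b))))
  have e : (1 * P1f a b c d x + (x:ℂ) * P2f a b c d x) * (starRingEnd ℂ) (gf a b x)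
      + (x:ℂ) * P1f a b c d x * ((starRingEnd ℂ) (4*b) * ((x:ℂ))⁻¹)
      - (starRingEnd ℂ) (4*b) * P1f a b c d x = ((wfn a b x : ℝ) : ℂ) := by
    rw [ofReal_wfn, one_mul, P1_plus_XP2 a b c d hx]
    field_simp
    ring
  rw [← e]
  exact h


-- continuity lemmas
lemma continuousAt_ofRealLog {x : ℝ} (hx : x ≠ 0) :
    ContinuousAt (fun y : ℝ => ((Real.log y : ℝ) : ℂ)) x :=
  Complex.continuous_ofReal.continuousAt.comp (Real.continuousAt_log hx)

lemma continuousAt_Pf (a b c d : ℂ) {x : ℝ} (hx : x ≠ 0) : ContinuousAt (Pf a b c d) x := by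
  have hl := continuousAt_ofRealLog hx
  have hX : ContinuousAt (fun y : ℝ => (y : ℂ)) x := Complex.continuous_ofReal.continuousAt
  exact (((continuousAt_const.mul (hX.pow 2)).add
    ((continuousAt_const.mul (hX.pow 2)).mul hl)).add continuousAt_const).add
    (continuousAt_const.mul hl)

lemma continuousAt_P1f (a b c d : ℂ) {x : ℝ} (hx : x ≠ 0) : ContinuousAt (P1f a b c d) x := by
  have hl := continuousAt_ofRealLog hx
  have hX : ContinuousAt (fun y : ℝ => (y : ℂ)) x := Complex.continuous_ofReal.continuousAt
  have hx0 : (x : ℂ) ≠ 0 := Complex.ofReal_ne_zero.mpr hx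
  exact ((continuousAt_const.mul hX).add
    (continuousAt_const.mul (((continuousAt_const.mul hX).mul hl).add hX))).add
    (continuousAt_const.mul (hX.inv₀ hx0))

lemma continuousAt_P2f (a b c d : ℂ) {x : ℝ} (hx : x ≠ 0) : ContinuousAt (P2f a b c d) x := by
  have hl := continuousAt_ofRealLog hx
  have hX : ContinuousAt (fun y : ℝ => (y : ℂ)) x := Complex.continuous_ofReal.continuousAt
  have hx0 : ((x : ℂ))^2 ≠ 0 := pow_ne_zero _ (Complex.ofReal_ne_zero.mpr hx)
  exact (continuousAt_const.add
    (continuousAt_const.mul ((continuousAt_const.mul hl).add continuousAt_const))).sub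
    (continuousAt_const.mul ((hX.pow 2).inv₀ hx0))

lemma continuousAt_gf (a b : ℂ) {x : ℝ} (hx : x ≠ 0) : ContinuousAt (gf a b) x :=
  continuousAt_const.add (continuousAt_const.mul (continuousAt_ofRealLog hx))

lemma continuousAt_wfn (a b : ℂ) {x : ℝ} (hx : x ≠ 0) : ContinuousAt (wfn a b) x :=
  continuousAt_id.mul (((continuousAt_gf a b hx).norm).pow 2)

-- FTC on a positive interval
lemma integral_wfn {a b c d : ℂ} {α β : ℝ} (hα : 0 < α) (hαβ : α ≤ β) :
    ((∫ x in α..β, wfn a b x : ℝ) : ℂ) = Ff a b c d β - Ff a b c d α := by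
  rw [← intervalIntegral.integral_ofReal]
  apply intervalIntegral.integral_eq_sub_of_hasDerivAt
  · intro x hx
    rw [uIcc_of_le hαβ] at hx
    exact hasDerivAt_Ff a b c d (lt_of_lt_of_le hα hx.1)
  · apply ContinuousOn.intervalIntegrable
    intro x hx
    rw [uIcc_of_le hαβ] at hx
    exact (Complex.continuous_ofReal.continuousAt.comp
      (continuousAt_wfn a b (lt_of_lt_of_le hα hx.1).ne')).continuousWithinAt

lemma Ff_of_b0d0 (a c : ℂ) : Ff a 0 c 0 = fun x : ℝ => 8 * (a * (starRingEnd ℂ) a) * (x:ℂ)^2 := by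
  funext x
  simp [Ff, P1f, Pf, gf, map_mul, map_ofNat]
  ring

lemma wfn_of_b0 (a : ℂ) (x : ℝ) : wfn a 0 x = 16 * ‖a‖^2 * x := by
  have : gf a 0 x = 4 * a := by simp [gf]
  simp [wfn, this]
  ring

lemma integral_wfn0 {a c : ℂ} {β : ℝ} (hβ : 0 ≤ β) :
    ((∫ x in (0:ℝ)..β, wfn a 0 x : ℝ) : ℂ) = Ff a 0 c 0 β - Ff a 0 c 0 0 := by
  rw [← intervalIntegral.integral_ofReal]
  apply intervalIntegral.integral_eq_sub_of_hasDerivAt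
  · intro x hx
    have h : HasDerivAt (fun y : ℝ => 8 * (a * (starRingEnd ℂ) a) * (y:ℂ)^2)
        (8 * (a * (starRingEnd ℂ) a) * (2*(x:ℂ))) x := by
      have hsq : HasDerivAt (fun y : ℝ => ((y:ℂ))^2) (2*(x:ℂ)) x := by
        have h0 : HasDerivAt (fun y : ℝ => (y : ℂ)) 1 x := by
          simpa using (hasDerivAt_id x).ofReal_comp
        have h := h0.mul h0
        have e : (1:ℂ) * x + x * 1 = 2 * x := by ring
        rw [e] at h
        exact (h0.pow 2).congr_deriv (by norm_num)
      exact hsq.const_mul _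
    rw [← Ff_of_b0d0] at h
    refine h.congr_deriv ?_
    rw [wfn_of_b0]
    rw [show (a * (starRingEnd ℂ) a) = ((‖a‖^2 : ℝ) : ℂ) by
      rw [Complex.mul_conj]; simp [Complex.normSq_eq_norm_sq]]
    push_cast
    ring
  · apply ContinuousOn.intervalIntegrable
    apply Continuous.continuousOn
    have : Continuous fun x : ℝ => ((16 * ‖a‖^2 * x : ℝ) : ℂ) := by continuity
    convert this using 2 with x
    rw [wfn_of_b0]

lemma Azero0 {a : ℂ} {β : ℝ} (hβ : 0 < β) (h : ∫ x in (0:ℝ)..β, wfn a 0 x = 0) : a = 0 := by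
  have : ∫ x in (0:ℝ)..β, wfn a 0 x = 16 * ‖a‖^2 * (β^2/2) := by
    simp only [wfn_of_b0]
    rw [intervalIntegral.integral_const_mul, integral_id]
    norm_num
  rw [this] at h
  have hnorm : ‖a‖ = 0 := by
    by_contra hne
    have h2 : 0 < ‖a‖ := lt_of_le_of_ne (norm_nonneg a) (Ne.symm hne)
    have h3 : 0 < 16 * ‖a‖^2 * (β^2/2) := by
      have h4 := pow_pos h2 2
      have h5 := pow_pos hβ 2
      nlinarith
    linarith
  exact norm_eq_zero.mp hnorm


/-- zero integral of `wfn` on a positive interval forces both coefficients zero -/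
lemma ABzero {a b : ℂ} {α β : ℝ} (hα : 0 < α) (hαβ : α < β)
    (h : ∫ x in α..β, wfn a b x = 0) : a = 0 ∧ b = 0 := by
  have hcont : ContinuousOn (wfn a b) (Icc α β) := fun x hx =>
    (continuousAt_wfn a b (lt_of_lt_of_le hα hx.1).ne').continuousWithinAt
  have hInt : IntegrableOn (wfn a b) (Ioo α β) volume :=
    (hcont.integrableOn_Icc).mono_set Ioo_subset_Icc_self
  have h0 : ∫ x in Ioo α β, wfn a b x = 0 := by
    rw [intervalIntegral.integral_of_le hαβ.le, MeasureTheory.integral_Ioc_eq_integral_Ioo] at h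
    exact h
  have hnn : 0 ≤ᵐ[volume.restrict (Ioo α β)] wfn a b := by
    filter_upwards [MeasureTheory.ae_restrict_mem measurableSet_Ioo] with x hx
    have hx0 : (0:ℝ) ≤ x := (lt_trans hα hx.1).le
    have h2 : (0:ℝ) ≤ ‖gf a b x‖^2 := sq_nonneg _
    exact mul_nonneg hx0 h2
  have hae : wfn a b =ᵐ[volume.restrict (Ioo α β)] 0 :=
    (MeasureTheory.integral_eq_zero_iff_of_nonneg_ae hnn hInt).mp h0
  have hae2 : ∀ᵐ x : ℝ, x ∈ Ioo α β → wfn a b x = 0 :=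
    (MeasureTheory.ae_restrict_iff' measurableSet_Ioo).mp hae
  set T : Set ℝ := {t | t ∈ Ioo α β ∧ gf a b t = 0} with hT
  have hTn : T.Nontrivial := by
    by_contra hns
    have hsub : T.Subsingleton := Set.not_nontrivial_iff.mp hns
    have hzT : volume T = 0 := hsub.measure_zero volume
    have hzN : volume {x : ℝ | ¬ (x ∈ Ioo α β → wfn a b x = 0)} = 0 := (MeasureTheory.ae_iff (μ := volume)).mp hae2
    have hcover : Ioo α β ⊆ T ∪ {x : ℝ | ¬ (x ∈ Ioo α β → wfn a b x = 0)} := by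
      intro t ht
      by_cases hc : wfn a b t = 0
      · left
        refine ⟨ht, ?_⟩
        have ht0 : t ≠ 0 := (lt_trans hα ht.1).ne'
        have : t * ‖gf a b t‖^2 = 0 := hc
        rcases mul_eq_zero.mp this with h' | h'
        · exact absurd h' ht0
        · exact norm_eq_zero.mp (pow_eq_zero_iff (two_ne_zero) |>.mp h')
      · right
        exact fun h' => hc (h' ht)
    have : volume (Ioo α β) = 0 := by
      have := (measure_mono hcover).trans (measure_union_le (μ := volume) _ _)
      rw [hzT, hzN] at this
      simpa using this
    rw [Real.volume_Ioo] at this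
    exact absurd this (by simp [ENNReal.ofReal_eq_zero]; linarith)
  obtain ⟨x, hx, y, hy, hxy⟩ := hTn
  have hgx : gf a b x = 0 := hx.2
  have hgy : gf a b y = 0 := hy.2
  have hxpos : 0 < x := lt_trans hα hx.1.1
  have hypos : 0 < y := lt_trans hα hy.1.1
  have hlog : Real.log x ≠ Real.log y := fun hc =>
    hxy (Real.log_injOn_pos (mem_Ioi.mpr hxpos) (mem_Ioi.mpr hypos) hc)
  have hb : b = 0 := by
    have hsub : 4 * b * ((Real.log x : ℂ) - (Real.log y : ℂ)) = 0 := by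
      have := sub_eq_zero.mpr (hgx.trans hgy.symm)
      simp only [gf] at this
      ring_nf at this ⊢
      linear_combination this
    rcases mul_eq_zero.mp hsub with h' | h'
    · rcases mul_eq_zero.mp h' with h'' | h''
      · norm_num at h''
      · exact h''
    · exfalso
      apply hlog
      have := sub_eq_zero.mp h'
      exact_mod_cast this
  have ha : a = 0 := by
    have := hgx
    rw [gf, hb] at this
    simpa using this
  exact ⟨ha, hb⟩

lemma gf_eq_P (a b c d : ℂ) {x : ℝ} (hx : 0 < x) :
    gf a b x = P2f a b c d x + P1f a b c d x * ((x:ℂ))⁻¹ := by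
  have hx0 : (x : ℂ) ≠ 0 := Complex.ofReal_ne_zero.mpr hx.ne'
  simp only [P1f, P2f, gf]
  field_simp
  ring

/-- If two coefficient quadruples have matching first and second derivatives at `x` and both
vanish there, the energy antiderivatives agree at `x`. -/
lemma Ff_match {x : ℝ} (hx : 0 < x) {a b c d a' b' c' d' : ℂ}
    (h1 : P1f a b c d x = P1f a' b' c' d' x) (h2 : P2f a b c d x = P2f a' b' c' d' x)
    (hp : Pf a b c d x = 0) (hp' : Pf a' b' c' d' x = 0) :
    Ff a b c d x = Ff a' b' c' d' x := by
  have hg : gf a b x = gf a' b' x := by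
    rw [gf_eq_P a b c d hx, gf_eq_P a' b' c' d' hx, h1, h2]
  rw [Ff, Ff, hp, hp', h1, hg, mul_zero, mul_zero]

lemma Ff_at_zero {a b c d : ℂ} (hb : b = 0) : Ff a b c d 0 = 0 := by
  simp [Ff, hb]

lemma Ff_top {a b c d : ℂ} (ha : a = 0) (hb : b = 0) (x : ℝ) : Ff a b c d x = 0 := by
  simp [Ff, gf, ha, hb]


def knot (r : ℕ → ℝ) (j : ℕ) : ℝ := if j = 0 then 0 else r j

section Knots
variable {n : ℕ} {r : ℕ → ℝ}

lemma rpos (hpos : 0 < r 1) (hmono : ∀ j, 1 ≤ j → j < n → r j < r (j+1)) :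
    ∀ j, 1 ≤ j → j ≤ n → 0 < r j := by
  intro j h1 h2
  induction j with
  | zero => omega
  | succ k ih =>
    rcases Nat.lt_or_ge k 1 with hk | hk
    · have : k = 0 := by omega
      subst this; exact hpos
    · exact lt_trans (ih hk (by omega)) (hmono k hk (by omega))

lemma rmono_le (hpos : 0 < r 1) (hmono : ∀ j, 1 ≤ j → j < n → r j < r (j+1)) :
    ∀ i j, 1 ≤ i → i ≤ j → j ≤ n → r i ≤ r j := by
  intro i j h1 hij hj
  induction j with
  | zero => omega
  | succ k ih =>
    rcases Nat.lt_or_ge k i with hk | hk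
    · have : i = k + 1 := by omega
      subst this; rfl
    · exact le_trans (ih (by omega) (by omega)) (le_of_lt (hmono k (by omega) (by omega)))

lemma knot_lt (hpos : 0 < r 1) (hmono : ∀ j, 1 ≤ j → j < n → r j < r (j+1)) :
    ∀ j, j < n → knot r j < knot r (j+1) := by
  intro j hj
  rcases Nat.eq_zero_or_pos j with h0 | h1
  · subst h0; simpa [knot] using hpos
  · have : j ≠ 0 := by omega
    simp only [knot, if_neg this, if_neg (Nat.succ_ne_zero j)]
    exact hmono j h1 hj

lemma knot_nonneg (hpos : 0 < r 1) (hmono : ∀ j, 1 ≤ j → j < n → r j < r (j+1)) :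
    ∀ j, j ≤ n → 0 ≤ knot r j := by
  intro j hj
  rcases Nat.eq_zero_or_pos j with h0 | h1
  · subst h0; simp [knot]
  · have : j ≠ 0 := by omega
    simp only [knot, if_neg this]
    exact (rpos hpos hmono j h1 hj).le

end Knots

theorem kernel_zero {n : ℕ} {r : ℕ → ℝ} (hn : 1 ≤ n) (hpos : 0 < r 1)
    (hmono : ∀ j, 1 ≤ j → j < n → r j < r (j+1))
    (A B C D : ℕ → ℂ) (hB0 : B 0 = 0) (hD0 : D 0 = 0) (hAn : A n = 0) (hBn : B n = 0)
    (hm0 : ∀ j, j < n → Pf (A j) (B j) (C j) (D j) (r (j+1))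
      = Pf (A (j+1)) (B (j+1)) (C (j+1)) (D (j+1)) (r (j+1)))
    (hm1 : ∀ j, j < n → P1f (A j) (B j) (C j) (D j) (r (j+1))
      = P1f (A (j+1)) (B (j+1)) (C (j+1)) (D (j+1)) (r (j+1)))
    (hm2 : ∀ j, j < n → P2f (A j) (B j) (C j) (D j) (r (j+1))
      = P2f (A (j+1)) (B (j+1)) (C (j+1)) (D (j+1)) (r (j+1)))
    (hval : ∀ j, 1 ≤ j → j ≤ n → Pf (A j) (B j) (C j) (D j) (r j) = 0) :
    ∀ j, j ≤ n → A j = 0 ∧ B j = 0 ∧ C j = 0 ∧ D j = 0 := by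
  have hrpos := rpos hpos hmono
  have hklt := knot_lt hpos hmono
  have hknn := knot_nonneg hpos hmono
  set I : ℕ → ℝ := fun j => ∫ x in knot r j..knot r (j+1), wfn (A j) (B j) x with hI
  set ψ : ℕ → ℂ := fun j => Ff (A j) (B j) (C j) (D j) (knot r j) with hψ
  have hknot1 : knot r 1 = r 1 := by simp [knot]
  have hknotS : ∀ j : ℕ, knot r (j+1) = r (j+1) := fun j => by simp [knot]
  have hIc : ∀ j, j < n →
      ((I j : ℝ) : ℂ) = Ff (A j) (B j) (C j) (D j) (knot r (j+1))
        - Ff (A j) (B j) (C j) (D j) (knot r j) := by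
    intro j hj
    rcases Nat.eq_zero_or_pos j with h0 | h1
    · subst h0
      simp only [hI, knot, if_pos rfl, hB0, hD0, hknot1]
      exact integral_wfn0 (hrpos 1 le_rfl hn).le
    · have hj0 : j ≠ 0 := by omega
      simp only [hI, knot, if_neg hj0, if_neg (Nat.succ_ne_zero j), hknotS]
      exact integral_wfn (hrpos j h1 (by omega)) (le_of_lt (hmono j h1 hj))
  have hstep : ∀ j, j < n → ((I j : ℝ) : ℂ) = ψ (j+1) - ψ j := by
    intro j hj
    rw [hIc j hj]
    congr 1
    rw [hψ]
    simp only [hknotS]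
    have hp : Pf (A j) (B j) (C j) (D j) (r (j+1)) = 0 :=
      (hm0 j hj).trans (hval (j+1) (by omega) (by omega))
    exact Ff_match (hrpos (j+1) (by omega) (by omega)) (hm1 j hj) (hm2 j hj) hp
      (hval (j+1) (by omega) (by omega))
  have hψn : ψ n = 0 := Ff_top hAn hBn _
  have hψ0 : ψ 0 = 0 := by
    simp only [hψ, knot, if_pos rfl]
    exact Ff_at_zero hB0
  have hsumc : ((∑ j ∈ Finset.range n, I j : ℝ) : ℂ) = 0 := by
    push_cast
    rw [Finset.sum_congr rfl (fun j hj => hstep j (Finset.mem_range.mp hj))]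
    rw [Finset.sum_range_sub (f := ψ)]
    rw [hψn, hψ0, sub_zero]
  have hsum : ∑ j ∈ Finset.range n, I j = 0 := by exact_mod_cast hsumc
  have hInn : ∀ j ∈ Finset.range n, 0 ≤ I j := by
    intro j hj
    have hjn : j < n := Finset.mem_range.mp hj
    apply intervalIntegral.integral_nonneg (hklt j hjn).le
    intro x hx
    have hx0 : 0 ≤ x := le_trans (hknn j (by omega)) hx.1
    exact mul_nonneg hx0 (sq_nonneg _)
  have hIzero : ∀ j, j < n → I j = 0 := by
    intro j hj
    exact (Finset.sum_eq_zero_iff_of_nonneg hInn).mp hsum j (Finset.mem_range.mpr hj)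
  have hAB : ∀ j, j ≤ n → A j = 0 ∧ B j = 0 := by
    intro j hj
    rcases Nat.eq_or_lt_of_le hj with he | hlt
    · subst he; exact ⟨hAn, hBn⟩
    · rcases Nat.eq_zero_or_pos j with h0 | h1
      · subst h0
        refine ⟨?_, hB0⟩
        have h := hIzero 0 hlt
        simp only [hI, knot, if_pos rfl, hB0, hknot1] at h
        exact Azero0 hpos h
      · have hj0 : j ≠ 0 := by omega
        have h := hIzero j hlt
        simp only [hI, knot, if_neg hj0, if_neg (Nat.succ_ne_zero j)] at h
        exact ABzero (hrpos j h1 (by omega)) (hmono j h1 hlt) h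
  have hD : ∀ j, j ≤ n → D j = 0 := by
    intro j hj
    induction j with
    | zero => exact hD0
    | succ k ih =>
      have hk : k < n := by omega
      have h1 := hm1 k hk
      have hxpos := hrpos (k+1) (by omega) (by omega)
      have hx0 : ((r (k+1) : ℝ) : ℂ) ≠ 0 := Complex.ofReal_ne_zero.mpr hxpos.ne'
      rw [P1f, P1f, (hAB k (by omega)).1, (hAB k (by omega)).2,
        (hAB (k+1) hj).1, (hAB (k+1) hj).2, ih (by omega)] at h1
      field_simp at h1
      simpa using h1.symm
  have hCstep : ∀ j, j < n → C j = C (j+1) := by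
    intro j hj
    have h0 := hm0 j hj
    rw [Pf, Pf, (hAB j (by omega)).1, (hAB j (by omega)).2, hD j (by omega),
      (hAB (j+1) (by omega)).1, (hAB (j+1) (by omega)).2, hD (j+1) (by omega)] at h0
    simpa using h0
  have hC1 : C 1 = 0 := by
    have h := hval 1 le_rfl hn
    rw [Pf, (hAB 1 hn).1, (hAB 1 hn).2, hD 1 hn] at h
    simpa using h
  have hC0 : C 0 = 0 := (hCstep 0 hn).trans hC1
  have hCall : ∀ j, j ≤ n → C j = 0 := by
    intro j hj
    induction j with
    | zero => exact hC0
    | succ k ih => exact (hCstep k (by omega)).symm.trans (ih (by omega))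
  exact fun j hj => ⟨(hAB j hj).1, (hAB j hj).2, hCall j hj, hD j hj⟩


def idx (n : ℕ) (r : ℕ → ℝ) (x : ℝ) : ℕ := ((Finset.Icc 1 n).filter (fun j => r j ≤ x)).card

def pwQ (n : ℕ) (r : ℕ → ℝ) (Q : ℕ → ℝ → ℂ) (x : ℝ) : ℂ := Q (idx n r x) x

section IdxLemmas
variable {n : ℕ} {r : ℕ → ℝ}

lemma idx_le (x : ℝ) : idx n r x ≤ n := by
  have h := Finset.card_filter_le (Finset.Icc 1 n) (fun j => r j ≤ x)
  simpa [idx, Nat.card_Icc] using h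

lemma idx_eq {x : ℝ} {j : ℕ} (hj : j ≤ n) (h1 : ∀ i, 1 ≤ i → i ≤ j → r i ≤ x)
    (h2 : ∀ i, j < i → i ≤ n → x < r i) : idx n r x = j := by
  have : (Finset.Icc 1 n).filter (fun i => r i ≤ x) = Finset.Icc 1 j := by
    ext i
    simp only [Finset.mem_filter, Finset.mem_Icc]
    constructor
    · rintro ⟨⟨hi1, hin⟩, hr⟩
      refine ⟨hi1, ?_⟩
      by_contra hc
      exact absurd hr (not_le.mpr (h2 i (by omega) hin))
    · rintro ⟨hi1, hij⟩
      exact ⟨⟨hi1, by omega⟩, h1 i hi1 hij⟩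
  rw [idx, this, Nat.card_Icc]
  omega

lemma rmono_le' (hmono : ∀ j, 1 ≤ j → j < n → r j < r (j+1)) :
    ∀ i j, 1 ≤ i → i ≤ j → j ≤ n → r i ≤ r j := by
  intro i j h1 hij hj
  induction j with
  | zero => omega
  | succ k ih =>
    rcases Nat.lt_or_ge k i with hk | hk
    · have : i = k + 1 := by omega
      subst this; rfl
    · exact le_trans (ih (by omega) (by omega)) (le_of_lt (hmono k (by omega) (by omega)))

variable (hn : 1 ≤ n) (hpos : 0 < r 1) (hmono : ∀ j, 1 ≤ j → j < n → r j < r (j+1))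

include hn hpos hmono

lemma idx_lo {x : ℝ} (hx : x < r 1) : idx n r x = 0 := by
  refine idx_eq (by omega) (by omega) fun i hi0 hin => ?_
  exact lt_of_lt_of_le hx (rmono_le' hmono 1 i le_rfl hi0 hin)

lemma idx_knot {j : ℕ} (h1 : 1 ≤ j) (hj : j ≤ n) : idx n r (r j) = j := by
  refine idx_eq hj (fun i hi1 hij => rmono_le' hmono i j hi1 hij hj) fun i hji hin => ?_
  have h2 : r j < r i := by
    have := rmono_le' hmono (j+1) i (by omega) (by omega) hin
    exact lt_of_lt_of_le (hmono j h1 (by omega)) this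
  exact h2

lemma idx_mid {x : ℝ} {j : ℕ} (h1 : 1 ≤ j) (hj : j + 1 ≤ n) (hl : r j < x) (hr : x < r (j+1)) :
    idx n r x = j := by
  refine idx_eq (by omega) (fun i hi1 hij => le_of_lt (lt_of_le_of_lt
    (rmono_le' hmono i j hi1 hij (by omega)) hl)) fun i hji hin => ?_
  exact lt_of_lt_of_le hr (rmono_le' hmono (j+1) i (by omega) (by omega) hin)

lemma idx_hi {x : ℝ} (hx : r n < x) : idx n r x = n := by
  refine idx_eq le_rfl (fun i hi1 hin => le_of_lt (lt_of_le_of_lt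
    (rmono_le' hmono i n hi1 hin le_rfl) hx)) fun i hji hin => by omega

lemma cover {x : ℝ} (hx : 0 < x) :
    x < r 1 ∨ (∃ j, 1 ≤ j ∧ j ≤ n ∧ x = r j) ∨
      (∃ j, 1 ≤ j ∧ j + 1 ≤ n ∧ r j < x ∧ x < r (j+1)) ∨ r n < x := by
  by_cases h1 : x < r 1
  · exact Or.inl h1
  push_neg at h1
  set s := (Finset.Icc 1 n).filter (fun j => r j ≤ x) with hs
  have hne : s.Nonempty := ⟨1, by simp [hs, Finset.mem_filter, h1]; omega⟩
  set m := s.max' hne with hm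
  have hmem : m ∈ s := s.max'_mem hne
  rw [hs, Finset.mem_filter, Finset.mem_Icc] at hmem
  obtain ⟨⟨hm1, hmn⟩, hmx⟩ := hmem
  rcases eq_or_lt_of_le hmx with he | hlt
  · exact Or.inr (Or.inl ⟨m, hm1, hmn, he.symm⟩)
  rcases Nat.eq_or_lt_of_le hmn with he | hmltn
  · exact Or.inr (Or.inr (Or.inr (he ▸ hlt)))
  · have hnotmem : m + 1 ∉ s := fun hc => by
      have := s.le_max' (m+1) hc
      omega
    have : ¬ (r (m+1) ≤ x) := fun hc =>
      hnotmem (by rw [hs, Finset.mem_filter, Finset.mem_Icc]; exact ⟨⟨by omega, by omega⟩, hc⟩)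
    push_neg at this
    exact Or.inr (Or.inr (Or.inl ⟨m, hm1, by omega, hlt, this⟩))

end IdxLemmas

lemma glueD {f : ℝ → ℂ} (fl fr : ℝ → ℂ) {Dv : ℂ} {p x q : ℝ} (hpx : p < x) (hxq : x < q)
    (hfl : HasDerivAt fl Dv x) (hfr : HasDerivAt fr Dv x)
    (hl : ∀ y ∈ Ioc p x, f y = fl y) (hr : ∀ y ∈ Ico x q, f y = fr y) :
    HasDerivAt f Dv x := by
  have h1 : HasDerivWithinAt f Dv (Ioc p x) x :=
    (hfl.hasDerivWithinAt).congr hl (hl x ⟨hpx, le_rfl⟩)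
  have h2 : HasDerivWithinAt f Dv (Ico x q) x :=
    (hfr.hasDerivWithinAt).congr hr (hr x ⟨le_rfl, hxq⟩)
  have h3 := h1.union h2
  rw [Set.Ioc_union_Ico_eq_Ioo hpx hxq] at h3
  exact h3.hasDerivAt (Ioo_mem_nhds hpx hxq)

lemma glueC {f : ℝ → ℂ} (fl fr : ℝ → ℂ) {p x q : ℝ} (hpx : p < x) (hxq : x < q)
    (hfl : ContinuousAt fl x) (hfr : ContinuousAt fr x)
    (hl : ∀ y ∈ Ioc p x, f y = fl y) (hr : ∀ y ∈ Ico x q, f y = fr y) :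
    ContinuousAt f x := by
  have h1 : ContinuousWithinAt f (Ioc p x) x :=
    (hfl.continuousWithinAt).congr hl (hl x ⟨hpx, le_rfl⟩)
  have h2 : ContinuousWithinAt f (Ico x q) x :=
    (hfr.continuousWithinAt).congr hr (hr x ⟨le_rfl, hxq⟩)
  have h3 := h1.union h2
  rw [Set.Ioc_union_Ico_eq_Ioo hpx hxq] at h3
  exact h3.continuousAt (Ioo_mem_nhds hpx hxq)

section PWderiv
variable {n : ℕ} {r : ℕ → ℝ}
variable (hn : 1 ≤ n) (hpos : 0 < r 1) (hmono : ∀ j, 1 ≤ j → j < n → r j < r (j+1))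
include hn hpos hmono

/-- piecewise agreement with piece functions on each region -/
lemma pwQ_eq_lo {Q : ℕ → ℝ → ℂ} {y : ℝ} (hy : y < r 1) : pwQ n r Q y = Q 0 y := by
  rw [pwQ, idx_lo hn hpos hmono hy]

lemma pwQ_eq_knot {Q : ℕ → ℝ → ℂ} {j : ℕ} (h1 : 1 ≤ j) (hj : j ≤ n) :
    pwQ n r Q (r j) = Q j (r j) := by
  rw [pwQ, idx_knot hn hpos hmono h1 hj]

lemma pwQ_eq_mid {Q : ℕ → ℝ → ℂ} {j : ℕ} {y : ℝ} (h1 : 1 ≤ j) (hj : j + 1 ≤ n)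
    (hly : r j < y) (hry : y < r (j+1)) : pwQ n r Q y = Q j y := by
  rw [pwQ, idx_mid hn hpos hmono h1 hj hly hry]

lemma pwQ_eq_hi {Q : ℕ → ℝ → ℂ} {y : ℝ} (hy : r n < y) : pwQ n r Q y = Q n y := by
  rw [pwQ, idx_hi hn hpos hmono hy]

/-- The central gluing result: if the pieces have derivatives and the pieces match in value and
derivative at interior knots, then the piecewise function is differentiable with the piecewise
derivative. -/
theorem hasDerivAt_pwQ {Q Q1 : ℕ → ℝ → ℂ}
    (hQ : ∀ j x, 0 < x → HasDerivAt (Q j) (Q1 j x) x)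
    (hmQ : ∀ j, j < n → Q j (r (j+1)) = Q (j+1) (r (j+1)))
    (hmQ1 : ∀ j, j < n → Q1 j (r (j+1)) = Q1 (j+1) (r (j+1)))
    {x : ℝ} (hx : 0 < x) :
    HasDerivAt (pwQ n r Q) (pwQ n r Q1 x) x := by
  rcases cover hn hpos hmono hx with hc | ⟨j, h1, hj, he⟩ | ⟨j, h1, hj, hl, hr⟩ | hc
  · rw [pwQ_eq_lo hn hpos hmono (Q := Q1) hc]
    refine (hQ 0 x hx).congr_of_eventuallyEq ?_
    refine Filter.eventuallyEq_of_mem (Ioo_mem_nhds hx hc) fun y hy => ?_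
    exact pwQ_eq_lo hn hpos hmono hy.2
  · subst he
    rw [pwQ_eq_knot hn hpos hmono h1 hj]
    have hjpos : 0 < r j := hx
    -- left endpoint of the left neighbourhood
    have hml : j - 1 < n := by omega
    have hsucc : j - 1 + 1 = j := by omega
    set p : ℝ := if j = 1 then 0 else r (j-1) with hp
    have hplt : p < r j := by
      rcases eq_or_ne j 1 with hj1 | hj1
      · rw [hp, if_pos hj1, hj1]; exact hpos
      · rw [hp, if_neg hj1]
        have := hmono (j-1) (by omega) (by omega)
        rwa [hsucc] at this
    set q : ℝ := if j = n then r n + 1 else r (j+1) with hq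
    have hqgt : r j < q := by
      rcases eq_or_ne j n with hjn | hjn
      · rw [hq, if_pos hjn, hjn]; linarith
      · rw [hq, if_neg hjn]
        exact hmono j h1 (by omega)
    have hDv : Q1 (j-1) (r j) = Q1 j (r j) := by
      have := hmQ1 (j-1) hml
      rwa [hsucc] at this
    refine glueD (Q (j-1)) (Q j) hplt hqgt ?_ (hQ j (r j) hx) ?_ ?_
    · rw [← hDv]; exact hQ (j-1) (r j) hx
    · intro y hy
      rcases eq_or_lt_of_le hy.2 with hye | hylt
      · rw [hye, pwQ_eq_knot hn hpos hmono h1 hj]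
        have := hmQ (j-1) hml
        rw [hsucc] at this
        exact this.symm
      · rcases eq_or_ne j 1 with hj1 | hj1
        · subst hj1
          simp only [hp, if_pos rfl] at hy
          exact pwQ_eq_lo hn hpos hmono hylt
        · have h2 : 2 ≤ j := by omega
          have hy1 : r (j-1) < y := by
            have : p = r (j-1) := by rw [hp, if_neg hj1]
            rw [← this]; exact hy.1
          exact pwQ_eq_mid hn hpos hmono (Q := Q) (j := j-1) (by omega) (by omega) hy1
            (by rwa [hsucc])
    · intro y hy
      rcases eq_or_lt_of_le hy.1 with hye | hylt
      · rw [← hye, pwQ_eq_knot hn hpos hmono h1 hj]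
      · rcases eq_or_ne j n with hjn | hjn
        · subst hjn
          exact pwQ_eq_hi hn hpos hmono hylt
        · have : y < r (j+1) := by
            have : q = r (j+1) := by rw [hq, if_neg hjn]
            rw [← this]; exact hy.2
          exact pwQ_eq_mid hn hpos hmono h1 (by omega) hylt this
  · rw [pwQ_eq_mid hn hpos hmono (Q := Q1) h1 hj hl hr]
    refine (hQ j x hx).congr_of_eventuallyEq ?_
    refine Filter.eventuallyEq_of_mem (Ioo_mem_nhds hl hr) fun y hy => ?_
    exact pwQ_eq_mid hn hpos hmono h1 hj hy.1 hy.2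
  · rw [pwQ_eq_hi hn hpos hmono (Q := Q1) hc]
    refine (hQ n x hx).congr_of_eventuallyEq ?_
    refine Filter.eventuallyEq_of_mem (Ioi_mem_nhds hc) fun y hy => ?_
    exact pwQ_eq_hi hn hpos hmono hy

theorem continuousAt_pwQ {Q : ℕ → ℝ → ℂ}
    (hQ : ∀ j x, 0 < x → ContinuousAt (Q j) x)
    (hmQ : ∀ j, j < n → Q j (r (j+1)) = Q (j+1) (r (j+1)))
    {x : ℝ} (hx : 0 < x) :
    ContinuousAt (pwQ n r Q) x := by
  rcases cover hn hpos hmono hx with hc | ⟨j, h1, hj, he⟩ | ⟨j, h1, hj, hl, hr⟩ | hc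
  · refine (hQ 0 x hx).congr_of_eventuallyEq ?_
    refine Filter.eventuallyEq_of_mem (Ioo_mem_nhds hx hc) fun y hy => ?_
    exact pwQ_eq_lo hn hpos hmono hy.2
  · subst he
    have hml : j - 1 < n := by omega
    have hsucc : j - 1 + 1 = j := by omega
    set p : ℝ := if j = 1 then 0 else r (j-1) with hp
    have hplt : p < r j := by
      rcases eq_or_ne j 1 with hj1 | hj1
      · rw [hp, if_pos hj1, hj1]; exact hpos
      · rw [hp, if_neg hj1]
        have := hmono (j-1) (by omega) (by omega)
        rwa [hsucc] at this
    set q : ℝ := if j = n then r n + 1 else r (j+1) with hq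
    have hqgt : r j < q := by
      rcases eq_or_ne j n with hjn | hjn
      · rw [hq, if_pos hjn, hjn]; linarith
      · rw [hq, if_neg hjn]
        exact hmono j h1 (by omega)
    refine glueC (Q (j-1)) (Q j) hplt hqgt (hQ (j-1) (r j) hx) (hQ j (r j) hx) ?_ ?_
    · intro y hy
      rcases eq_or_lt_of_le hy.2 with hye | hylt
      · rw [hye, pwQ_eq_knot hn hpos hmono h1 hj]
        have := hmQ (j-1) hml
        rw [hsucc] at this
        exact this.symm
      · rcases eq_or_ne j 1 with hj1 | hj1
        · subst hj1
          exact pwQ_eq_lo hn hpos hmono hylt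
        · have hy1 : r (j-1) < y := by
            have he2 : p = r (j-1) := by rw [hp, if_neg hj1]
            rw [← he2]; exact hy.1
          exact pwQ_eq_mid hn hpos hmono (j := j-1) (by omega) (by omega) hy1 (by rwa [hsucc])
    · intro y hy
      rcases eq_or_lt_of_le hy.1 with hye | hylt
      · rw [← hye, pwQ_eq_knot hn hpos hmono h1 hj]
      · rcases eq_or_ne j n with hjn | hjn
        · subst hjn
          exact pwQ_eq_hi hn hpos hmono hylt
        · have hy2 : y < r (j+1) := by
            have he2 : q = r (j+1) := by rw [hq, if_neg hjn]
            rw [← he2]; exact hy.2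
          exact pwQ_eq_mid hn hpos hmono h1 (by omega) hylt hy2
  · refine (hQ j x hx).congr_of_eventuallyEq ?_
    refine Filter.eventuallyEq_of_mem (Ioo_mem_nhds hl hr) fun y hy => ?_
    exact pwQ_eq_mid hn hpos hmono h1 hj hy.1 hy.2
  · refine (hQ n x hx).congr_of_eventuallyEq ?_
    refine Filter.eventuallyEq_of_mem (Ioi_mem_nhds hc) fun y hy => ?_
    exact pwQ_eq_hi hn hpos hmono hy

end PWderiv

lemma contDiffOn_of_derivs {f f1 f2 : ℝ → ℂ}
    (h1 : ∀ x ∈ Ioi (0:ℝ), HasDerivAt f (f1 x) x)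
    (h2 : ∀ x ∈ Ioi (0:ℝ), HasDerivAt f1 (f2 x) x)
    (h3 : ∀ x ∈ Ioi (0:ℝ), ContinuousAt f2 x) :
    ContDiffOn ℝ 2 f (Ioi 0) := by
  have hd1 : DifferentiableOn ℝ f (Ioi 0) := fun x hx =>
    ((h1 x hx).differentiableAt).differentiableWithinAt
  have hd2 : DifferentiableOn ℝ f1 (Ioi 0) := fun x hx =>
    ((h2 x hx).differentiableAt).differentiableWithinAt
  have hder1 : ∀ x ∈ Ioi (0:ℝ), deriv f x = f1 x := fun x hx => (h1 x hx).deriv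
  have hder2 : ∀ x ∈ Ioi (0:ℝ), deriv f1 x = f2 x := fun x hx => (h2 x hx).deriv
  have hc0 : ContDiffOn ℝ 0 (deriv f1) (Ioi 0) := by
    rw [contDiffOn_zero]
    intro x hx
    exact ((h3 x hx).congr (Filter.eventuallyEq_of_mem (isOpen_Ioi.mem_nhds hx)
      fun y hy => (hder2 y hy).symm)).continuousWithinAt
  have hc1 : ContDiffOn ℝ 1 f1 (Ioi 0) := by
    rw [show (1 : WithTop ℕ∞) = 0 + 1 by norm_num,
      contDiffOn_succ_iff_deriv_of_isOpen isOpen_Ioi]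
    exact ⟨hd2, by simp, hc0⟩
  have hcd : ContDiffOn ℝ 1 (deriv f) (Ioi 0) := hc1.congr hder1
  rw [show (2 : WithTop ℕ∞) = 1 + 1 by norm_num,
    contDiffOn_succ_iff_deriv_of_isOpen isOpen_Ioi]
  exact ⟨hd1, by simp, hcd⟩

lemma smooth_parts {τ : ℝ → ℂ} (hsm : ContDiffOn ℝ 2 τ (Ioi 0)) :
    ContinuousOn τ (Ioi 0) ∧ ContinuousOn (deriv τ) (Ioi 0) ∧
    ContinuousOn (deriv (deriv τ)) (Ioi 0) ∧
    (∀ x ∈ Ioi (0:ℝ), HasDerivAt τ (deriv τ x) x) ∧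
    (∀ x ∈ Ioi (0:ℝ), HasDerivAt (deriv τ) (deriv (deriv τ) x) x) := by
  rw [show (2 : WithTop ℕ∞) = 1 + 1 by norm_num,
    contDiffOn_succ_iff_deriv_of_isOpen isOpen_Ioi] at hsm
  obtain ⟨hd1, -, hc1⟩ := hsm
  have hc1' := hc1
  rw [show (1 : WithTop ℕ∞) = 0 + 1 by norm_num,
    contDiffOn_succ_iff_deriv_of_isOpen isOpen_Ioi] at hc1'
  obtain ⟨hd2, -, hc0⟩ := hc1'
  rw [contDiffOn_zero] at hc0
  refine ⟨hd1.continuousOn, hc1.continuousOn, hc0, ?_, ?_⟩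
  · exact fun x hx => (hd1.differentiableAt (isOpen_Ioi.mem_nhds hx)).hasDerivAt
  · exact fun x hx => (hd2.differentiableAt (isOpen_Ioi.mem_nhds hx)).hasDerivAt

/-- Extraction of the two-jet of a `C²` function which coincides with a kernel element on a
one-sided neighbourhood of `x`. -/
lemma jets {τ : ℝ → ℂ} (hsm : ContDiffOn ℝ 2 τ (Ioi 0)) {s : Set ℝ} (hso : IsOpen s)
    (hsub : s ⊆ Ioi (0:ℝ)) {x : ℝ} (hx : 0 < x) (hne : (𝓝[s] x).NeBot)
    {a b c d : ℂ} (hq : ∀ y ∈ s, τ y = Pf a b c d y) :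
    τ x = Pf a b c d x ∧ deriv τ x = P1f a b c d x ∧
      deriv (deriv τ) x = P2f a b c d x := by
  obtain ⟨hct, hct1, hct2, hD1, hD2⟩ := smooth_parts hsm
  have hMem : x ∈ Ioi (0:ℝ) := hx
  have key : ∀ (F : ℝ → ℂ) (G : ℝ → ℂ), ContinuousOn F (Ioi 0) → ContinuousAt G x →
      (∀ y ∈ s, F y = G y) → F x = G x := by
    intro F G hF hG hFG
    have t1 : Tendsto F (𝓝[s] x) (𝓝 (F x)) := (hF x hMem).mono hsub
    have t2 : Tendsto F (𝓝[s] x) (𝓝 (G x)) :=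
      (hG.tendsto.mono_left nhdsWithin_le_nhds).congr'
        (eventually_nhdsWithin_of_forall fun y hy => (hFG y hy).symm)
    exact tendsto_nhds_unique t1 t2
  have hq1 : ∀ y ∈ s, deriv τ y = P1f a b c d y := by
    intro y hy
    have hyp : 0 < y := hsub hy
    have hev : τ =ᶠ[𝓝 y] Pf a b c d := Filter.eventuallyEq_of_mem (hso.mem_nhds hy) hq
    rw [hev.deriv_eq, (hasDerivAt_Pf a b c d hyp).deriv]
  have hq2 : ∀ y ∈ s, deriv (deriv τ) y = P2f a b c d y := by
    intro y hy
    have hyp : 0 < y := hsub hy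
    have hev : deriv τ =ᶠ[𝓝 y] P1f a b c d := Filter.eventuallyEq_of_mem (hso.mem_nhds hy) hq1
    rw [hev.deriv_eq, (hasDerivAt_P1f a b c d hyp).deriv]
  exact ⟨key τ (Pf a b c d) hct (continuousAt_Pf a b c d hx.ne') hq,
    key (deriv τ) (P1f a b c d) hct1 (continuousAt_P1f a b c d hx.ne') hq1,
    key (deriv (deriv τ)) (P2f a b c d) hct2 (continuousAt_P2f a b c d hx.ne') hq2⟩


section LA
variable (n : ℕ) (r : ℕ → ℝ)

abbrev Vsp := Fin (n+1) → Fin 4 → ℂ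

def acc (v : Vsp n) (j : ℕ) (m : Fin 4) : ℂ := if h : j < n + 1 then v ⟨j, h⟩ m else 0

def Pv (v : Vsp n) (j : ℕ) (x : ℝ) : ℂ :=
  Pf (acc n v j 0) (acc n v j 1) (acc n v j 2) (acc n v j 3) x
def P1v (v : Vsp n) (j : ℕ) (x : ℝ) : ℂ :=
  P1f (acc n v j 0) (acc n v j 1) (acc n v j 2) (acc n v j 3) x
def P2v (v : Vsp n) (j : ℕ) (x : ℝ) : ℂ :=
  P2f (acc n v j 0) (acc n v j 1) (acc n v j 2) (acc n v j 3) x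

lemma acc_add (v w : Vsp n) (j : ℕ) (m : Fin 4) :
    acc n (v + w) j m = acc n v j m + acc n w j m := by
  unfold acc; split <;> simp

lemma acc_smul (t : ℂ) (v : Vsp n) (j : ℕ) (m : Fin 4) :
    acc n (t • v) j m = t * acc n v j m := by
  unfold acc; split <;> simp [smul_eq_mul]

def mL (v : Vsp n) : (Fin 4 ⊕ Fin n × Fin 3) → ℂ :=
  Sum.elim
    (fun i => ![acc n v 0 1, acc n v 0 3, acc n v n 0, acc n v n 1] i)
    (fun p => ![Pv n v p.1 (r (p.1+1)) - Pv n v (p.1+1) (r (p.1+1)),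
      P1v n v p.1 (r (p.1+1)) - P1v n v (p.1+1) (r (p.1+1)),
      P2v n v p.1 (r (p.1+1)) - P2v n v (p.1+1) (r (p.1+1))] p.2)

def mE (v : Vsp n) : Fin n → ℂ := fun i => Pv n v (i+1) (r (i+1))

lemma mL_linear : IsLinearMap ℂ (mL n r) := by
  constructor
  · intro v w
    funext i
    rcases i with i | ⟨j, k⟩
    · fin_cases i <;> simp [mL, acc_add]
    · fin_cases k <;>
        (simp [mL, Pv, P1v, P2v, Pf, P1f, P2f, acc_add]; ring)
  · intro t v
    funext i
    rcases i with i | ⟨j, k⟩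
    · fin_cases i <;> simp [mL, acc_smul, smul_eq_mul]
    · fin_cases k <;>
        (simp [mL, Pv, P1v, P2v, Pf, P1f, P2f, acc_smul, smul_eq_mul]; ring)

lemma mE_linear : IsLinearMap ℂ (mE n r) := by
  constructor
  · intro v w
    funext i
    simp [mE, Pv, Pf, acc_add]
    ring
  · intro t v
    funext i
    simp [mE, Pv, Pf, acc_smul, smul_eq_mul]
    ring

def Lmap : Vsp n →ₗ[ℂ] ((Fin 4 ⊕ Fin n × Fin 3) → ℂ) := IsLinearMap.mk' _ (mL_linear n r)
def Emap : Vsp n →ₗ[ℂ] (Fin n → ℂ) := IsLinearMap.mk' _ (mE_linear n r)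

lemma finrank_Vsp : Module.finrank ℂ (Vsp n) = 4 * (n + 1) := by
  rw [Module.finrank_pi_fintype]
  simp [Module.finrank_pi, mul_comm]

lemma finrank_ker_ge : n ≤ Module.finrank ℂ (LinearMap.ker (Lmap n r)) := by
  have h1 := LinearMap.finrank_range_add_finrank_ker (Lmap n r)
  have h2 : Module.finrank ℂ (LinearMap.range (Lmap n r)) ≤ 4 + n * 3 := by
    have := Submodule.finrank_le (LinearMap.range (Lmap n r))
    rwa [Module.finrank_pi ℂ, Fintype.card_sum, Fintype.card_prod, Fintype.card_fin,
      Fintype.card_fin, Fintype.card_fin] at this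
  rw [finrank_Vsp] at h1
  omega

/-- Surjectivity of evaluation restricted to the constraint kernel, given injectivity. -/
lemma eval_surj
    (hinj : ∀ v : Vsp n, Lmap n r v = 0 → Emap n r v = 0 → v = 0) :
    ∀ target : Fin n → ℂ, ∃ v : Vsp n, Lmap n r v = 0 ∧ Emap n r v = target := by
  intro target
  set S := LinearMap.ker (Lmap n r) with hS
  set E : S →ₗ[ℂ] (Fin n → ℂ) := (Emap n r).domRestrict S with hE
  have hEinj : Function.Injective E := by
    rw [← LinearMap.ker_eq_bot, Submodule.eq_bot_iff]
    rintro ⟨v, hv⟩ hker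
    have h1 : Lmap n r v = 0 := LinearMap.mem_ker.mp hv
    have h2 : Emap n r v = 0 := LinearMap.mem_ker.mp hker
    have := hinj v h1 h2
    exact Subtype.ext this
  have hge := finrank_ker_ge n r
  rw [← hS] at hge
  have hle : Module.finrank ℂ (LinearMap.range E) ≤ n := by
    have := Submodule.finrank_le (LinearMap.range E)
    rwa [Module.finrank_pi, Fintype.card_fin] at this
  have heq : Module.finrank ℂ (LinearMap.range E) = Module.finrank ℂ S :=
    LinearMap.finrank_range_of_inj hEinj
  have htop : LinearMap.range E = ⊤ := by
    apply Submodule.eq_top_of_finrank_eq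
    rw [heq, Module.finrank_pi, Fintype.card_fin]
    omega
  obtain ⟨⟨v, hv⟩, hval⟩ := LinearMap.range_eq_top.mp htop target
  exact ⟨v, LinearMap.mem_ker.mp hv, hval⟩

end LA

-- small helpers
lemma neBot_right {a b : ℝ} (h : a < b) : (𝓝[Ioo a b] b).NeBot :=
  mem_closure_iff_nhdsWithin_neBot.mp (by rw [closure_Ioo h.ne]; exact ⟨h.le, le_rfl⟩)
lemma neBot_left {a b : ℝ} (h : a < b) : (𝓝[Ioo a b] a).NeBot :=
  mem_closure_iff_nhdsWithin_neBot.mp (by rw [closure_Ioo h.ne]; exact ⟨le_rfl, h.le⟩)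
lemma neBot_Ioi (a : ℝ) : (𝓝[Ioi a] a).NeBot :=
  mem_closure_iff_nhdsWithin_neBot.mp (by rw [closure_Ioi]; exact Set.self_mem_Ici)

lemma Pf_sub (a b c d a' b' c' d' : ℂ) (x : ℝ) :
    Pf (a - a') (b - b') (c - c') (d - d') x = Pf a b c d x - Pf a' b' c' d' x := by
  simp [Pf]; ring
lemma P1f_sub (a b c d a' b' c' d' : ℂ) (x : ℝ) :
    P1f (a - a') (b - b') (c - c') (d - d') x = P1f a b c d x - P1f a' b' c' d' x := by
  simp [P1f]; ring
lemma P2f_sub (a b c d a' b' c' d' : ℂ) (x : ℝ) :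
    P2f (a - a') (b - b') (c - c') (d - d') x = P2f a b c d x - P2f a' b' c' d' x := by
  simp [P2f]; ring

lemma Lzero_spec {n : ℕ} {r : ℕ → ℝ} {v : Vsp n} (h : Lmap n r v = 0) :
    acc n v 0 1 = 0 ∧ acc n v 0 3 = 0 ∧ acc n v n 0 = 0 ∧ acc n v n 1 = 0 ∧
    (∀ j, j < n → Pv n v j (r (j+1)) = Pv n v (j+1) (r (j+1))) ∧
    (∀ j, j < n → P1v n v j (r (j+1)) = P1v n v (j+1) (r (j+1))) ∧
    (∀ j, j < n → P2v n v j (r (j+1)) = P2v n v (j+1) (r (j+1))) := by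
  have hfun : mL n r v = 0 := by
    have : Lmap n r v = mL n r v := rfl
    rw [← this, h]
  refine ⟨?_, ?_, ?_, ?_, ?_, ?_, ?_⟩
  · simpa [mL] using congrFun hfun (Sum.inl 0)
  · simpa [mL] using congrFun hfun (Sum.inl 1)
  · simpa [mL] using congrFun hfun (Sum.inl 2)
  · simpa [mL] using congrFun hfun (Sum.inl 3)
  · intro j hj
    have := congrFun hfun (Sum.inr (⟨j, hj⟩, 0))
    simp only [mL, Sum.elim_inr, Matrix.cons_val_zero, Pi.zero_apply, sub_eq_zero] at this
    exact this
  · intro j hj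
    have := congrFun hfun (Sum.inr (⟨j, hj⟩, 1))
    simp only [mL, Sum.elim_inr, Matrix.cons_val_one, Matrix.head_cons, Matrix.cons_val_zero,
      Pi.zero_apply, sub_eq_zero] at this
    exact this
  · intro j hj
    have := congrFun hfun (Sum.inr (⟨j, hj⟩, 2))
    simp only [mL, Sum.elim_inr, Pi.zero_apply, sub_eq_zero, Matrix.cons_val_two,
      Matrix.tail_cons, Matrix.head_cons] at this
    exact this

lemma Espec {n : ℕ} {r : ℕ → ℝ} {v : Vsp n} {g : Fin n → ℂ} (h : Emap n r v = g) :
    ∀ i : Fin n, Pv n v ((i : ℕ) + 1) (r ((i : ℕ) + 1)) = g i := by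
  intro i
  have e : mE n r v = g := by
    have e2 : Emap n r v = mE n r v := rfl
    rw [← e2, h]
  exact congrFun e i

lemma Espec' {n : ℕ} {r : ℕ → ℝ} {v : Vsp n} {g : ℕ → ℂ}
    (h : Emap n r v = fun i : Fin n => g ((i : ℕ) + 1)) :
    ∀ j, 1 ≤ j → j ≤ n → Pv n v j (r j) = g j := by
  intro j h1 hj
  have h2 := Espec h ⟨j - 1, by omega⟩
  have hj' : (j : ℕ) - 1 + 1 = j := by omega
  simp only [hj'] at h2
  exact h2

lemma inj_input {n : ℕ} {r : ℕ → ℝ} (hn : 1 ≤ n) (hpos : 0 < r 1)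
    (hmono : ∀ j, 1 ≤ j → j < n → r j < r (j+1)) :
    ∀ v : Vsp n, Lmap n r v = 0 → Emap n r v = 0 → v = 0 := by
  intro v hL hE
  obtain ⟨hb0, hd0, han, hbn, hm0, hm1, hm2⟩ := Lzero_spec hL
  have hval : ∀ j, 1 ≤ j → j ≤ n → Pv n v j (r j) = 0 := by
    have hE' : Emap n r v = fun i : Fin n => (0 : ℂ) := hE
    intro j h1 hj
    exact Espec' (g := fun _ => (0:ℂ)) hE' j h1 hj
  have hK := kernel_zero hn hpos hmono (fun j => acc n v j 0) (fun j => acc n v j 1)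
    (fun j => acc n v j 2) (fun j => acc n v j 3) hb0 hd0 han hbn hm0 hm1 hm2 hval
  funext i m
  have hi : (i : ℕ) ≤ n := by omega
  have := hK i hi
  have hacc : acc n v i m = v i m := by
    unfold acc
    rw [dif_pos i.isLt]
  rw [← hacc]
  fin_cases m
  · exact this.1
  · exact this.2.1
  · exact this.2.2.1
  · exact this.2.2.2


theorem main (n : ℕ) (r : ℕ → ℝ) (hn : 1 ≤ n) (hpos : 0 < r 1)
    (hmono : ∀ j, 1 ≤ j → j < n → r j < r (j + 1))
    (ν : ℕ → ℝ) :
    ∃ σ : ℝ → ℂ,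
      (IsBLSpline n r σ ∧ NonSingularBLS (r 1) σ ∧
        (∀ j, 1 ≤ j → j ≤ n → σ (r j) = (ν j : ℂ))) ∧
      ∀ τ : ℝ → ℂ,
        (IsBLSpline n r τ ∧ NonSingularBLS (r 1) τ ∧
          (∀ j, 1 ≤ j → j ≤ n → τ (r j) = (ν j : ℂ))) →
        Set.EqOn τ σ (Set.Ici 0) := by
  classical
  obtain ⟨v, hvL, hvE⟩ := eval_surj n r (inj_input hn hpos hmono)
    (fun i : Fin n => ((ν ((i : ℕ) + 1) : ℝ) : ℂ))
  obtain ⟨hB0, hD0, hAn, hBn, hm0, hm1, hm2⟩ := Lzero_spec hvL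
  have hm0P : ∀ j, j < n →
      Pf (acc n v j 0) (acc n v j 1) (acc n v j 2) (acc n v j 3) (r (j+1)) =
      Pf (acc n v (j+1) 0) (acc n v (j+1) 1) (acc n v (j+1) 2) (acc n v (j+1) 3) (r (j+1)) := hm0
  have hm1P : ∀ j, j < n →
      P1f (acc n v j 0) (acc n v j 1) (acc n v j 2) (acc n v j 3) (r (j+1)) =
      P1f (acc n v (j+1) 0) (acc n v (j+1) 1) (acc n v (j+1) 2) (acc n v (j+1) 3) (r (j+1)) := hm1
  have hm2P : ∀ j, j < n →
      P2f (acc n v j 0) (acc n v j 1) (acc n v j 2) (acc n v j 3) (r (j+1)) =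
      P2f (acc n v (j+1) 0) (acc n v (j+1) 1) (acc n v (j+1) 2) (acc n v (j+1) 3) (r (j+1)) := hm2
  have hvalsP : ∀ j, 1 ≤ j → j ≤ n →
      Pf (acc n v j 0) (acc n v j 1) (acc n v j 2) (acc n v j 3) (r j) = ((ν j : ℝ) : ℂ) :=
    fun j h1 hj => Espec' (g := fun j => ((ν j : ℝ) : ℂ)) hvE j h1 hj
  set σ : ℝ → ℂ := pwQ n r (Pv n v) with hσdef
  have hder1 : ∀ x ∈ Ioi (0:ℝ), HasDerivAt σ (pwQ n r (P1v n v) x) x := fun x hx =>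
    hasDerivAt_pwQ hn hpos hmono (fun j y hy => hasDerivAt_Pf _ _ _ _ hy) hm0 hm1 hx
  have hder2 : ∀ x ∈ Ioi (0:ℝ), HasDerivAt (pwQ n r (P1v n v)) (pwQ n r (P2v n v) x) x :=
    fun x hx =>
      hasDerivAt_pwQ hn hpos hmono (fun j y hy => hasDerivAt_P1f _ _ _ _ hy) hm1 hm2 hx
  have hcont2 : ∀ x ∈ Ioi (0:ℝ), ContinuousAt (pwQ n r (P2v n v)) x := fun x hx =>
    continuousAt_pwQ hn hpos hmono (fun j y hy => continuousAt_P2f _ _ _ _ hy.ne') hm2 hx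
  have hsmooth : ContDiffOn ℝ 2 σ (Ioi 0) := contDiffOn_of_derivs hder1 hder2 hcont2
  have hσvals : ∀ j, 1 ≤ j → j ≤ n → σ (r j) = ((ν j : ℝ) : ℂ) := by
    intro j h1 hj
    rw [hσdef, pwQ_eq_knot hn hpos hmono h1 hj]
    exact hvalsP j h1 hj
  have hcont0 : ContinuousWithinAt σ (Set.Ici 0) 0 := by
    have hg : ContinuousWithinAt (fun y : ℝ => acc n v 0 0 * (y:ℂ)^2 + acc n v 0 2)
        (Set.Ici 0) 0 := by
      apply Continuous.continuousWithinAt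
      exact (continuous_const.mul ((Complex.continuous_ofReal).pow 2)).add continuous_const
    refine hg.congr_of_eventuallyEq ?_ ?_
    · have hmem : Ico (0:ℝ) (r 1) ∈ 𝓝[Set.Ici 0] (0:ℝ) := by
        rw [show Ico (0:ℝ) (r 1) = Ici 0 ∩ Iio (r 1) from (Set.Ici_inter_Iio).symm]
        exact inter_mem self_mem_nhdsWithin (mem_nhdsWithin_of_mem_nhds (Iio_mem_nhds hpos))
      refine Filter.eventuallyEq_of_mem hmem fun y hy => ?_
      have h0 : σ y = Pv n v 0 y := by rw [hσdef, pwQ_eq_lo hn hpos hmono hy.2]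
      rw [h0]
      simp [Pv, Pf, hB0, hD0]
    · have h0 : σ (0:ℝ) = Pv n v 0 0 := by rw [hσdef, pwQ_eq_lo hn hpos hmono hpos]
      rw [h0]
      simp [Pv, Pf]
  refine ⟨σ, ⟨⟨?_, ?_, ?_, hsmooth, hcont0⟩, ?_, hσvals⟩, ?_⟩
  · -- pieces
    intro j h1 hj
    refine ⟨acc n v j 0, acc n v j 1, acc n v j 2, acc n v j 3, fun x hx => ?_⟩
    rw [hσdef, pwQ_eq_mid hn hpos hmono h1 hj hx.1 hx.2]
    rfl
  · -- left
    refine ⟨acc n v 0 0, acc n v 0 1, acc n v 0 2, fun x hx => ?_⟩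
    rw [hσdef, pwQ_eq_lo hn hpos hmono hx.2]
    simp [Pv, Pf, hD0]
  · -- right
    refine ⟨acc n v n 2, acc n v n 3, fun x hx => ?_⟩
    rw [hσdef, pwQ_eq_hi hn hpos hmono hx]
    simp [Pv, Pf, hAn, hBn]
  · -- nonsingular
    refine ⟨acc n v 0 0, acc n v 0 2, fun x hx => ?_⟩
    rw [hσdef, pwQ_eq_lo hn hpos hmono hx.2]
    simp [Pv, Pf, hB0, hD0]
  · -- uniqueness
    rintro τ ⟨hτsp, hτns, hτval⟩
    obtain ⟨a0, c0, hq0'⟩ := hτns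
    obtain ⟨cn, dn, hqn'⟩ := hτsp.right
    have hq0 : ∀ y ∈ Ioo (0:ℝ) (r 1), τ y = Pf a0 0 c0 0 y := fun y hy => by
      rw [hq0' y hy]; simp [Pf]
    have hqn : ∀ y ∈ Ioi (r n), τ y = Pf 0 0 cn dn y := fun y hy => by
      rw [hqn' y hy]; simp [Pf]
    have hmidex : ∀ j : ℕ, ∃ q : ℂ × ℂ × ℂ × ℂ, 1 ≤ j → j + 1 ≤ n →
        ∀ y ∈ Ioo (r j) (r (j+1)), τ y = Pf q.1 q.2.1 q.2.2.1 q.2.2.2 y := by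
      intro j
      by_cases hj : 1 ≤ j ∧ j + 1 ≤ n
      · obtain ⟨a, b, c, d, hh⟩ := hτsp.pieces j hj.1 hj.2
        exact ⟨(a, b, c, d), fun _ _ y hy => hh y hy⟩
      · exact ⟨(0,0,0,0), fun h1 h2 => absurd ⟨h1, h2⟩ hj⟩
    choose qmid hqmid using hmidex
    set WA : ℕ → ℂ := fun j => if j = 0 then a0 else if j + 1 ≤ n then (qmid j).1 else 0 with hWA
    set WB : ℕ → ℂ := fun j => if j = 0 then 0 else if j + 1 ≤ n then (qmid j).2.1 else 0 with hWB
    set WC : ℕ → ℂ := fun j => if j = 0 then c0 else if j + 1 ≤ n then (qmid j).2.2.1 else cn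
      with hWC
    set WD : ℕ → ℂ := fun j => if j = 0 then 0 else if j + 1 ≤ n then (qmid j).2.2.2 else dn
      with hWD
    have hw0 : ∀ y ∈ Ioo (0:ℝ) (r 1), τ y = Pf (WA 0) (WB 0) (WC 0) (WD 0) y := by
      intro y hy
      simp only [hWA, hWB, hWC, hWD, if_pos rfl]
      exact hq0 y hy
    have hwmid : ∀ j, 1 ≤ j → j + 1 ≤ n → ∀ y ∈ Ioo (r j) (r (j+1)),
        τ y = Pf (WA j) (WB j) (WC j) (WD j) y := by
      intro j h1 hj y hy
      have hj0 : j ≠ 0 := by omega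
      simp only [hWA, hWB, hWC, hWD, if_neg hj0, if_pos hj]
      exact hqmid j h1 hj y hy
    have hwn : ∀ y ∈ Ioi (r n), τ y = Pf (WA n) (WB n) (WC n) (WD n) y := by
      intro y hy
      have hn0 : n ≠ 0 := by omega
      have hn1 : ¬ (n + 1 ≤ n) := by omega
      simp only [hWA, hWB, hWC, hWD, if_neg hn0, if_neg hn1]
      exact hqn y hy
    have hrpos' := rpos hpos hmono
    have jetsL : ∀ k, 1 ≤ k → k ≤ n →
        τ (r k) = Pf (WA (k-1)) (WB (k-1)) (WC (k-1)) (WD (k-1)) (r k) ∧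
        deriv τ (r k) = P1f (WA (k-1)) (WB (k-1)) (WC (k-1)) (WD (k-1)) (r k) ∧
        deriv (deriv τ) (r k) = P2f (WA (k-1)) (WB (k-1)) (WC (k-1)) (WD (k-1)) (r k) := by
      intro k h1 hk
      have hkpos : 0 < r k := hrpos' k h1 hk
      rcases eq_or_ne k 1 with hk1 | hk1
      · subst hk1
        exact jets hτsp.smooth isOpen_Ioo (fun y hy => hy.1) hkpos (neBot_right hpos) hw0
      · have hlt : r (k-1) < r k := by
          have := hmono (k-1) (by omega) (by omega)
          rwa [show k - 1 + 1 = k by omega] at this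
        have hsub : Ioo (r (k-1)) (r k) ⊆ Ioi (0:ℝ) := fun y hy =>
          lt_trans (hrpos' (k-1) (by omega) (by omega)) hy.1
        have hw := hwmid (k-1) (by omega) (by omega)
        rw [show k - 1 + 1 = k by omega] at hw
        exact jets hτsp.smooth isOpen_Ioo hsub hkpos (neBot_right hlt) hw
    have jetsR : ∀ k, 1 ≤ k → k ≤ n →
        τ (r k) = Pf (WA k) (WB k) (WC k) (WD k) (r k) ∧
        deriv τ (r k) = P1f (WA k) (WB k) (WC k) (WD k) (r k) ∧
        deriv (deriv τ) (r k) = P2f (WA k) (WB k) (WC k) (WD k) (r k) := by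
      intro k h1 hk
      have hkpos : 0 < r k := hrpos' k h1 hk
      rcases eq_or_ne k n with hkn | hkn
      · subst hkn
        exact jets hτsp.smooth isOpen_Ioi (fun y hy => lt_trans hkpos hy) hkpos
          (neBot_Ioi _) hwn
      · have hklt : k < n := by omega
        exact jets hτsp.smooth isOpen_Ioo (fun y hy => lt_trans hkpos hy.1) hkpos
          (neBot_left (hmono k h1 hklt)) (hwmid k h1 (by omega))
    have hm0w : ∀ j, j < n → Pf (WA j) (WB j) (WC j) (WD j) (r (j+1)) =
        Pf (WA (j+1)) (WB (j+1)) (WC (j+1)) (WD (j+1)) (r (j+1)) := by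
      intro j hj
      have hL := jetsL (j+1) (by omega) (by omega)
      have hR := jetsR (j+1) (by omega) (by omega)
      rw [show j + 1 - 1 = j by omega] at hL
      exact hL.1.symm.trans hR.1
    have hm1w : ∀ j, j < n → P1f (WA j) (WB j) (WC j) (WD j) (r (j+1)) =
        P1f (WA (j+1)) (WB (j+1)) (WC (j+1)) (WD (j+1)) (r (j+1)) := by
      intro j hj
      have hL := jetsL (j+1) (by omega) (by omega)
      have hR := jetsR (j+1) (by omega) (by omega)
      rw [show j + 1 - 1 = j by omega] at hL
      exact hL.2.1.symm.trans hR.2.1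
    have hm2w : ∀ j, j < n → P2f (WA j) (WB j) (WC j) (WD j) (r (j+1)) =
        P2f (WA (j+1)) (WB (j+1)) (WC (j+1)) (WD (j+1)) (r (j+1)) := by
      intro j hj
      have hL := jetsL (j+1) (by omega) (by omega)
      have hR := jetsR (j+1) (by omega) (by omega)
      rw [show j + 1 - 1 = j by omega] at hL
      exact hL.2.2.symm.trans hR.2.2
    have hvalw : ∀ k, 1 ≤ k → k ≤ n →
        Pf (WA k) (WB k) (WC k) (WD k) (r k) = ((ν k : ℝ) : ℂ) := fun k h1 hk =>
      (jetsR k h1 hk).1.symm.trans (hτval k h1 hk)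
    have hker := kernel_zero hn hpos hmono
      (fun j => WA j - acc n v j 0) (fun j => WB j - acc n v j 1)
      (fun j => WC j - acc n v j 2) (fun j => WD j - acc n v j 3)
      (by simp [hWB, hB0])
      (by simp [hWD, hD0])
      (by
        have h2 : ¬ (n + 1 ≤ n) := by omega
        have h3 : n ≠ 0 := by omega
        simp [hWA, h2, h3, hAn])
      (by
        have h2 : ¬ (n + 1 ≤ n) := by omega
        have h3 : n ≠ 0 := by omega
        simp [hWB, h2, h3, hBn])
      (fun j hj => by rw [Pf_sub, Pf_sub, hm0w j hj, hm0P j hj])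
      (fun j hj => by rw [P1f_sub, P1f_sub, hm1w j hj, hm1P j hj])
      (fun j hj => by rw [P2f_sub, P2f_sub, hm2w j hj, hm2P j hj])
      (fun j h1 hj => by rw [Pf_sub, hvalw j h1 hj, hvalsP j h1 hj, sub_self])
    have hco : ∀ j, j ≤ n → WA j = acc n v j 0 ∧ WB j = acc n v j 1 ∧
        WC j = acc n v j 2 ∧ WD j = acc n v j 3 := by
      intro j hj
      obtain ⟨e1, e2, e3, e4⟩ := hker j hj
      exact ⟨sub_eq_zero.mp e1, sub_eq_zero.mp e2, sub_eq_zero.mp e3, sub_eq_zero.mp e4⟩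
    have hWeqP : ∀ j, j ≤ n → ∀ y : ℝ, Pf (WA j) (WB j) (WC j) (WD j) y = Pv n v j y := by
      intro j hj y
      obtain ⟨e1, e2, e3, e4⟩ := hco j hj
      rw [e1, e2, e3, e4]
      rfl
    intro x hx
    rcases eq_or_lt_of_le (Set.mem_Ici.mp hx) with hx0 | hx0
    · -- x = 0
      have hx0' : x = 0 := hx0.symm
      subst hx0'
      haveI := neBot_left hpos
      have hτ0 : Tendsto τ (𝓝[Ioo (0:ℝ) (r 1)] 0) (𝓝 (τ 0)) :=
        hτsp.cont0.mono (fun y hy => le_of_lt hy.1)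
      have hσ0 : Tendsto σ (𝓝[Ioo (0:ℝ) (r 1)] 0) (𝓝 (σ 0)) :=
        hcont0.mono (fun y hy => le_of_lt hy.1)
      have hueq : ∀ y ∈ Ioo (0:ℝ) (r 1), τ y = σ y := by
        intro y hy
        rw [hw0 y hy, hWeqP 0 (by omega) y, hσdef, pwQ_eq_lo hn hpos hmono hy.2]
      have hτ0' : Tendsto σ (𝓝[Ioo (0:ℝ) (r 1)] 0) (𝓝 (τ 0)) :=
        hτ0.congr' (eventually_nhdsWithin_of_forall hueq)
      exact tendsto_nhds_unique hτ0' hσ0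
    · rcases cover hn hpos hmono hx0 with hc | ⟨k, h1, hk, he⟩ | ⟨j, h1, hj, hl, hr⟩ | hc
      · rw [hw0 x ⟨hx0, hc⟩, hWeqP 0 (by omega) x, hσdef, pwQ_eq_lo hn hpos hmono hc]
      · rw [he]
        exact (hτval k h1 hk).trans (hσvals k h1 hk).symm
      · rw [hwmid j h1 hj x ⟨hl, hr⟩, hWeqP j (by omega) x, hσdef,
          pwQ_eq_mid hn hpos hmono h1 hj hl hr]
      · rw [hwn x hc, hWeqP n le_rfl x, hσdef, pwQ_eq_hi hn hpos hmono hc]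


end BLaux

/-- existence and uniqueness of the non-singular Beppo Levi `L₀`-spline `σ^B`
interpolating `ν j` at the knots. -/
theorem stmt4 (n : ℕ) (r : ℕ → ℝ) (hn : 1 ≤ n) (hpos : 0 < r 1)
    (hmono : ∀ j, 1 ≤ j → j < n → r j < r (j + 1))
    (ν : ℕ → ℝ) :
    ∃ σ : ℝ → ℂ,
      (IsBLSpline n r σ ∧ NonSingularBLS (r 1) σ ∧
        (∀ j, 1 ≤ j → j ≤ n → σ (r j) = (ν j : ℂ))) ∧
      ∀ τ : ℝ → ℂ,
        (IsBLSpline n r τ ∧ NonSingularBLS (r 1) τ ∧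
          (∀ j, 1 ≤ j → j ≤ n → τ (r j) = (ν j : ℂ))) →
        Set.EqOn τ σ (Set.Ici 0) := by
  exact BLaux.main n r hn hpos hmono ν
end
end
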